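/- arXiv:1811.06951 — 6 statements merged into one kernel-verified Lean document; each statement's English description precedes it below -/
import Mathlib

section
/- For every φ in V([0,∞]) and all real numbers p₁ ≥ p₂ ≥ 0, one has |H¹_φ(p₁,p₂)| ≤ 10 · p₁ · p₂ · ‖φ‖_V. -/
open Filter Topology

noncomputable section

/-- The functional `H¹_φ(p₁,p₂)`. -/
def H1 (φ : ℝ → ℝ) (p₁ p₂ : ℝ) : ℝ :=
  (p₁ + p₂) ^ 3 * φ (p₁ + p₂) - 2 * (p₁ ^ 3 + p₁ * p₂ ^ 2) * φ p₁
    - 4 * p₁ * p₂ ^ 2 * φ p₂ + (p₁ - p₂) ^ 3 * φ (p₁ - p₂)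

/-- The functional `H²_φ(p₁,p₂)`. -/
def H2 (φ : ℝ → ℝ) (p₁ p₂ : ℝ) : ℝ :=
  (p₁ + p₂) ^ 2 * ((p₁ + p₂) * φ (p₁ + p₂) - p₁ * φ p₁ - p₂ * φ p₂)

/-- Membership in the space `V([0,∞])`: `φ` is continuous on `[0,∞)` with a finite limit
at `∞`, `φ'` is a derivative of `φ` off an exceptional locally finite set `S`
(piecewise continuity), `p² φ'(p)` is bounded, and `sup p₂ |φ(p₁+p₂) - φ(p₁)| < ∞`. -/
structure MemV (φ φ' : ℝ → ℝ) (S : Set ℝ) : Prop where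
  cont : ContinuousOn φ (Set.Ici 0)
  tendsto_atTop : ∃ L : ℝ, Tendsto φ atTop (𝓝 L)
  S_locFinite : ∀ a b : ℝ, (S ∩ Set.Icc a b).Finite
  hasDeriv : ∀ p ∈ Set.Ici (0 : ℝ) \ S, HasDerivWithinAt φ (φ' p) (Set.Ici 0) p
  deriv_cont : ContinuousOn φ' (Set.Ici 0 \ S)
  bdd1 : BddAbove ((fun p => |φ p|) '' Set.Ici 0)
  bdd2 : BddAbove ((fun p => p ^ 2 * |φ' p|) '' Set.Ici 0)
  bdd3 : BddAbove {x : ℝ | ∃ p₁ p₂ : ℝ, 0 ≤ p₂ ∧ p₂ ≤ p₁ ∧ x = p₂ * |φ (p₁ + p₂) - φ p₁|}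

/-- The norm `‖φ‖_V = ‖φ‖_∞ + ‖p²φ'‖_∞ + sup_{p₁ ≥ p₂ ≥ 0} p₂ |φ(p₁+p₂)-φ(p₁)|`. -/
def normV (φ φ' : ℝ → ℝ) : ℝ :=
  sSup ((fun p => |φ p|) '' Set.Ici 0)
    + sSup ((fun p => p ^ 2 * |φ' p|) '' Set.Ici 0)
    + sSup {x : ℝ | ∃ p₁ p₂ : ℝ, 0 ≤ p₂ ∧ p₂ ≤ p₁ ∧ x = p₂ * |φ (p₁ + p₂) - φ p₁|}

section Aux

open MeasureTheory intervalIntegral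

variable {φ φ' : ℝ → ℝ} {S : Set ℝ}

lemma M1_nonneg (hφ : MemV φ φ' S) : 0 ≤ sSup ((fun p => p ^ 2 * |φ' p|) '' Set.Ici 0) := by
  have := le_csSup hφ.bdd2 ⟨0, Set.self_mem_Ici, rfl⟩
  simpa using this

lemma keyBase (hφ : MemV φ φ' S) {c d : ℝ} (hc : 0 < c) (hcd : c ≤ d)
    (hemp : S ∩ Set.Ioo c d = ∅) :
    |φ d - φ c| ≤ sSup ((fun p => p ^ 2 * |φ' p|) '' Set.Ici 0) * (1 / c - 1 / d) := by
  set M := sSup ((fun p => p ^ 2 * |φ' p|) '' Set.Ici 0) with hMdef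
  have hM0 : 0 ≤ M := M1_nonneg hφ
  have hM : ∀ x : ℝ, 0 < x → |φ' x| ≤ M * x ^ (-2 : ℤ) := by
    intro x hx
    have h1 : x ^ 2 * |φ' x| ≤ M := le_csSup hφ.bdd2 ⟨x, hx.le, rfl⟩
    have hx2 : (0:ℝ) < x ^ 2 := by positivity
    rw [show M * x ^ (-2 : ℤ) = M / x ^ 2 by
      rw [zpow_neg, div_eq_mul_inv]; norm_cast]
    rw [le_div_iff₀ hx2]
    linarith [h1]
  have hfin : (S ∩ Set.Icc c d).Finite := hφ.S_locFinite c d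
  have hIcc_sub : Set.Icc c d ⊆ Set.Ici 0 := fun x hx => le_trans hc.le hx.1
  have hcont : ContinuousOn φ (Set.Icc c d) := hφ.cont.mono hIcc_sub
  have hAe : (Set.Icc c d : Set ℝ) =ᵐ[volume] (Set.Icc c d \ S : Set ℝ) := by
    rw [MeasureTheory.ae_eq_set]
    constructor
    · apply MeasureTheory.measure_mono_null (t := S ∩ Set.Icc c d) ?_ (hfin.measure_zero volume)
      intro x hx
      have := hx.2
      simp only [Set.mem_diff, not_and, not_not] at this
      exact ⟨this hx.1, hx.1⟩
    · apply MeasureTheory.measure_mono_null (t := (∅ : Set ℝ)) ?_ (by simp)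
      intro x hx
      exact absurd hx.1.1 hx.2
  have hmeasA : MeasurableSet (Set.Icc c d \ S) := by
    have heq : Set.Icc c d \ S = Set.Icc c d \ (S ∩ Set.Icc c d) := by
      ext x; simp only [Set.mem_diff, Set.mem_inter_iff]; tauto
    rw [heq]; exact measurableSet_Icc.diff hfin.measurableSet
  have haesm : AEStronglyMeasurable φ' (volume.restrict (Set.Icc c d)) := by
    rw [Measure.restrict_congr_set hAe]
    exact (hφ.deriv_cont.mono (fun x hx => ⟨hIcc_sub hx.1, hx.2⟩)).aestronglyMeasurable hmeasA
  have hint : IntervalIntegrable φ' volume c d := by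
    rw [intervalIntegrable_iff_integrableOn_Icc_of_le hcd]
    refine ⟨haesm, HasFiniteIntegral.of_bounded (C := M / c ^ 2) ?_⟩
    rw [ae_restrict_iff' measurableSet_Icc]
    filter_upwards with x hx
    have hx0 : 0 < x := lt_of_lt_of_le hc hx.1
    have := hM x hx0
    have h2 : M * x ^ (-2 : ℤ) ≤ M / c ^ 2 := by
      rw [show M * x ^ (-2 : ℤ) = M / x ^ 2 by rw [zpow_neg, div_eq_mul_inv]; norm_cast]
      apply div_le_div_of_nonneg_left hM0 (by positivity)
      exact pow_le_pow_left₀ hc.le hx.1 2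
    calc ‖φ' x‖ = |φ' x| := rfl
      _ ≤ M * x ^ (-2:ℤ) := this
      _ ≤ M / c ^ 2 := h2
  have hderiv : ∀ x ∈ Set.Ioo c d, HasDerivWithinAt φ (φ' x) (Set.Ioi x) x := by
    intro x hx
    have hx0 : 0 < x := lt_trans hc hx.1
    have hxS : x ∉ S := by
      intro h; exact absurd (Set.mem_inter h hx) (by rw [hemp]; exact Set.notMem_empty x)
    exact (hφ.hasDeriv x ⟨hx0.le, hxS⟩).mono (fun y hy => le_of_lt (lt_trans hx0 hy))
  have hFTC := integral_eq_sub_of_hasDeriv_right_of_le hcd hcont hderiv hint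
  rw [← hFTC]
  have h1 : |∫ y in c..d, φ' y| ≤ ∫ y in c..d, |φ' y| := abs_integral_le_integral_abs hcd
  have h0uIcc : (0:ℝ) ∉ Set.uIcc c d := by
    rw [Set.uIcc_of_le hcd]
    intro h; exact absurd h.1 (not_le.mpr hc)
  have hg : IntervalIntegrable (fun x : ℝ => M * x ^ (-2 : ℤ)) volume c d := by
    apply ContinuousOn.intervalIntegrable
    apply ContinuousOn.mul continuousOn_const
    intro x hx
    exact (continuousAt_zpow₀ x (-2) (Or.inl (fun h => h0uIcc (h ▸ hx)))).continuousWithinAt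
  have h2 : ∫ y in c..d, |φ' y| ≤ ∫ y in c..d, M * y ^ (-2:ℤ) := by
    apply integral_mono_on hcd hint.abs hg
    intro x hx
    exact hM x (lt_of_lt_of_le hc hx.1)
  have h3 : ∫ y in c..d, M * y ^ (-2:ℤ) = M * (1 / c - 1 / d) := by
    rw [intervalIntegral.integral_const_mul, integral_zpow (Or.inr ⟨by norm_num, h0uIcc⟩)]
    have hcne : c ≠ 0 := ne_of_gt hc
    have hdne : d ≠ 0 := ne_of_gt (lt_of_lt_of_le hc hcd)
    rw [show (-2 : ℤ) + 1 = -1 by norm_num]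
    push_cast
    rw [zpow_neg_one, zpow_neg_one]
    field_simp
    ring
  linarith

lemma key (hφ : MemV φ φ' S) {c d : ℝ} (hc : 0 < c) (hcd : c ≤ d) :
    |φ d - φ c| ≤ sSup ((fun p => p ^ 2 * |φ' p|) '' Set.Ici 0) * (1 / c - 1 / d) := by
  set M := sSup ((fun p => p ^ 2 * |φ' p|) '' Set.Ici 0) with hMdef
  have main : ∀ n : ℕ, ∀ c d : ℝ, 0 < c → c ≤ d → (S ∩ Set.Ioo c d).ncard ≤ n →
      |φ d - φ c| ≤ M * (1 / c - 1 / d) := by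
    intro n
    induction n with
    | zero =>
      intro c d hc hcd hcard
      have hfin : (S ∩ Set.Ioo c d).Finite :=
        (hφ.S_locFinite c d).subset (Set.inter_subset_inter_right _ Set.Ioo_subset_Icc_self)
      have hemp : S ∩ Set.Ioo c d = ∅ := (Set.ncard_eq_zero hfin).1 (Nat.le_zero.1 hcard)
      exact keyBase hφ hc hcd hemp
    | succ n ih =>
      intro c d hc hcd hcard
      have hfin : (S ∩ Set.Ioo c d).Finite :=
        (hφ.S_locFinite c d).subset (Set.inter_subset_inter_right _ Set.Ioo_subset_Icc_self)
      by_cases hle : (S ∩ Set.Ioo c d).ncard ≤ n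
      · exact ih c d hc hcd hle
      · have hne : (S ∩ Set.Ioo c d).Nonempty := by
          rw [Set.nonempty_iff_ne_empty]
          intro h
          rw [h] at hle; simp at hle
        obtain ⟨s, hsS, hs⟩ := hne
        have hs1 : c < s := hs.1
        have hs2 : s < d := hs.2
        have hcard1 : (S ∩ Set.Ioo c s).ncard ≤ n := by
          have hsub : S ∩ Set.Ioo c s ⊆ (S ∩ Set.Ioo c d) \ {s} := by
            intro x hx
            refine ⟨⟨hx.1, hx.2.1, lt_trans hx.2.2 hs2⟩, ?_⟩
            intro h; rw [Set.mem_singleton_iff] at h; rw [h] at hx; exact lt_irrefl s hx.2.2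
          calc (S ∩ Set.Ioo c s).ncard ≤ ((S ∩ Set.Ioo c d) \ {s}).ncard :=
                Set.ncard_le_ncard hsub (hfin.subset Set.diff_subset)
            _ = (S ∩ Set.Ioo c d).ncard - 1 := Set.ncard_diff_singleton_of_mem ⟨hsS, hs⟩
            _ ≤ n := by omega
        have hcard2 : (S ∩ Set.Ioo s d).ncard ≤ n := by
          have hsub : S ∩ Set.Ioo s d ⊆ (S ∩ Set.Ioo c d) \ {s} := by
            intro x hx
            refine ⟨⟨hx.1, lt_trans hs1 hx.2.1, hx.2.2⟩, ?_⟩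
            intro h; rw [Set.mem_singleton_iff] at h; rw [h] at hx; exact lt_irrefl s hx.2.1
          calc (S ∩ Set.Ioo s d).ncard ≤ ((S ∩ Set.Ioo c d) \ {s}).ncard :=
                Set.ncard_le_ncard hsub (hfin.subset Set.diff_subset)
            _ = (S ∩ Set.Ioo c d).ncard - 1 := Set.ncard_diff_singleton_of_mem ⟨hsS, hs⟩
            _ ≤ n := by omega
        have h1 := ih c s hc hs1.le hcard1
        have h2 := ih s d (lt_trans hc hs1) hs2.le hcard2
        calc |φ d - φ c| ≤ |φ d - φ s| + |φ s - φ c| := abs_sub_le _ _ _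
          _ ≤ M * (1 / s - 1 / d) + M * (1 / c - 1 / s) := add_le_add h2 h1
          _ = M * (1 / c - 1 / d) := by ring
  exact main (S ∩ Set.Ioo c d).ncard c d hc hcd le_rfl

lemma key2 (hφ : MemV φ φ' S) {c d : ℝ} (hc : 0 < c) (hcd : c ≤ d) :
    c * d * |φ d - φ c| ≤ sSup ((fun p => p ^ 2 * |φ' p|) '' Set.Ici 0) * (d - c) := by
  set M := sSup ((fun p => p ^ 2 * |φ' p|) '' Set.Ici 0) with hMdef
  have hd : 0 < d := lt_of_lt_of_le hc hcd
  have h := key hφ hc hcd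
  have h2 : c * d * |φ d - φ c| ≤ c * d * (M * (1 / c - 1 / d)) :=
    mul_le_mul_of_nonneg_left h (by positivity)
  have h3 : c * d * (M * (1 / c - 1 / d)) = M * (d - c) := by
    field_simp
  linarith

end Aux

/-- For every `φ ∈ V([0,∞])` and all `p₁ ≥ p₂ ≥ 0`,
`|H¹_φ(p₁,p₂)| ≤ 10 p₁ p₂ ‖φ‖_V`. -/
theorem statement0 (φ φ' : ℝ → ℝ) (S : Set ℝ) (hφ : MemV φ φ' S)
    (p₁ p₂ : ℝ) (hp₂ : 0 ≤ p₂) (hp : p₂ ≤ p₁) :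
    |H1 φ p₁ p₂| ≤ 10 * p₁ * p₂ * normV φ φ' := by
  set M0 := sSup ((fun p => |φ p|) '' Set.Ici 0) with hM0def
  set M1 := sSup ((fun p => p ^ 2 * |φ' p|) '' Set.Ici 0) with hM1def
  set M2 := sSup {x : ℝ | ∃ p₁ p₂ : ℝ, 0 ≤ p₂ ∧ p₂ ≤ p₁ ∧ x = p₂ * |φ (p₁ + p₂) - φ p₁|}
    with hM2def
  have hM0 : 0 ≤ M0 := le_trans (abs_nonneg (φ 0)) (le_csSup hφ.bdd1 ⟨0, Set.self_mem_Ici, rfl⟩)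
  have hM1 : 0 ≤ M1 := M1_nonneg hφ
  have hM2 : 0 ≤ M2 := by
    have := le_csSup hφ.bdd3 ⟨0, 0, le_rfl, le_rfl, rfl⟩
    simpa using this
  have hnorm : normV φ φ' = M0 + M1 + M2 := rfl
  rcases hp₂.eq_or_lt with hb0 | hb0
  · have hH : H1 φ p₁ p₂ = 0 := by
      rw [← hb0]; unfold H1; ring_nf
    rw [hH, ← hb0]
    simp
  · -- p₂ > 0, hence p₁ > 0
    have ha : 0 < p₁ := lt_of_lt_of_le hb0 hp
    have hid : H1 φ p₁ p₂ = (p₁ + p₂) ^ 3 * (φ (p₁ + p₂) - φ p₁)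
        + (p₁ - p₂) ^ 3 * (φ (p₁ - p₂) - φ p₁) + 4 * p₁ * p₂ ^ 2 * (φ p₁ - φ p₂) := by
      unfold H1; ring
    -- Term 1
    have hT1 : (p₁ + p₂) ^ 3 * |φ (p₁ + p₂) - φ p₁| ≤ 4 * p₁ * p₂ * M1 := by
      have E1 := key2 hφ ha (le_add_of_nonneg_right hp₂) -- p₁*(p₁+p₂)*|..| ≤ M1*p₂
      have habs : (0:ℝ) ≤ |φ (p₁ + p₂) - φ p₁| := abs_nonneg _
      have hmul : p₁ * ((p₁ + p₂) ^ 3 * |φ (p₁ + p₂) - φ p₁|) ≤ p₁ * (4 * p₁ * p₂ * M1) := by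
        nlinarith [mul_le_mul_of_nonneg_left E1 (sq_nonneg (p₁ + p₂)),
          mul_le_mul_of_nonneg_right (show (p₁ + p₂)^2 ≤ 4 * p₁^2 by nlinarith)
            (mul_nonneg hM1 hp₂)]
      exact le_of_mul_le_mul_left hmul ha
    -- Term 2
    have hT2 : (p₁ - p₂) ^ 3 * |φ (p₁ - p₂) - φ p₁| ≤ p₁ * p₂ * M1 := by
      rcases hp.eq_or_lt with heq | hlt
      · rw [← heq]
        simp
        positivity
      · have hab : 0 < p₁ - p₂ := sub_pos.2 hlt
        have E2 := key2 hφ hab (by linarith : p₁ - p₂ ≤ p₁)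
        rw [abs_sub_comm (φ p₁) (φ (p₁ - p₂))] at E2
        -- (p₁-p₂)*p₁*|..| ≤ M1*(p₁-(p₁-p₂)) = M1*p₂
        have hmul : p₁ * ((p₁ - p₂) ^ 3 * |φ (p₁ - p₂) - φ p₁|) ≤ p₁ * (p₁ * p₂ * M1) := by
          nlinarith [mul_le_mul_of_nonneg_left E2 (sq_nonneg (p₁ - p₂)),
            mul_le_mul_of_nonneg_right (show (p₁ - p₂)^2 ≤ p₁^2 by nlinarith)
              (mul_nonneg hM1 hp₂),
            abs_nonneg (φ (p₁ - p₂) - φ p₁)]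
        exact le_of_mul_le_mul_left hmul ha
    -- Term 3
    have hT3 : 4 * p₁ * p₂ ^ 2 * |φ p₁ - φ p₂| ≤ 4 * p₁ * p₂ * M1 := by
      have E3 := key2 hφ hb0 hp -- p₂*p₁*|φ p₁ - φ p₂| ≤ M1*(p₁-p₂)
      have h4 : 4 * p₁ * p₂ ^ 2 * |φ p₁ - φ p₂| = 4 * p₂ * (p₂ * p₁ * |φ p₁ - φ p₂|) := by ring
      rw [h4]
      calc 4 * p₂ * (p₂ * p₁ * |φ p₁ - φ p₂|) ≤ 4 * p₂ * (M1 * (p₁ - p₂)) :=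
            mul_le_mul_of_nonneg_left E3 (by positivity)
        _ ≤ 4 * p₁ * p₂ * M1 := by nlinarith [mul_nonneg hM1 hp₂]
    -- combine
    have habs : |H1 φ p₁ p₂| ≤ (p₁ + p₂) ^ 3 * |φ (p₁ + p₂) - φ p₁|
        + (p₁ - p₂) ^ 3 * |φ (p₁ - p₂) - φ p₁| + 4 * p₁ * p₂ ^ 2 * |φ p₁ - φ p₂| := by
      rw [hid]
      have h1 : |((p₁ + p₂) ^ 3 : ℝ)| = (p₁ + p₂) ^ 3 := abs_of_nonneg (by positivity)
      have h2 : |((p₁ - p₂) ^ 3 : ℝ)| = (p₁ - p₂) ^ 3 :=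
        abs_of_nonneg (pow_nonneg (sub_nonneg.2 hp) 3)
      have h3 : |(4 * p₁ * p₂ ^ 2 : ℝ)| = 4 * p₁ * p₂ ^ 2 := abs_of_nonneg (by positivity)
      calc |(p₁ + p₂) ^ 3 * (φ (p₁ + p₂) - φ p₁) + (p₁ - p₂) ^ 3 * (φ (p₁ - p₂) - φ p₁)
            + 4 * p₁ * p₂ ^ 2 * (φ p₁ - φ p₂)|
          ≤ |(p₁ + p₂) ^ 3 * (φ (p₁ + p₂) - φ p₁) + (p₁ - p₂) ^ 3 * (φ (p₁ - p₂) - φ p₁)|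
            + |4 * p₁ * p₂ ^ 2 * (φ p₁ - φ p₂)| := abs_add_le _ _
        _ ≤ |(p₁ + p₂) ^ 3 * (φ (p₁ + p₂) - φ p₁)| + |(p₁ - p₂) ^ 3 * (φ (p₁ - p₂) - φ p₁)|
            + |4 * p₁ * p₂ ^ 2 * (φ p₁ - φ p₂)| := add_le_add_left (abs_add_le _ _) _
        _ = (p₁ + p₂) ^ 3 * |φ (p₁ + p₂) - φ p₁| + (p₁ - p₂) ^ 3 * |φ (p₁ - p₂) - φ p₁|
            + 4 * p₁ * p₂ ^ 2 * |φ p₁ - φ p₂| := by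
              rw [abs_mul, abs_mul, abs_mul, h1, h2, h3]
    rw [hnorm]
    have hab : 0 ≤ p₁ * p₂ := by positivity
    nlinarith [mul_nonneg hab hM0, mul_nonneg hab hM1, mul_nonneg hab hM2]
end
end

section
/- The space V([0,∞]) is dense, with respect to the supremum norm, in the space C([0,∞]) of continuous functions on [0,∞) admitting a finite limit at ∞; moreover, every function in C_c([0,∞)) (continuous with compact support in [0,∞)) can be approximated in the supremum norm by elements of W([0,∞)). -/
open Filter Topology

noncomputable section

/-- Membership in `W([0,∞))`: the span of `{p ↦ p·φ(p) : φ ∈ V([0,∞])}` together with the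
constant function `1`; since `V` is a vector space, every element of `W` has the form
`p ↦ c + p·φ(p)` with `φ ∈ V`. -/
def MemW (ψ : ℝ → ℝ) : Prop :=
  ∃ (c : ℝ) (φ φ' : ℝ → ℝ) (S : Set ℝ), MemV φ φ' S ∧ ∀ p : ℝ, 0 ≤ p → ψ p = c + p * φ p

section Aux

open Polynomial

def phi0 (p : ℝ) : ℝ := -min p p⁻¹

def phi0' (p : ℝ) : ℝ := if p ≤ 1 then -1 else (p ^ 2)⁻¹

lemma phi0_eq_of_le {p : ℝ} (h0 : 0 ≤ p) (h : p ≤ 1) : phi0 p = -p := by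
  rcases eq_or_lt_of_le h0 with h0 | h0
  · simp [phi0, ← h0]
  · have : p ≤ p⁻¹ := le_trans h (one_le_inv_iff₀.mpr ⟨h0, h⟩)
    simp [phi0, min_eq_left this]

lemma phi0_eq_of_gt {p : ℝ} (h : 1 < p) : phi0 p = -p⁻¹ := by
  have hp : 0 < p := lt_trans one_pos h
  have : p⁻¹ ≤ p := le_trans (inv_le_one_of_one_le₀ h.le) h.le
  simp [phi0, min_eq_right this]

lemma abs_phi0_le {p : ℝ} (h : 0 ≤ p) : |phi0 p| ≤ 1 := by
  rcases le_or_gt p 1 with h1 | h1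
  · rw [phi0_eq_of_le h h1, abs_neg, abs_of_nonneg h]; exact h1
  · rw [phi0_eq_of_gt h1, abs_neg, abs_of_nonneg (by positivity)]
    exact inv_le_one_of_one_le₀ h1.le

lemma lin_le_exp {p : ℝ} (h : 0 ≤ p) : p * Real.exp (-p) ≤ 1 := by
  rw [Real.exp_neg, mul_inv_le_iff₀ (Real.exp_pos p), one_mul]
  exact le_trans (by linarith) (Real.add_one_le_exp p)

lemma sq_le_exp {p : ℝ} (h : 0 ≤ p) : p ^ 2 * Real.exp (-p) ≤ 4 := by
  rw [Real.exp_neg, mul_inv_le_iff₀ (Real.exp_pos p)]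
  have h2 : p / 2 ≤ Real.exp (p / 2) := le_trans (by linarith) (Real.add_one_le_exp (p / 2))
  have := mul_le_mul h2 h2 (by positivity) (Real.exp_pos _).le
  rw [← Real.exp_add] at this
  have hpp : p / 2 + p / 2 = p := by ring
  rw [hpp] at this
  nlinarith

def Bnd (q : ℝ[X]) : ℝ := ∑ i ∈ Finset.range (q.natDegree + 1), |q.coeff i|

lemma Bnd_nonneg (q : ℝ[X]) : 0 ≤ Bnd q :=
  Finset.sum_nonneg fun _ _ => abs_nonneg _

lemma poly_bound (q : ℝ[X]) {x : ℝ} (hx : |x| ≤ 1) : |q.eval x| ≤ Bnd q := by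
  rw [Polynomial.eval_eq_sum_range]
  refine le_trans (Finset.abs_sum_le_sum_abs _ _) (Finset.sum_le_sum fun i _ => ?_)
  rw [abs_mul]
  calc |q.coeff i| * |x ^ i| ≤ |q.coeff i| * 1 := by
        refine mul_le_mul_of_nonneg_left ?_ (abs_nonneg _)
        rw [abs_pow]; exact pow_le_one₀ (abs_nonneg x) hx
    _ = |q.coeff i| := mul_one _

lemma poly_lip (q : ℝ[X]) {u v : ℝ} (hu : u ∈ Set.Icc (0:ℝ) 1) (hv : v ∈ Set.Icc (0:ℝ) 1) :
    |q.eval u - q.eval v| ≤ Bnd q.derivative * |u - v| := by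
  have := Convex.norm_image_sub_le_of_norm_hasDerivWithin_le
    (f := fun x => q.eval x) (f' := fun x => q.derivative.eval x) (s := Set.Icc (0:ℝ) 1)
    (C := Bnd q.derivative)
    (fun x _ => (q.hasDerivAt x).hasDerivWithinAt)
    (fun x hx => by
      rw [Real.norm_eq_abs]
      exact poly_bound _ (abs_le.mpr ⟨by linarith [hx.1], hx.2⟩))
    (convex_Icc 0 1) hv hu
  simpa [Real.norm_eq_abs] using this


lemma contOn_phi0 : ContinuousOn phi0 (Set.Ici 0) := by
  intro p hp
  rcases eq_or_lt_of_le (Set.mem_Ici.mp hp) with h0 | h0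
  · subst h0
    have hmem : Set.Iio (1:ℝ) ∈ 𝓝[Set.Ici (0:ℝ)] 0 :=
      nhdsWithin_le_nhds (Iio_mem_nhds one_pos)
    refine ContinuousWithinAt.congr_of_eventuallyEq
      (f := fun x => -x) (continuous_neg.continuousWithinAt) ?_ (by simp [phi0])
    filter_upwards [hmem, self_mem_nhdsWithin] with x hx1 hx0
    exact phi0_eq_of_le hx0 hx1.le
  · have hc : ContinuousAt phi0 p := ((continuousAt_id).min (continuousAt_inv₀ h0.ne')).neg
    exact hc.continuousWithinAt

lemma hasDeriv_phi0 {p : ℝ} (hp : p ∈ Set.Ici (0:ℝ) \ {1}) :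
    HasDerivWithinAt phi0 (phi0' p) (Set.Ici 0) p := by
  obtain ⟨hp0, hp1⟩ := hp
  rcases lt_or_gt_of_ne (hp1 : p ≠ 1) with h | h
  · rw [phi0', if_pos h.le]
    have hd : HasDerivWithinAt (fun x : ℝ => -x) (-1) (Set.Ici 0) p := by
      exact (hasDerivAt_neg p).hasDerivWithinAt
    refine hd.congr_of_eventuallyEq ?_ (phi0_eq_of_le hp0 h.le)
    have hmem : Set.Iio (1:ℝ) ∈ 𝓝[Set.Ici (0:ℝ)] p :=
      nhdsWithin_le_nhds (Iio_mem_nhds h)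
    filter_upwards [hmem, self_mem_nhdsWithin] with x hx1 hx0
    exact phi0_eq_of_le hx0 hx1.le
  · rw [phi0', if_neg (not_le.mpr h)]
    have hne : p ≠ 0 := by positivity
    have hd : HasDerivWithinAt (fun x : ℝ => -x⁻¹) ((p ^ 2)⁻¹) (Set.Ici 0) p := by
      have h := ((hasDerivAt_inv hne).neg).hasDerivWithinAt (s := Set.Ici 0); rw [neg_neg] at h; exact h
    refine hd.congr_of_eventuallyEq ?_ (phi0_eq_of_gt h)
    have hmem : Set.Ioi (1:ℝ) ∈ 𝓝[Set.Ici (0:ℝ)] p :=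
      nhdsWithin_le_nhds (Ioi_mem_nhds h)
    filter_upwards [hmem] with x hx1
    exact phi0_eq_of_gt hx1

lemma contOn_phi0' : ContinuousOn phi0' (Set.Ici 0 \ {1}) := by
  intro p hp
  obtain ⟨hp0, hp1⟩ := hp
  rcases lt_or_gt_of_ne (hp1 : p ≠ 1) with h | h
  · refine ContinuousWithinAt.congr_of_eventuallyEq
      (f := fun _ => (-1 : ℝ)) continuousWithinAt_const ?_ (by simp [phi0', h.le])
    have hmem : Set.Iio (1:ℝ) ∈ 𝓝[Set.Ici (0:ℝ) \ {1}] p :=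
      nhdsWithin_le_nhds (Iio_mem_nhds h)
    filter_upwards [hmem] with x hx1
    simp [phi0', (Set.mem_Iio.mp hx1).le]
  · have hne : p ≠ 0 := by positivity
    refine ContinuousWithinAt.congr_of_eventuallyEq
      (f := fun x : ℝ => (x ^ 2)⁻¹)
      (((continuousAt_id.pow 2).inv₀ (pow_ne_zero 2 hne)).continuousWithinAt) ?_
      (by simp [phi0', not_le.mpr h])
    have hmem : Set.Ioi (1:ℝ) ∈ 𝓝[Set.Ici (0:ℝ) \ {1}] p :=
      nhdsWithin_le_nhds (Ioi_mem_nhds h)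
    filter_upwards [hmem] with x hx1
    simp [phi0', not_le.mpr (Set.mem_Ioi.mp hx1)]

lemma sq_phi0'_le {p : ℝ} (hp : 0 ≤ p) : p ^ 2 * |phi0' p| ≤ 1 := by
  rcases le_or_gt p 1 with h | h
  · rw [phi0', if_pos h, abs_neg, abs_one, mul_one]
    exact pow_le_one₀ hp h
  · rw [phi0', if_neg (not_le.mpr h)]
    have h2 : (0:ℝ) < p ^ 2 := by positivity
    rw [abs_of_pos (inv_pos.mpr h2), mul_inv_cancel₀ h2.ne']

def Phi (a : ℝ) (q : ℝ[X]) (p : ℝ) : ℝ := a * phi0 p + q.eval (Real.exp (-p))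

def Phi' (a : ℝ) (q : ℝ[X]) (p : ℝ) : ℝ :=
  a * phi0' p + q.derivative.eval (Real.exp (-p)) * (-Real.exp (-p))

lemma exp_neg_mem_Icc {p : ℝ} (hp : 0 ≤ p) : Real.exp (-p) ∈ Set.Icc (0:ℝ) 1 :=
  ⟨(Real.exp_pos _).le, by
    rw [← Real.exp_zero]
    exact Real.exp_le_exp.mpr (by linarith)⟩

lemma memV_Phi (a : ℝ) (q : ℝ[X]) : MemV (Phi a q) (Phi' a q) {1} := by
  constructor
  · exact (continuousOn_const.mul contOn_phi0).add
      ((q.continuous_aeval.comp (Real.continuous_exp.comp continuous_neg)).continuousOn)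
  · refine ⟨a * 0 + q.eval 0, Tendsto.add ?_ ?_⟩
    · refine Tendsto.const_mul a ?_
      have h1 : Tendsto (fun p : ℝ => -p⁻¹) atTop (𝓝 (-(0:ℝ))) := tendsto_inv_atTop_zero.neg
      rw [neg_zero] at h1
      refine h1.congr' ?_
      filter_upwards [eventually_gt_atTop 1] with p hp
      exact (phi0_eq_of_gt hp).symm
    · have h0 : Tendsto (fun p : ℝ => Real.exp (-p)) atTop (𝓝 0) :=
        Real.tendsto_exp_atBot.comp tendsto_neg_atTop_atBot
      exact (q.continuous_aeval.tendsto 0).comp h0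
  · exact fun a b => Set.Finite.subset (Set.finite_singleton 1) Set.inter_subset_left
  · intro p hp
    refine HasDerivWithinAt.add ((hasDeriv_phi0 hp).const_mul a) ?_
    have he : HasDerivAt (fun x : ℝ => Real.exp (-x)) (Real.exp (-p) * -1) p :=
      (Real.hasDerivAt_exp (-p)).comp p ((hasDerivAt_id p).neg)
    have := (q.hasDerivAt (Real.exp (-p))).comp p he
    have h2 : Polynomial.eval (Real.exp (-p)) q.derivative * (Real.exp (-p) * -1)
        = q.derivative.eval (Real.exp (-p)) * (-Real.exp (-p)) := by ring
    rw [h2] at this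
    exact this.hasDerivWithinAt
  · refine ContinuousOn.add (continuousOn_const.mul contOn_phi0') ?_
    exact ((q.derivative.continuous_aeval.comp
      (Real.continuous_exp.comp continuous_neg)).mul
      (Real.continuous_exp.comp continuous_neg).neg).continuousOn
  · refine ⟨|a| + Bnd q, ?_⟩
    rintro x ⟨p, hp, rfl⟩
    have hx := exp_neg_mem_Icc (hp : (0:ℝ) ≤ p)
    calc |Phi a q p| ≤ |a * phi0 p| + |q.eval (Real.exp (-p))| := abs_add_le _ _
      _ ≤ |a| * 1 + Bnd q := by
          rw [abs_mul]
          gcongr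
          · exact abs_phi0_le hp
          · exact poly_bound q (abs_le.mpr ⟨by linarith [hx.1], hx.2⟩)
      _ = |a| + Bnd q := by ring
  · refine ⟨|a| + Bnd q.derivative * 4, ?_⟩
    rintro x ⟨p, hp, rfl⟩
    have hp0 : (0:ℝ) ≤ p := hp
    have hx := exp_neg_mem_Icc hp0
    have hb : |q.derivative.eval (Real.exp (-p))| ≤ Bnd q.derivative :=
      poly_bound _ (abs_le.mpr ⟨by linarith [hx.1], hx.2⟩)
    calc p ^ 2 * |Phi' a q p|
        ≤ p ^ 2 * (|a| * |phi0' p| + |q.derivative.eval (Real.exp (-p))| * Real.exp (-p)) := by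
          gcongr
          refine le_trans (abs_add_le _ _) ?_
          rw [abs_mul, abs_mul, abs_neg, abs_of_pos (Real.exp_pos _)]
      _ = |a| * (p ^ 2 * |phi0' p|)
            + |q.derivative.eval (Real.exp (-p))| * (p ^ 2 * Real.exp (-p)) := by ring
      _ ≤ |a| * 1 + Bnd q.derivative * 4 := by
          gcongr
          · exact sq_phi0'_le hp0
          · exact (abs_nonneg _).trans hb
          · exact sq_le_exp hp0
      _ = |a| + Bnd q.derivative * 4 := by ring
  · refine ⟨|a| * 2 + Bnd q.derivative * 4, ?_⟩
    rintro x ⟨p₁, p₂, h2, h21, rfl⟩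
    have h1 : (0:ℝ) ≤ p₁ := le_trans h2 h21
    have key1 : p₂ * |phi0 (p₁ + p₂) - phi0 p₁| ≤ 2 := by
      rcases le_or_gt p₁ 1 with h | h
      · have hp2 : p₂ ≤ 1 := le_trans h21 h
        calc p₂ * |phi0 (p₁ + p₂) - phi0 p₁|
            ≤ 1 * (|phi0 (p₁ + p₂)| + |phi0 p₁|) := by
              refine mul_le_mul hp2 (abs_sub _ _) (abs_nonneg _) zero_le_one
          _ ≤ 1 * (1 + 1) := by
              gcongr
              · exact abs_phi0_le (by linarith)
              · exact abs_phi0_le h1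
          _ = 2 := by ring
      · have h12 : 1 < p₁ + p₂ := by linarith
        rw [phi0_eq_of_gt h12, phi0_eq_of_gt h]
        have hp1 : (0:ℝ) < p₁ := by linarith
        have hp12 : (0:ℝ) < p₁ + p₂ := by linarith
        have heq : -(p₁ + p₂)⁻¹ - -p₁⁻¹ = p₂ / (p₁ * (p₁ + p₂)) := by
          field_simp
          ring
        rw [heq, abs_of_nonneg (by positivity)]
        rw [mul_div_assoc'] -- p₂ * p₂ / (p₁ * (p₁+p₂))
        rw [div_le_iff₀ (by positivity)]
        nlinarith
    have key2 : p₂ * |q.eval (Real.exp (-(p₁ + p₂))) - q.eval (Real.exp (-p₁))|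
        ≤ Bnd q.derivative * 4 := by
      have hd : |Real.exp (-(p₁ + p₂)) - Real.exp (-p₁)| ≤ Real.exp (-p₁) * p₂ := by
        rw [abs_sub_comm, abs_of_nonneg (by
          have := Real.exp_le_exp.mpr (show -(p₁+p₂) ≤ -p₁ by linarith)
          linarith)]
        have h3 : Real.exp (-(p₁ + p₂)) = Real.exp (-p₁) * Real.exp (-p₂) := by
          rw [← Real.exp_add]; ring_nf
        rw [h3]
        have h4 : 1 - Real.exp (-p₂) ≤ p₂ := by
          have := Real.add_one_le_exp (-p₂)
          linarith
        calc Real.exp (-p₁) - Real.exp (-p₁) * Real.exp (-p₂)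
            = Real.exp (-p₁) * (1 - Real.exp (-p₂)) := by ring
          _ ≤ Real.exp (-p₁) * p₂ := by
              exact mul_le_mul_of_nonneg_left h4 (Real.exp_pos _).le
      calc p₂ * |q.eval (Real.exp (-(p₁ + p₂))) - q.eval (Real.exp (-p₁))|
          ≤ p₂ * (Bnd q.derivative * |Real.exp (-(p₁ + p₂)) - Real.exp (-p₁)|) := by
            gcongr
            exact poly_lip q (exp_neg_mem_Icc (by linarith)) (exp_neg_mem_Icc h1)
        _ ≤ p₂ * (Bnd q.derivative * (Real.exp (-p₁) * p₂)) :=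
            mul_le_mul_of_nonneg_left
              (mul_le_mul_of_nonneg_left hd (Bnd_nonneg _)) h2
        _ = Bnd q.derivative * (p₂ * p₂ * Real.exp (-p₁)) := by ring
        _ ≤ Bnd q.derivative * (p₁ ^ 2 * Real.exp (-p₁)) := by
            gcongr
            · exact Bnd_nonneg _
            · nlinarith
        _ ≤ Bnd q.derivative * 4 :=
            mul_le_mul_of_nonneg_left (sq_le_exp h1) (Bnd_nonneg _)
    calc p₂ * |Phi a q (p₁ + p₂) - Phi a q p₁|
        ≤ p₂ * (|a| * |phi0 (p₁ + p₂) - phi0 p₁|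
            + |q.eval (Real.exp (-(p₁ + p₂))) - q.eval (Real.exp (-p₁))|) := by
          gcongr
          have : Phi a q (p₁ + p₂) - Phi a q p₁
              = a * (phi0 (p₁ + p₂) - phi0 p₁)
                + (q.eval (Real.exp (-(p₁ + p₂))) - q.eval (Real.exp (-p₁))) := by
            simp [Phi]; ring
          rw [this]
          refine le_trans (abs_add_le _ _) ?_
          rw [abs_mul]
      _ = |a| * (p₂ * |phi0 (p₁ + p₂) - phi0 p₁|)
            + p₂ * |q.eval (Real.exp (-(p₁ + p₂))) - q.eval (Real.exp (-p₁))| := by ring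
      _ ≤ |a| * 2 + Bnd q.derivative * 4 :=
          add_le_add (mul_le_mul_of_nonneg_left key1 (abs_nonneg a)) key2

theorem part1 (f : ℝ → ℝ) (hf : ContinuousOn f (Set.Ici 0))
    (hLe : ∃ L : ℝ, Tendsto f atTop (𝓝 L)) (ε : ℝ) (hε : 0 < ε) :
    ∃ (φ φ' : ℝ → ℝ) (S : Set ℝ), MemV φ φ' S ∧ ∀ p : ℝ, 0 ≤ p → |f p - φ p| ≤ ε := by
  obtain ⟨L, hL⟩ := hLe
  set g : ℝ → ℝ := fun x => if x ≤ 0 then L else f (-Real.log x) with hg_def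
  have hg : ContinuousOn g (Set.Icc 0 1) := by
    intro x hx
    rcases eq_or_lt_of_le hx.1 with h0 | h0
    · subst h0
      rw [ContinuousWithinAt]
      have hg0 : g 0 = L := by rw [hg_def]; simp
      rw [hg0]
      have hsub : Set.Icc (0:ℝ) 1 ⊆ Set.Iic 0 ∪ Set.Ioi 0 := by
        intro y _
        rcases le_or_gt y 0 with h | h
        · exact Or.inl h
        · exact Or.inr h
      have hkey : 𝓝[Set.Icc (0:ℝ) 1] 0 ≤ 𝓝[Set.Iic 0] 0 ⊔ 𝓝[Set.Ioi 0] 0 := by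
        rw [← nhdsWithin_union]
        exact nhdsWithin_mono _ hsub
      refine Tendsto.mono_left ?_ hkey
      rw [tendsto_sup]
      constructor
      · refine Tendsto.congr' ?_ tendsto_const_nhds
        filter_upwards [self_mem_nhdsWithin] with y hy
        rw [hg_def]; simp [Set.mem_Iic.mp hy]
      · have hlog : Tendsto (fun y : ℝ => -Real.log y) (𝓝[>] (0:ℝ)) atTop :=
          tendsto_neg_atBot_atTop.comp Real.tendsto_log_nhdsGT_zero
        refine Tendsto.congr' ?_ (hL.comp hlog)
        filter_upwards [self_mem_nhdsWithin] with y hy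
        rw [hg_def]
        simp [not_le.mpr (Set.mem_Ioi.mp hy)]
    · have hcomp : ContinuousWithinAt (fun y => f (-Real.log y)) (Set.Icc 0 1) x := by
        refine ContinuousWithinAt.comp (g := f) (f := fun y => -Real.log y)
          (hf.continuousWithinAt ?_) (((Real.continuousAt_log h0.ne').neg).continuousWithinAt) ?_
        · exact Set.mem_Ici.mpr (neg_nonneg.mpr (Real.log_nonpos h0.le hx.2))
        · intro y hy
          exact Set.mem_Ici.mpr (neg_nonneg.mpr (Real.log_nonpos hy.1 hy.2))
      refine hcomp.congr_of_eventuallyEq ?_ ?_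
      · filter_upwards [nhdsWithin_le_nhds (Ioi_mem_nhds h0)] with y hy
        rw [hg_def]; simp [not_le.mpr (Set.mem_Ioi.mp hy)]
      · rw [hg_def]; simp [not_le.mpr h0]
  obtain ⟨q, hq⟩ := exists_polynomial_near_of_continuousOn 0 1 g hg ε hε
  refine ⟨Phi 0 q, Phi' 0 q, {1}, memV_Phi 0 q, fun p hp => ?_⟩
  have hx : Real.exp (-p) ∈ Set.Icc (0:ℝ) 1 := exp_neg_mem_Icc hp
  have hgx : g (Real.exp (-p)) = f p := by
    rw [hg_def]
    simp only [not_le.mpr (Real.exp_pos (-p)), if_false, Real.log_exp, neg_neg]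
  have h2 := hq (Real.exp (-p)) hx
  rw [hgx] at h2
  have hPhi : Phi 0 q p = q.eval (Real.exp (-p)) := by simp [Phi]
  rw [hPhi, abs_sub_comm]
  exact h2.le

lemma phi0_one_add {p : ℝ} (h : 1 ≤ p) : 1 + p * phi0 p = 0 := by
  have hp : (0:ℝ) < p := lt_of_lt_of_le one_pos h
  have hmin : min p p⁻¹ = p⁻¹ := min_eq_right (le_trans (inv_le_one_of_one_le₀ h) h)
  rw [phi0, hmin, mul_neg, mul_inv_cancel₀ hp.ne']
  ring

theorem part2 (f : ℝ → ℝ) (hf : ContinuousOn f (Set.Ici 0))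
    (hRe : ∃ R : ℝ, ∀ p : ℝ, R ≤ p → f p = 0) (ε : ℝ) (hε : 0 < ε) :
    ∃ ψ : ℝ → ℝ, (∃ (c : ℝ) (φ φ' : ℝ → ℝ) (S : Set ℝ), MemV φ φ' S ∧
      ∀ p : ℝ, 0 ≤ p → ψ p = c + p * φ p) ∧ ∀ p : ℝ, 0 ≤ p → |f p - ψ p| ≤ ε := by
  obtain ⟨R, hR⟩ := hRe
  set f0 := f 0 with hf0
  set u : ℝ → ℝ := fun p => f p - f0 * (1 + p * phi0 p) with hu_def
  have hu_cont : ContinuousOn u (Set.Ici 0) :=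
    hf.sub (continuousOn_const.mul (continuousOn_const.add (continuousOn_id.mul contOn_phi0)))
  have hu0 : u 0 = 0 := by rw [hu_def]; simp [hf0]
  set R' : ℝ := max R 1 with hR'
  have hR'1 : (1:ℝ) ≤ R' := le_max_right R 1
  have huz : ∀ p, R' ≤ p → u p = 0 := by
    intro p hp
    have h1 : 1 ≤ p := le_trans hR'1 hp
    rw [hu_def]
    simp only
    rw [hR p (le_trans (le_max_left R 1) hp), phi0_one_add h1, mul_zero, sub_zero]
  -- choose δ
  have hcw : Tendsto u (𝓝[Set.Ici 0] 0) (𝓝 0) := by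
    have := hu_cont 0 (Set.mem_Ici.mpr le_rfl)
    rwa [ContinuousWithinAt, hu0] at this
  have hev : ∀ᶠ p in 𝓝[Set.Ici 0] 0, |u p| < ε / 3 := by
    have := Metric.tendsto_nhds.mp hcw (ε / 3) (by positivity)
    filter_upwards [this] with p hp
    simpa [Real.dist_eq] using hp
  obtain ⟨δ0, hδ0, hδball⟩ := Metric.mem_nhdsWithin_iff.mp hev
  set δ : ℝ := min (δ0 / 2) 1 with hδdef
  have hδpos : 0 < δ := lt_min (by positivity) one_pos
  have hδ1 : δ ≤ 1 := min_le_right _ _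
  have hδsmall : ∀ p, 0 ≤ p → p ≤ δ → |u p| ≤ ε / 3 := by
    intro p hp0 hpδ
    refine le_of_lt (hδball ⟨?_, hp0⟩)
    rw [Metric.mem_ball, Real.dist_eq, sub_zero, abs_of_nonneg hp0]
    calc p ≤ δ := hpδ
      _ ≤ δ0 / 2 := min_le_left _ _
      _ < δ0 := by linarith
  set g : ℝ → ℝ := fun p => u (max p δ) / max p δ with hgdef
  have hmaxpos : ∀ p : ℝ, 0 < max p δ := fun p => lt_of_lt_of_le hδpos (le_max_right p δ)
  have hg_cont : ∀ p : ℝ, ContinuousAt g p := by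
    intro p
    have h1 : ContinuousAt (fun p : ℝ => max p δ) p := continuousAt_id.max continuousAt_const
    have h2 : ContinuousAt u (max p δ) := by
      refine hu_cont.continuousAt ?_
      exact mem_of_superset (Ioi_mem_nhds (hmaxpos p)) Set.Ioi_subset_Ici_self
    have h3 : ContinuousAt (fun p : ℝ => u (max p δ)) p := ContinuousAt.comp (g := u) (f := fun p : ℝ => max p δ) h2 h1
    exact h3.div h1 (hmaxpos p).ne'
  have hgz : ∀ p, R' ≤ p → g p = 0 := by
    intro p hp
    have hpδ : δ ≤ p := le_trans (le_trans hδ1 hR'1) hp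
    rw [hgdef]
    simp only [max_eq_left hpδ]
    rw [huz p hp, zero_div]
  set A : ℝ := Real.exp (-R') with hA
  have hApos : 0 < A := Real.exp_pos _
  set H : ℝ → ℝ := fun x => if x ≤ 0 then 0 else g (-Real.log x) / x with hHdef
  have hH0 : ∀ x : ℝ, x ≤ A → H x = 0 := by
    intro x hx
    rcases le_or_gt x 0 with h | h
    · rw [hHdef]; simp [h]
    · rw [hHdef]
      simp only [not_le.mpr h, if_false]
      have hlog : R' ≤ -Real.log x := by
        have := (Real.log_le_log_iff h hApos).mpr hx
        rw [hA, Real.log_exp] at this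
        linarith
      rw [hgz _ hlog, zero_div]
  have hH_cont : ContinuousOn H (Set.Icc 0 1) := by
    intro x hx
    rcases eq_or_lt_of_le hx.1 with h0 | h0
    · subst h0
      refine ContinuousWithinAt.congr_of_eventuallyEq
        (f := fun _ => (0:ℝ)) continuousWithinAt_const ?_ (hH0 0 hApos.le)
      filter_upwards [nhdsWithin_le_nhds (Iio_mem_nhds hApos)] with y hy
      exact hH0 y (Set.mem_Iio.mp hy).le
    · have hca : ContinuousAt (fun y => g (-Real.log y) / y) x :=
        ((hg_cont _).comp ((Real.continuousAt_log h0.ne').neg)).div continuousAt_id h0.ne'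
      refine hca.continuousWithinAt.congr_of_eventuallyEq ?_ ?_
      · filter_upwards [nhdsWithin_le_nhds (Ioi_mem_nhds h0)] with y hy
        rw [hHdef]; simp only [not_le.mpr (Set.mem_Ioi.mp hy), if_false]
      · rw [hHdef]; simp only [not_le.mpr h0, if_false]
  obtain ⟨r, hr⟩ := exists_polynomial_near_of_continuousOn 0 1 H hH_cont (ε / 3) (by positivity)
  set q : ℝ[X] := Polynomial.X * r with hq
  refine ⟨fun p => f0 + p * Phi f0 q p,
    ⟨f0, Phi f0 q, Phi' f0 q, {1}, memV_Phi f0 q, fun p _ => rfl⟩, ?_⟩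
  intro p hp
  set x : ℝ := Real.exp (-p) with hxdef
  have hx : x ∈ Set.Icc (0:ℝ) 1 := exp_neg_mem_Icc hp
  have hx0 : 0 < x := Real.exp_pos _
  have hdecomp : f p - (f0 + p * Phi f0 q p) = (u p - p * g p) + p * (g p - q.eval x) := by
    rw [hu_def, Phi]
    simp only
    ring
  have hclaimA : |u p - p * g p| ≤ 2 * ε / 3 := by
    rcases le_or_gt δ p with h | h
    · rw [hgdef]
      simp only [max_eq_left h]
      rw [mul_div_cancel₀ _ (lt_of_lt_of_le hδpos h).ne', sub_self, abs_zero]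
      positivity
    · rw [hgdef]
      simp only [max_eq_right h.le]
      have h1 : |u p| ≤ ε / 3 := hδsmall p hp h.le
      have h2 : |u δ| ≤ ε / 3 := hδsmall δ hδpos.le le_rfl
      calc |u p - p * (u δ / δ)| ≤ |u p| + |p * (u δ / δ)| := abs_sub _ _
        _ = |u p| + (p / δ) * |u δ| := by
            rw [abs_mul, abs_of_nonneg hp, abs_div, abs_of_pos hδpos]
            ring
        _ ≤ ε / 3 + 1 * (ε / 3) := by
            refine add_le_add h1 ?_
            refine mul_le_mul ?_ h2 (abs_nonneg _) zero_le_one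
            rw [div_le_one hδpos]
            exact h.le
        _ = 2 * ε / 3 := by ring
  have hclaimB : p * |g p - q.eval x| ≤ ε / 3 := by
    have hHx : H x = g p / x := by
      rw [hHdef]
      simp only [not_le.mpr hx0, if_false]
      rw [hxdef, Real.log_exp, neg_neg]
    have hgp : g p = x * H x := by
      rw [hHx, mul_div_cancel₀ _ hx0.ne']
    have hqx : q.eval x = x * r.eval x := by rw [hq]; simp
    have hrx := hr x hx
    calc p * |g p - q.eval x| = p * (|x| * |H x - r.eval x|) := by
          rw [hgp, hqx, ← abs_mul, mul_sub]
      _ = (p * x) * |H x - r.eval x| := by rw [abs_of_pos hx0]; ring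
      _ ≤ 1 * (ε / 3) := by
          refine mul_le_mul (lin_le_exp hp) ?_ (abs_nonneg _) zero_le_one
          rw [abs_sub_comm]
          exact hrx.le
      _ = ε / 3 := by ring
  calc |f p - (f0 + p * Phi f0 q p)|
      = |(u p - p * g p) + p * (g p - q.eval x)| := by rw [hdecomp]
    _ ≤ |u p - p * g p| + p * |g p - q.eval x| := by
        refine le_trans (abs_add_le _ _) ?_
        rw [abs_mul, abs_of_nonneg hp]
    _ ≤ 2 * ε / 3 + ε / 3 := add_le_add hclaimA hclaimB
    _ = ε := by ring

end Aux

/-- `V([0,∞])` is dense, in the sup norm, in the space `C([0,∞])` of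
continuous functions on `[0,∞)` admitting a finite limit at `∞`; moreover every
`f ∈ C_c([0,∞))` can be approximated in sup norm by elements of `W([0,∞))`. -/
theorem statement2 :
    (∀ f : ℝ → ℝ, ContinuousOn f (Set.Ici 0) → (∃ L : ℝ, Tendsto f atTop (𝓝 L)) →
      ∀ ε : ℝ, 0 < ε → ∃ (φ φ' : ℝ → ℝ) (S : Set ℝ), MemV φ φ' S ∧
        ∀ p : ℝ, 0 ≤ p → |f p - φ p| ≤ ε) ∧
    (∀ f : ℝ → ℝ, ContinuousOn f (Set.Ici 0) → (∃ R : ℝ, ∀ p : ℝ, R ≤ p → f p = 0) →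
      ∀ ε : ℝ, 0 < ε → ∃ ψ : ℝ → ℝ, MemW ψ ∧ ∀ p : ℝ, 0 ≤ p → |f p - ψ p| ≤ ε) := by
  constructor
  · exact part1
  · intro f hf hR ε hε
    obtain ⟨ψ, hmem, hb⟩ := part2 f hf hR ε hε
    exact ⟨ψ, hmem, hb⟩
end
end

section
/- For every ψ in W([0,∞)), setting φ(p) := ψ(p)/p for p > 0, there exist constants c₁, c₂ > 0 (depending on ψ) such that |H¹_φ(p₁,p₂)| ≤ c₁ · p₁ · p₂ for all p₁ ≥ p₂ ≥ 0, and |H²_φ(p,p)| ≤ c₂ · p² for all p ≥ 0. -/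
open Filter Topology

noncomputable section

/-- Endpoint decrease from nonpositive derivative off a finite exceptional set. -/
lemma endpoint_le (f f' : ℝ → ℝ) (S : Set ℝ) :
    ∀ (n : ℕ) (a b : ℝ), a ≤ b → (S ∩ Set.Ioo a b).Finite → (S ∩ Set.Ioo a b).ncard ≤ n →
      ContinuousOn f (Set.Icc a b) →
      (∀ x ∈ Set.Ioo a b, x ∉ S → HasDerivAt f (f' x) x) →
      (∀ x ∈ Set.Ioo a b, x ∉ S → f' x ≤ 0) → f b ≤ f a := by
  have base : ∀ (a b : ℝ), a ≤ b → (S ∩ Set.Ioo a b) = ∅ →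
      ContinuousOn f (Set.Icc a b) →
      (∀ x ∈ Set.Ioo a b, x ∉ S → HasDerivAt f (f' x) x) →
      (∀ x ∈ Set.Ioo a b, x ∉ S → f' x ≤ 0) → f b ≤ f a := by
    intro a b hab hempty hcont hderiv hnonpos
    have hnS : ∀ x ∈ Set.Ioo a b, x ∉ S := by
      intro x hx hxS
      exact absurd (Set.mem_inter hxS hx) (by simp [hempty])
    have : AntitoneOn f (Set.Icc a b) := by
      apply antitoneOn_of_hasDerivWithinAt_nonpos (convex_Icc a b) hcont
        (f' := f')
      · intro x hx
        rw [interior_Icc] at hx ⊢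
        exact (hderiv x hx (hnS x hx)).hasDerivWithinAt
      · intro x hx
        rw [interior_Icc] at hx
        exact hnonpos x hx (hnS x hx)
    exact this (Set.left_mem_Icc.2 hab) (Set.right_mem_Icc.2 hab) hab
  intro n
  induction n with
  | zero =>
    intro a b hab hfin hcard hcont hderiv hnonpos
    have : (S ∩ Set.Ioo a b) = ∅ := by
      rw [← Set.ncard_eq_zero hfin]; omega
    exact base a b hab this hcont hderiv hnonpos
  | succ n ih =>
    intro a b hab hfin hcard hcont hderiv hnonpos
    rcases Set.eq_empty_or_nonempty (S ∩ Set.Ioo a b) with hempty | ⟨s, hsS, hsI⟩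
    · exact base a b hab hempty hcont hderiv hnonpos
    · have hsub1 : S ∩ Set.Ioo a s ⊆ (S ∩ Set.Ioo a b) \ {s} := by
        rintro x ⟨hxS, hx1, hx2⟩
        exact ⟨⟨hxS, hx1, hx2.trans hsI.2⟩, by simp; exact ne_of_lt hx2⟩
      have hsub2 : S ∩ Set.Ioo s b ⊆ (S ∩ Set.Ioo a b) \ {s} := by
        rintro x ⟨hxS, hx1, hx2⟩
        exact ⟨⟨hxS, hsI.1.trans hx1, hx2⟩, by simp; exact (ne_of_gt hx1)⟩
      have hlt : ((S ∩ Set.Ioo a b) \ {s}).ncard < (S ∩ Set.Ioo a b).ncard :=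
        Set.ncard_diff_singleton_lt_of_mem ⟨hsS, hsI⟩ hfin
      have hfd : ((S ∩ Set.Ioo a b) \ {s}).Finite := hfin.diff
      have h1 : f s ≤ f a := by
        refine ih a s hsI.1.le (hfd.subset hsub1)
          (le_trans (Set.ncard_le_ncard hsub1 hfd) (by omega))
          (hcont.mono (Set.Icc_subset_Icc le_rfl hsI.2.le)) ?_ ?_
        · exact fun x hx hxS => hderiv x ⟨hx.1, hx.2.trans hsI.2⟩ hxS
        · exact fun x hx hxS => hnonpos x ⟨hx.1, hx.2.trans hsI.2⟩ hxS
      have h2 : f b ≤ f s := by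
        refine ih s b hsI.2.le (hfd.subset hsub2)
          (le_trans (Set.ncard_le_ncard hsub2 hfd) (by omega))
          (hcont.mono (Set.Icc_subset_Icc hsI.1.le le_rfl)) ?_ ?_
        · exact fun x hx hxS => hderiv x ⟨hsI.1.trans hx.1, hx.2⟩ hxS
        · exact fun x hx hxS => hnonpos x ⟨hsI.1.trans hx.1, hx.2⟩ hxS
      exact h2.trans h1

lemma lemA {φ φ' : ℝ → ℝ} {S : Set ℝ} (hV : MemV φ φ' S) {K : ℝ}
    (hK : ∀ p : ℝ, 0 ≤ p → p ^ 2 * |φ' p| ≤ K) :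
    ∀ a b : ℝ, 0 < a → a ≤ b → a * b * |φ b - φ a| ≤ K * (b - a) := by
  intro a b ha hab
  have hb : 0 < b := lt_of_lt_of_le ha hab
  have hIcc : Set.Icc a b ⊆ Set.Ici (0 : ℝ) := fun x hx => le_trans ha.le hx.1
  have hfin : (S ∩ Set.Ioo a b).Finite :=
    (hV.S_locFinite a b).subset (Set.inter_subset_inter_right _ Set.Ioo_subset_Icc_self)
  -- one-sided estimate for ±φ
  have main : ∀ (g g' : ℝ → ℝ), (∀ x ∈ Set.Ioo a b, x ∉ S → HasDerivAt g (g' x) x) →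
      (∀ x ∈ Set.Ioo a b, x ∉ S → g' x ≤ K * (x ^ 2)⁻¹) →
      ContinuousOn g (Set.Icc a b) →
      g b - g a ≤ K * a⁻¹ - K * b⁻¹ := by
    intro g g' hg hg' hgc
    have hcont : ContinuousOn (fun x => g x + K * x⁻¹) (Set.Icc a b) := by
      refine hgc.add (ContinuousOn.mul continuousOn_const ?_)
      exact ContinuousOn.inv₀ continuousOn_id fun x hx => ne_of_gt (lt_of_lt_of_le ha hx.1)
    have hd : ∀ x ∈ Set.Ioo a b, x ∉ S →
        HasDerivAt (fun x => g x + K * x⁻¹) (g' x + K * (-(x ^ 2)⁻¹)) x := by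
      intro x hx hxS
      exact (hg x hx hxS).add ((hasDerivAt_inv (ne_of_gt (ha.trans hx.1))).const_mul K)
    have hd0 : ∀ x ∈ Set.Ioo a b, x ∉ S → g' x + K * (-(x ^ 2)⁻¹) ≤ 0 := by
      intro x hx hxS
      have := hg' x hx hxS
      linarith
    have := endpoint_le (fun x => g x + K * x⁻¹) (fun x => g' x + K * (-(x ^ 2)⁻¹)) S
      (S ∩ Set.Ioo a b).ncard a b hab hfin le_rfl hcont hd hd0
    linarith
  have hderiv : ∀ x ∈ Set.Ioo a b, x ∉ S → HasDerivAt φ (φ' x) x := by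
    intro x hx hxS
    exact (hV.hasDeriv x ⟨le_of_lt (ha.trans hx.1), hxS⟩).hasDerivAt
      (Ici_mem_nhds (ha.trans hx.1))
  have habs : ∀ x ∈ Set.Ioo a b, x ∉ S → |φ' x| ≤ K * (x ^ 2)⁻¹ := by
    intro x hx hxS
    have hx0 : (0:ℝ) < x := ha.trans hx.1
    have h1 := hK x hx0.le
    calc |φ' x| = x ^ 2 * |φ' x| * (x ^ 2)⁻¹ := by field_simp
    _ ≤ K * (x ^ 2)⁻¹ := by
        apply mul_le_mul_of_nonneg_right h1 (by positivity)
  have h1 : φ b - φ a ≤ K * a⁻¹ - K * b⁻¹ :=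
    main φ φ' hderiv (fun x hx hxS => le_trans (le_abs_self _) (habs x hx hxS))
      (hV.cont.mono hIcc)
  have h2 : (-φ) b - (-φ) a ≤ K * a⁻¹ - K * b⁻¹ := by
    refine main (-φ) (-φ') (fun x hx hxS => (hderiv x hx hxS).neg)
      (fun x hx hxS => ?_) ((hV.cont.mono hIcc).neg)
    have := habs x hx hxS
    have := neg_abs_le (φ' x)
    simp only [Pi.neg_apply]
    linarith [abs_nonneg (φ' x), neg_le_abs (φ' x)]
  have key : |φ b - φ a| ≤ K * a⁻¹ - K * b⁻¹ := by
    rw [abs_sub_le_iff]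
    constructor
    · exact h1
    · simp only [Pi.neg_apply] at h2; linarith
  have : a * b * |φ b - φ a| ≤ a * b * (K * a⁻¹ - K * b⁻¹) :=
    mul_le_mul_of_nonneg_left key (by positivity)
  calc a * b * |φ b - φ a| ≤ a * b * (K * a⁻¹ - K * b⁻¹) := this
  _ = K * (b - a) := by field_simp

/-- for every `ψ ∈ W([0,∞))`, setting `φ(p) := ψ(p)/p` (for `p > 0`), there
exist constants `c₁, c₂ > 0` (depending on `ψ`) with `|H¹_φ(p₁,p₂)| ≤ c₁ p₁ p₂` for all
`p₁ ≥ p₂ ≥ 0`, and `|H²_φ(p,p)| ≤ c₂ p²` for all `p ≥ 0`. -/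
theorem statement3 (ψ : ℝ → ℝ) (hψ : MemW ψ) :
    ∃ c₁ c₂ : ℝ, 0 < c₁ ∧ 0 < c₂ ∧
      (∀ p₁ p₂ : ℝ, 0 ≤ p₂ → p₂ ≤ p₁ → |H1 (fun p => ψ p / p) p₁ p₂| ≤ c₁ * p₁ * p₂) ∧
      (∀ p : ℝ, 0 ≤ p → |H2 (fun p => ψ p / p) p p| ≤ c₂ * p ^ 2) := by
  obtain ⟨c, φ, φ', S, hV, hψc⟩ := hψ
  set K : ℝ := sSup ((fun p => p ^ 2 * |φ' p|) '' Set.Ici 0) with hKdef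
  have hK : ∀ p : ℝ, 0 ≤ p → p ^ 2 * |φ' p| ≤ K :=
    fun p hp => le_csSup hV.bdd2 ⟨p, hp, rfl⟩
  have hK0 : 0 ≤ K := by have := hK 0 le_rfl; simpa using this
  have hA := lemA hV hK
  have hf : ∀ p : ℝ, 0 < p → ψ p / p = c / p + φ p := by
    intro p hp
    rw [hψc p hp.le]
    field_simp
  refine ⟨4 * |c| + 9 * K + 1, 4 * (|c| + K) + 1, by positivity, by positivity, ?_, ?_⟩
  · intro p₁ p₂ hp₂ h12
    rcases hp₂.eq_or_lt with h | h2
    · subst h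
      simp only [H1]
      norm_num
      ring
    · have hp₁ : 0 < p₁ := lt_of_lt_of_le h2 h12
      have hsum : 0 < p₁ + p₂ := by linarith
      -- key algebraic identity
      have key : H1 (fun p => ψ p / p) p₁ p₂ = -4 * c * p₁ * p₂ +
          ((p₁ + p₂) ^ 3 * (φ (p₁ + p₂) - φ p₁) + (p₁ - p₂) ^ 3 * (φ (p₁ - p₂) - φ p₁)
            + 4 * p₁ * p₂ ^ 2 * (φ p₁ - φ p₂)) := by
        rcases eq_or_lt_of_le h12 with heq | hlt
        · subst heq
          simp only [H1, sub_self, hf _ hsum, hf _ h2]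
          field_simp
          ring
        · have hd : 0 < p₁ - p₂ := by linarith
          simp only [H1, hf _ hsum, hf _ h2, hf _ hp₁, hf _ hd]
          field_simp
          ring
      have hT1 : (p₁ + p₂) ^ 3 * |φ (p₁ + p₂) - φ p₁| ≤ 4 * K * p₁ * p₂ := by
        have h := hA p₁ (p₁ + p₂) hp₁ (by linarith)
        have hKp : 0 ≤ K * p₂ := by positivity
        have hX : 0 ≤ |φ (p₁ + p₂) - φ p₁| := abs_nonneg _
        rw [show p₁ + p₂ - p₁ = p₂ by ring] at h
        have := mul_le_mul_of_nonneg_left h (sq_nonneg (p₁ + p₂))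
        have hsq : (p₁ + p₂) ^ 2 * (K * p₂) ≤ 4 * p₁ ^ 2 * (K * p₂) := by
          nlinarith [mul_nonneg (mul_nonneg (sub_nonneg.2 h12)
            (by linarith : (0:ℝ) ≤ 3 * p₁ + p₂)) hKp]
        have hm : p₁ * ((p₁ + p₂) ^ 3 * |φ (p₁ + p₂) - φ p₁|) ≤ p₁ * (4 * K * p₁ * p₂) :=
          calc p₁ * ((p₁ + p₂) ^ 3 * |φ (p₁ + p₂) - φ p₁|)
              = (p₁ + p₂) ^ 2 * (p₁ * (p₁ + p₂) * |φ (p₁ + p₂) - φ p₁|) := by ring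
            _ ≤ (p₁ + p₂) ^ 2 * (K * p₂) := this
            _ ≤ 4 * p₁ ^ 2 * (K * p₂) := hsq
            _ = p₁ * (4 * K * p₁ * p₂) := by ring
        exact le_of_mul_le_mul_left hm hp₁
      have hT2 : |(p₁ - p₂) ^ 3 * (φ (p₁ - p₂) - φ p₁)| ≤ K * p₁ * p₂ := by
        rcases eq_or_lt_of_le h12 with heq | hlt
        · subst heq; simp; positivity
        · have hd : 0 < p₁ - p₂ := by linarith
          have h := hA (p₁ - p₂) p₁ hd (by linarith)
          rw [show p₁ - (p₁ - p₂) = p₂ by ring] at h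
          rw [abs_mul, abs_of_nonneg (by positivity : (0:ℝ) ≤ (p₁ - p₂) ^ 3),
            abs_sub_comm]
          have hKp : 0 ≤ K * p₂ := mul_nonneg hK0 h2.le
          have hsq : (p₁ - p₂) ^ 2 * (K * p₂) ≤ p₁ ^ 2 * (K * p₂) := by
            nlinarith [mul_nonneg (mul_nonneg h2.le
              (by linarith : (0:ℝ) ≤ 2 * p₁ - p₂)) hKp]
          have hm : p₁ * ((p₁ - p₂) ^ 3 * |φ p₁ - φ (p₁ - p₂)|) ≤ p₁ * (K * p₁ * p₂) :=
            calc p₁ * ((p₁ - p₂) ^ 3 * |φ p₁ - φ (p₁ - p₂)|)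
                = (p₁ - p₂) ^ 2 * ((p₁ - p₂) * p₁ * |φ p₁ - φ (p₁ - p₂)|) := by ring
              _ ≤ (p₁ - p₂) ^ 2 * (K * p₂) := mul_le_mul_of_nonneg_left h (sq_nonneg _)
              _ ≤ p₁ ^ 2 * (K * p₂) := hsq
              _ = p₁ * (K * p₁ * p₂) := by ring
          exact le_of_mul_le_mul_left hm hp₁
      have hT3 : 4 * p₁ * p₂ ^ 2 * |φ p₁ - φ p₂| ≤ 4 * K * p₁ * p₂ := by
        have h := hA p₂ p₁ h2 h12
        calc 4 * p₁ * p₂ ^ 2 * |φ p₁ - φ p₂| = 4 * p₂ * (p₂ * p₁ * |φ p₁ - φ p₂|) := by ring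
          _ ≤ 4 * p₂ * (K * (p₁ - p₂)) :=
              mul_le_mul_of_nonneg_left h (by positivity)
          _ ≤ 4 * K * p₁ * p₂ := by
              nlinarith [mul_nonneg hK0 (mul_nonneg h2.le h2.le)]
      have hcpart : |(-4 : ℝ) * c * p₁ * p₂| = 4 * |c| * p₁ * p₂ := by
        rw [show (-4 : ℝ) * c * p₁ * p₂ = -(c * (4 * (p₁ * p₂))) by ring, abs_neg, abs_mul,
          abs_of_nonneg (by positivity : (0:ℝ) ≤ 4 * (p₁ * p₂))]
        ring
      rw [key]
      have habs1 : |(p₁ + p₂) ^ 3 * (φ (p₁ + p₂) - φ p₁)| ≤ 4 * K * p₁ * p₂ := by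
        rw [abs_mul, abs_of_nonneg (by positivity : (0:ℝ) ≤ (p₁ + p₂) ^ 3)]
        exact hT1
      have habs3 : |4 * p₁ * p₂ ^ 2 * (φ p₁ - φ p₂)| ≤ 4 * K * p₁ * p₂ := by
        rw [abs_mul, abs_of_nonneg (by positivity : (0:ℝ) ≤ 4 * p₁ * p₂ ^ 2)]
        exact hT3
      calc |(-4 * c * p₁ * p₂) + ((p₁ + p₂) ^ 3 * (φ (p₁ + p₂) - φ p₁)
              + (p₁ - p₂) ^ 3 * (φ (p₁ - p₂) - φ p₁) + 4 * p₁ * p₂ ^ 2 * (φ p₁ - φ p₂))|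
          ≤ |(-4 : ℝ) * c * p₁ * p₂| + (|(p₁ + p₂) ^ 3 * (φ (p₁ + p₂) - φ p₁)|
              + |(p₁ - p₂) ^ 3 * (φ (p₁ - p₂) - φ p₁)| + |4 * p₁ * p₂ ^ 2 * (φ p₁ - φ p₂)|) := by
            refine (abs_add_le _ _).trans ?_
            gcongr
            exact (abs_add_le _ _).trans (by gcongr; exact abs_add_le _ _)
        _ ≤ 4 * |c| * p₁ * p₂ + (4 * K * p₁ * p₂ + K * p₁ * p₂ + 4 * K * p₁ * p₂) := by
            rw [hcpart]
            gcongr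
        _ ≤ (4 * |c| + 9 * K + 1) * p₁ * p₂ := by nlinarith
  · intro p hp
    rcases hp.eq_or_lt with h | hp0
    · subst h  -- h : 0 = p?
      simp [H2]
    · have hsum : 0 < p + p := by linarith
      have key : H2 (fun p => ψ p / p) p p = 4 * p ^ 2 * (-c + 2 * p * (φ (p + p) - φ p)) := by
        simp only [H2, hf _ hsum, hf _ hp0]
        field_simp
        ring
      have h := hA p (p + p) hp0 (by linarith)
      rw [show p + p - p = p by ring] at h
      have h2p : 2 * p * |φ (p + p) - φ p| ≤ K := by
        have hm : p * (2 * p * |φ (p + p) - φ p|) ≤ p * K :=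
          calc p * (2 * p * |φ (p + p) - φ p|)
              = p * (p + p) * |φ (p + p) - φ p| := by ring
            _ ≤ K * p := h
            _ = p * K := by ring
        exact le_of_mul_le_mul_left hm hp0
      have hinner : |(-c + 2 * p * (φ (p + p) - φ p))| ≤ |c| + K := by
        refine (abs_add_le _ _).trans ?_
        rw [abs_neg, abs_mul, abs_of_nonneg (by positivity : (0:ℝ) ≤ 2 * p)]
        linarith
      rw [key, abs_mul, abs_of_nonneg (by positivity : (0:ℝ) ≤ 4 * p ^ 2)]
      nlinarith [mul_le_mul_of_nonneg_left hinner
        (by positivity : (0:ℝ) ≤ 4 * p ^ 2), sq_nonneg p]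
end
end

section
/- Fix r > 0 and let φ_r(p) = (1 − r/p)₊ for p > 0 (that is, φ_r(p) = 1 − r/p if p ≥ r and φ_r(p) = 0 if 0 ≤ p < r, with φ_r(0) = 0). Then H¹_{φ_r}(p₁,p₂) ≥ 0 for all p₁ ≥ p₂ ≥ 0, H²_{φ_r}(p₁,p₂) ≥ 0 for all p₁, p₂ ≥ 0, and moreover H¹_{φ_r}(p,p) = H²_{φ_r}(p,p) for every p ≥ 0. -/
open Filter Topology

noncomputable section

/-- The test function `φ_r(p) = (1 - r/p)₊`: equal to `1 - r/p` for `p ≥ r`, and to `0`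
for `0 ≤ p < r` (in particular `φ_r(0) = 0`). -/
def phiR (r p : ℝ) : ℝ := if p < r then 0 else 1 - r / p

/-- for `r > 0`, `H¹_{φ_r}(p₁,p₂) ≥ 0` for all `p₁ ≥ p₂ ≥ 0`,
`H²_{φ_r}(p₁,p₂) ≥ 0` for all `p₁, p₂ ≥ 0`, and `H¹_{φ_r}(p,p) = H²_{φ_r}(p,p)` for all
`p ≥ 0`. -/
theorem statement4 (r : ℝ) (hr : 0 < r) :
    (∀ p₁ p₂ : ℝ, 0 ≤ p₂ → p₂ ≤ p₁ → 0 ≤ H1 (phiR r) p₁ p₂) ∧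
    (∀ p₁ p₂ : ℝ, 0 ≤ p₁ → 0 ≤ p₂ → 0 ≤ H2 (phiR r) p₁ p₂) ∧
    (∀ p : ℝ, 0 ≤ p → H1 (phiR r) p p = H2 (phiR r) p p) := by
  have hlt : ∀ p : ℝ, p < r → phiR r p = 0 := fun p h => if_pos h
  have hge : ∀ p : ℝ, r ≤ p → p ^ 3 * phiR r p = p ^ 3 - r * p ^ 2 := by
    intro p h
    have hp : (0:ℝ) < p := lt_of_lt_of_le hr h
    rw [phiR, if_neg (not_lt.2 h)]
    field_simp
  have hge1 : ∀ p : ℝ, r ≤ p → p * phiR r p = p - r := by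
    intro p h
    have hp : (0:ℝ) < p := lt_of_lt_of_le hr h
    rw [phiR, if_neg (not_lt.2 h)]
    field_simp
  refine ⟨?_, ?_, ?_⟩
  · intro p₁ p₂ h2 h12
    have hd : 0 ≤ p₁ - p₂ := by linarith
    unfold H1
    rcases lt_or_ge (p₁ + p₂) r with hs | hs
    · rw [hlt _ hs, hlt _ (by linarith), hlt _ (by linarith), hlt _ (by linarith)]
      ring_nf
      exact le_refl 0
    · have hspos : (0:ℝ) < p₁ + p₂ := lt_of_lt_of_le hr hs
      have e1 : (p₁ + p₂) ^ 3 * phiR r (p₁ + p₂) = (p₁ + p₂) ^ 3 - r * (p₁ + p₂) ^ 2 :=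
        hge _ hs
      rcases lt_or_ge p₁ r with h1 | h1
      · rw [e1, hlt _ h1, hlt _ (by linarith), hlt _ (by linarith)]
        nlinarith [sq_nonneg (p₁ + p₂)]
      · have h1pos : (0:ℝ) < p₁ := lt_of_lt_of_le hr h1
        have e2 : 2 * (p₁ ^ 3 + p₁ * p₂ ^ 2) * phiR r p₁
            = 2 * (p₁ ^ 3 + p₁ * p₂ ^ 2) - 2 * r * (p₁ ^ 2 + p₂ ^ 2) := by
          rw [phiR, if_neg (not_lt.2 h1)]
          field_simp
        rcases lt_or_ge p₂ r with h2r | h2r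
        · rcases lt_or_ge (p₁ - p₂) r with hdr | hdr
          · rw [e1, e2, hlt _ h2r, hlt _ hdr]
            nlinarith [sq_nonneg (p₁ - p₂), mul_nonneg (mul_nonneg hd h2) h2,
              sq_nonneg p₂, mul_nonneg (sq_nonneg (p₁ - p₂)) (sub_nonneg.2 hdr.le)]
          · have e4 : (p₁ - p₂) ^ 3 * phiR r (p₁ - p₂)
                = (p₁ - p₂) ^ 3 - r * (p₁ - p₂) ^ 2 := hge _ hdr
            rw [e1, e2, hlt _ h2r, e4]
            nlinarith [mul_nonneg (mul_nonneg hd h2) h2, mul_nonneg (mul_nonneg h2 h2) h2]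
        · have e3 : 4 * p₁ * p₂ ^ 2 * phiR r p₂
              = 4 * p₁ * p₂ ^ 2 - 4 * r * p₁ * p₂ := by
            have h2pos : (0:ℝ) < p₂ := lt_of_lt_of_le hr h2r
            rw [phiR, if_neg (not_lt.2 h2r)]
            field_simp
          rcases lt_or_ge (p₁ - p₂) r with hdr | hdr
          · rw [e1, e2, e3, hlt _ hdr]
            nlinarith [mul_nonneg (mul_nonneg hr.le h1pos.le) h2,
              mul_nonneg (sq_nonneg (p₁ - p₂)) (sub_nonneg.2 hdr.le)]
          · have e4 : (p₁ - p₂) ^ 3 * phiR r (p₁ - p₂)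
                = (p₁ - p₂) ^ 3 - r * (p₁ - p₂) ^ 2 := hge _ hdr
            rw [e1, e2, e3, e4]
            nlinarith [mul_nonneg (mul_nonneg hr.le h1pos.le) h2]
  · intro p₁ p₂ h1 h2
    unfold H2
    rcases lt_or_ge (p₁ + p₂) r with hs | hs
    · rw [hlt _ hs, hlt _ (by linarith), hlt _ (by linarith)]
      ring_nf
      exact le_refl 0
    · have es : (p₁ + p₂) * phiR r (p₁ + p₂) = (p₁ + p₂) - r := hge1 _ hs
      rcases lt_or_ge p₁ r with h1r | h1r
      · rcases lt_or_ge p₂ r with h2r | h2r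
        · rw [es, hlt _ h1r, hlt _ h2r]
          nlinarith [sq_nonneg (p₁ + p₂)]
        · rw [es, hlt _ h1r, hge1 _ h2r]
          nlinarith [sq_nonneg (p₁ + p₂)]
      · rcases lt_or_ge p₂ r with h2r | h2r
        · rw [es, hlt _ h2r, hge1 _ h1r]
          nlinarith [sq_nonneg (p₁ + p₂)]
        · rw [es, hge1 _ h1r, hge1 _ h2r]
          nlinarith [sq_nonneg (p₁ + p₂)]
  · intro p _
    unfold H1 H2
    ring
end
end

section
/- Let t ↦ ν(t) be a weak solution of the isotropic 3-wave kinetic equation for acoustic waves with initial datum ν₀. Then for every ρ ∈ (0,1) and every R ∈ (0,∞), one has ν(t)([R·ρ, ∞]) ≥ (1 − ρ) · ν₀([R, ∞]) for all t ∈ [0,∞). -/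
set_option autoImplicit false
set_option linter.unusedSectionVars false
set_option maxHeartbeats 1000000


open MeasureTheory Filter Topology
open scoped ENNReal NNReal

noncomputable section

/-- Restriction of a test function on the extended half line `[0,∞] = ℝ≥0∞`
to the finite part `[0,∞)`. -/
def restr (φ : ℝ≥0∞ → ℝ) : ℝ → ℝ := fun p => φ (ENNReal.ofReal p)

/-- `K` is the continuous extension to `[0,∞]²` of `H¹_φ(p₁,p₂)/(p₁p₂)`. -/
def IsH1Ext (φ : ℝ≥0∞ → ℝ) (K : ℝ≥0∞ → ℝ≥0∞ → ℝ) : Prop :=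
  Continuous (Function.uncurry K) ∧
    ∀ p₁ p₂ : ℝ, 0 < p₂ → p₂ < p₁ →
      K (ENNReal.ofReal p₁) (ENNReal.ofReal p₂) = H1 (restr φ) p₁ p₂ / (p₁ * p₂)

/-- `K` is the continuous extension to `[0,∞]` of the diagonal kernel `H²_φ(p,p)/p²`. -/
def IsH2Ext (φ : ℝ≥0∞ → ℝ) (K : ℝ≥0∞ → ℝ) : Prop :=
  Continuous K ∧ ∀ p : ℝ, 0 < p → K (ENNReal.ofReal p) = H2 (restr φ) p p / (p * p)

/-- The collision terms
`2 ∬_{p₁>p₂≥0} K₁ dμ dμ + ∬_{p₁=p₂≥0} K₂ dμ dμ`. -/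
def collInt (μ : Measure ℝ≥0∞) (K₁ : ℝ≥0∞ → ℝ≥0∞ → ℝ) (K₂ : ℝ≥0∞ → ℝ) : ℝ :=
  2 * ∫ p₁, (∫ p₂, (if p₂ < p₁ then K₁ p₁ p₂ else 0) ∂μ) ∂μ
    + ∫ p₁, (∫ p₂, (if p₁ = p₂ then K₂ p₁ else 0) ∂μ) ∂μ

/-- The weak formulation of the isotropic 3-wave kinetic equation for acoustic waves for
one (time dependent) test function `φ` with time derivative `Dφ`: for every `t ≥ 0` and
every pair of continuous extensions `K₁ s, K₂ s` of the kernels `H¹_{φ(s,·)}/(p₁p₂)`,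
`H²_{φ(s,·)}/(p₁p₂)` on `[0,t]`,
`∫ φ(t,·) dν(t) - ∫ φ(0,·) dν(0) = ∫₀ᵗ (∫ ∂ₛφ dν(s) + collision terms) ds`. -/
def WeakIdentity (ν : ℝ → Measure ℝ≥0∞) (φ Dφ : ℝ → ℝ≥0∞ → ℝ) : Prop :=
  ∀ t : ℝ, 0 ≤ t →
    ∀ (K₁ : ℝ → ℝ≥0∞ → ℝ≥0∞ → ℝ) (K₂ : ℝ → ℝ≥0∞ → ℝ),
      (∀ s ∈ Set.Icc 0 t, IsH1Ext (φ s) (K₁ s)) →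
      (∀ s ∈ Set.Icc 0 t, IsH2Ext (φ s) (K₂ s)) →
      (∫ p, φ t p ∂(ν t)) - (∫ p, φ 0 p ∂(ν 0))
        = ∫ s in (0 : ℝ)..t, ((∫ p, Dφ s p ∂(ν s)) + collInt (ν s) (K₁ s) (K₂ s))

/-- A weak solution (in the sense of Definition 8 of the paper, case (i)) of the isotropic
3-wave kinetic equation for acoustic waves, written for the energy measure `ν(t)` on the
extended half line `[0,∞] = ℝ≥0∞`: `ν` is a weak-*-continuous family of finite nonnegative
measures with `ν(0) = ν₀` satisfying the weak formulation for all test functions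
`φ ∈ C¹([0,∞); C([0,∞]))`. -/
structure IsWeakSolution (ν : ℝ → Measure ℝ≥0∞) (ν₀ : Measure ℝ≥0∞) : Prop where
  finite : ∀ t : ℝ, IsFiniteMeasure (ν t)
  init : ν 0 = ν₀
  weakStarCont : ∀ ψ : C(ℝ≥0∞, ℝ), ContinuousOn (fun t => ∫ p, ψ p ∂(ν t)) (Set.Ici 0)
  eqn : ∀ φ Dφ : ℝ → C(ℝ≥0∞, ℝ),
    (∀ s : ℝ, HasDerivAt φ (Dφ s) s) → Continuous Dφ →
    WeakIdentity ν (fun s p => φ s p) (fun s p => Dφ s p)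

/-- A solution is nontrivial when the initial energy is not entirely concentrated
at `{∞}`. -/
def NontrivialSol (ν₀ : Measure ℝ≥0∞) : Prop := 0 < ν₀ (Set.Iio ⊤)

namespace Stmt10

/-- `q x = (max x 0)^2`. -/
def q (x : ℝ) : ℝ := max x 0 ^ 2

lemma q_nonneg (x : ℝ) : 0 ≤ q x := sq_nonneg _

lemma q_of_nonpos {x : ℝ} (h : x ≤ 0) : q x = 0 := by simp [q, max_eq_right h]

lemma q_of_nonneg {x : ℝ} (h : 0 ≤ x) : q x = x ^ 2 := by simp [q, max_eq_left h]

lemma q_mono : Monotone q := by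
  intro x y hxy
  have : max x 0 ≤ max y 0 := max_le_max hxy le_rfl
  simpa [q] using pow_le_pow_left₀ (le_max_right x 0) this 2

lemma q_continuous : Continuous q := by unfold q; fun_prop

lemma hasDerivAt_q (x : ℝ) : HasDerivAt q (2 * max x 0) x := by
  rcases lt_trichotomy x 0 with hx | hx | hx
  · have h0 : HasDerivAt (fun _ : ℝ => (0:ℝ)) 0 x := hasDerivAt_const x 0
    have hev : (fun _ : ℝ => (0:ℝ)) =ᶠ[𝓝 x] q := by
      filter_upwards [Iio_mem_nhds hx] with y hy
      simp [q_of_nonpos (le_of_lt hy)]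
    have := h0.congr_of_eventuallyEq hev.symm
    simpa [max_eq_right hx.le] using this
  · subst hx
    rw [hasDerivAt_iff_tendsto_slope]
    have hb : ∀ y : ℝ, ‖slope q 0 y‖ ≤ ‖y‖ := by
      intro y
      rcases eq_or_ne y 0 with rfl | hy
      · simp [slope]
      · rw [slope_def_field]
        rcases le_or_gt y 0 with h | h
        · simp [q_of_nonpos h, q_of_nonpos (le_refl (0:ℝ))]
        · rw [q_of_nonneg h.le, q_of_nonpos (le_refl (0:ℝ))]
          have : (y ^ 2 - 0) / (y - 0) = y := by field_simp; ring
          rw [this]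
    have := squeeze_zero_norm hb (by have := continuous_norm.tendsto (0:ℝ); rwa [norm_zero] at this)
    have h2 : Tendsto (slope q 0) (𝓝[≠] 0) (𝓝 0) := this.mono_left nhdsWithin_le_nhds
    simpa using h2
  · have h0 : HasDerivAt (fun y : ℝ => y ^ 2) (2 * x) x := by
      simpa using hasDerivAt_pow 2 x
    have hev : (fun y : ℝ => y ^ 2) =ᶠ[𝓝 x] q := by
      filter_upwards [Ioi_mem_nhds hx] with y hy
      simp [q_of_nonneg (le_of_lt hy)]
    have := h0.congr_of_eventuallyEq hev.symm
    simpa [max_eq_left hx.le] using this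

/-- Second-difference bounds for `q`. -/
lemma q_second_diff {x h : ℝ} (hh : 0 ≤ h) :
    0 ≤ q (x + h) + q (x - h) - 2 * q x ∧ q (x + h) + q (x - h) - 2 * q x ≤ 2 * h ^ 2 := by
  simp only [q, max_def]
  split_ifs <;> constructor <;>
    nlinarith [sq_nonneg (x+h), sq_nonneg (x-h), sq_nonneg x, sq_nonneg h]

section F
variable (a m : ℝ)

/-- The profile function: `F = 0` on `(-∞,a]`, quadratic on `[a,m]`, `F p = p - (a+m)/2` on
`[m,∞)`. -/
def F (p : ℝ) : ℝ := (q (p - a) - q (p - m)) / (2 * (m - a))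

/-- Its derivative. -/
def F' (p : ℝ) : ℝ := (max (p - a) 0 - max (p - m) 0) / (m - a)

def c : ℝ := (a + m) / 2

variable {a m}
variable (ham : a < m)
include ham

lemma hw : (0:ℝ) < m - a := sub_pos.2 ham

lemma F_continuous : Continuous (F a m) :=
  (((q_continuous.comp (continuous_id.sub continuous_const)).sub
    (q_continuous.comp (continuous_id.sub continuous_const)))).div_const _

lemma hasDerivAt_F (p : ℝ) : HasDerivAt (F a m) (F' a m p) p := by
  have h1 : HasDerivAt (fun p : ℝ => q (p - a)) (2 * max (p - a) 0) p := by
    simpa [Function.comp_def] using (hasDerivAt_q (p - a)).comp p ((hasDerivAt_id p).sub_const a)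
  have h2 : HasDerivAt (fun p : ℝ => q (p - m)) (2 * max (p - m) 0) p := by
    simpa [Function.comp_def] using (hasDerivAt_q (p - m)).comp p ((hasDerivAt_id p).sub_const m)
  have h3 := (h1.sub h2).div_const (2 * (m - a))
  have : (2 * max (p - a) 0 - 2 * max (p - m) 0) / (2 * (m - a)) = F' a m p := by
    unfold F'
    rw [div_eq_div_iff (by nlinarith [hw ham]) (hw ham).ne']
    ring
  rw [this] at h3
  exact h3

lemma F'_mono : Monotone (F' a m) := by
  intro x y hxy
  unfold F'
  rw [div_le_div_iff_of_pos_right (hw ham)]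
  simp only [max_def]
  split_ifs <;> linarith

lemma F_convex : ConvexOn ℝ Set.univ (F a m) := by
  have hdiff : Differentiable ℝ (F a m) := fun p => (hasDerivAt_F ham p).differentiableAt
  have hder : deriv (F a m) = F' a m := funext fun p => (hasDerivAt_F ham p).deriv
  exact (hder ▸ (F'_mono ham)).convexOn_univ_of_deriv hdiff

lemma F_of_le {p : ℝ} (hp : p ≤ a) : F a m p = 0 := by
  unfold F
  rw [q_of_nonpos (by linarith), q_of_nonpos (by linarith)]
  simp

lemma F_of_ge {p : ℝ} (hp : m ≤ p) : F a m p = p - c a m := by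
  unfold F c
  rw [q_of_nonneg (by linarith), q_of_nonneg (by linarith),
    div_eq_iff (by nlinarith [hw ham] : 2 * (m - a) ≠ 0)]
  ring

lemma F_nonneg (p : ℝ) : 0 ≤ F a m p := by
  unfold F
  apply div_nonneg _ (by nlinarith [hw ham])
  have := q_mono (show p - m ≤ p - a by linarith)
  linarith

lemma F_le_max (p : ℝ) : F a m p ≤ max (p - a) 0 := by
  unfold F
  rw [div_le_iff₀ (by nlinarith [hw ham])]
  simp only [q, max_def]
  split_ifs <;> nlinarith [hw ham]

lemma F_ge_sub (p : ℝ) : p - c a m ≤ F a m p := by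
  unfold F c
  rw [le_div_iff₀ (by nlinarith [hw ham])]
  simp only [q, max_def]
  split_ifs <;> nlinarith [hw ham]

/-- slope monotonicity through the origin. -/
lemma F_slope (ha : 0 ≤ a) {x y : ℝ} (hy : 0 < y) (hxy : y ≤ x) :
    F a m y * x ≤ F a m x * y := by
  have hx : 0 < x := lt_of_lt_of_le hy hxy
  have h := (F_convex ham).secant_mono (Set.mem_univ (0:ℝ)) (Set.mem_univ y)
    (Set.mem_univ x) hy.ne' hx.ne' hxy
  rw [F_of_le ham ha, sub_zero, sub_zero, sub_zero, sub_zero,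
    div_le_div_iff₀ hy hx] at h
  linarith

end F

section kG

/-- Second difference quotient. -/
def G (a m x y : ℝ) : ℝ :=
  if y = 0 then 0 else (F a m (x + y) + F a m (x - y) - 2 * F a m x) / y

/-- The (real-variable) kernel `H¹_φ(x,y)/(xy)`, written in extendable form. -/
def k (a m x y : ℝ) : ℝ :=
  if x = 0 then 0 else
    (x ^ 2 + y ^ 2) / x * G a m x y + 2 * (F a m (x + y) - F a m (x - y)) - 4 * F a m y

variable {a m : ℝ} (ham : a < m)
include ham

lemma F_second_diff (x : ℝ) {y : ℝ} (hy : 0 ≤ y) :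
    |F a m (x + y) + F a m (x - y) - 2 * F a m x| ≤ y ^ 2 / (m - a) := by
  have h1 := q_second_diff (x := x - a) hy
  have h2 := q_second_diff (x := x - m) hy
  have hww := hw ham
  unfold F
  rw [show x + y - a = x - a + y from by ring, show x - y - a = x - a - y from by ring,
    show x + y - m = x - m + y from by ring, show x - y - m = x - m - y from by ring]
  have key : (q (x - a + y) - q (x - m + y)) / (2 * (m - a))
      + (q (x - a - y) - q (x - m - y)) / (2 * (m - a))
      - 2 * ((q (x - a) - q (x - m)) / (2 * (m - a)))
      = ((q (x - a + y) + q (x - a - y) - 2 * q (x - a))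
        - (q (x - m + y) + q (x - m - y) - 2 * q (x - m))) / (2 * (m - a)) := by
    ring
  rw [key, abs_div, abs_of_pos (by linarith : (0:ℝ) < 2 * (m - a)),
    div_le_div_iff₀ (by linarith) hww]
  have hnum : |q (x - a + y) + q (x - a - y) - 2 * q (x - a)
      - (q (x - m + y) + q (x - m - y) - 2 * q (x - m))| ≤ 2 * y ^ 2 :=
    abs_le.2 ⟨by linarith [h1.1, h1.2, h2.1, h2.2], by linarith [h1.1, h1.2, h2.1, h2.2]⟩
  nlinarith [abs_nonneg (q (x - a + y) + q (x - a - y) - 2 * q (x - a)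
      - (q (x - m + y) + q (x - m - y) - 2 * q (x - m)))]

lemma G_abs (x : ℝ) {y : ℝ} (hy : 0 ≤ y) : |G a m x y| ≤ y / (m - a) := by
  unfold G
  rcases eq_or_ne y 0 with rfl | hy0
  · simp [le_div_iff₀ (hw ham)]
  · have hy' : 0 < y := lt_of_le_of_ne hy (Ne.symm hy0)
    rw [if_neg hy0, abs_div, abs_of_pos hy', div_le_div_iff₀ hy' (hw ham)]
    have h := F_second_diff ham x hy
    have h2 : |F a m (x + y) + F a m (x - y) - 2 * F a m x| * (m - a) ≤ y ^ 2 := by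
      calc |F a m (x + y) + F a m (x - y) - 2 * F a m x| * (m - a)
          ≤ (y ^ 2 / (m - a)) * (m - a) := mul_le_mul_of_nonneg_right h (hw ham).le
        _ = y ^ 2 := div_mul_cancel₀ _ (hw ham).ne'
    nlinarith

lemma k_eq_far (ha : 0 < a) {x y : ℝ} (hy : 0 ≤ y) (hxy : m + y ≤ x) :
    k a m x y = 4 * (y - F a m y) := by
  have hm : 0 < m := lt_trans ha ham
  have hx : x ≠ 0 := by
    have : 0 < x := by linarith
    exact this.ne'
  have e1 : F a m (x + y) = x + y - c a m := F_of_ge ham (by linarith)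
  have e2 : F a m (x - y) = x - y - c a m := F_of_ge ham (by linarith)
  have e3 : F a m x = x - c a m := F_of_ge ham (by linarith)
  unfold k G
  rw [if_neg hx, e1, e2, e3]
  rcases eq_or_ne y 0 with rfl | hy0
  · rw [if_pos rfl, F_of_le ham ha.le]
    ring
  · rw [if_neg hy0]
    have : (x + y - c a m + (x - y - c a m) - 2 * (x - c a m)) / y = 0 := by
      rw [div_eq_zero_iff]; left; ring
    rw [this]
    ring

lemma k_nonneg (ha : 0 < a) {x y : ℝ} (hy : 0 ≤ y) (hxy : y ≤ x) : 0 ≤ k a m x y := by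
  rcases eq_or_ne x 0 with rfl | hx0
  · unfold k; rw [if_pos rfl]
  have hx : 0 < x := lt_of_le_of_ne (le_trans hy hxy) (Ne.symm hx0)
  rcases eq_or_ne y 0 with rfl | hy0
  · unfold k G
    rw [if_neg hx0, if_pos rfl, F_of_le ham ha.le]
    simp
  have hy' : 0 < y := lt_of_le_of_ne hy (Ne.symm hy0)
  have hX : (0:ℝ) < x ^ 2 + y ^ 2 := by positivity
  set mb := x * (x ^ 2 + 3 * y ^ 2) / (x ^ 2 + y ^ 2) with hmb
  have hmbx : x ≤ mb := by
    rw [hmb, le_div_iff₀ hX]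
    nlinarith
  have hα : (0:ℝ) ≤ (x + y) ^ 2 / (2 * (x ^ 2 + y ^ 2)) := by positivity
  have hβ : (0:ℝ) ≤ (x - y) ^ 2 / (2 * (x ^ 2 + y ^ 2)) := by positivity
  have hαβ : (x + y) ^ 2 / (2 * (x ^ 2 + y ^ 2)) + (x - y) ^ 2 / (2 * (x ^ 2 + y ^ 2)) = 1 := by
    rw [← add_div, div_eq_one_iff_eq (by positivity)]
    ring
  have hc := (F_convex ham).2 (Set.mem_univ (x + y)) (Set.mem_univ (x - y)) hα hβ hαβ
  have hpt : ((x + y) ^ 2 / (2 * (x ^ 2 + y ^ 2))) • (x + y)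
      + ((x - y) ^ 2 / (2 * (x ^ 2 + y ^ 2))) • (x - y) = mb := by
    rw [smul_eq_mul, smul_eq_mul, hmb]
    field_simp
    ring
  rw [hpt, smul_eq_mul, smul_eq_mul] at hc
  have h1 : F a m mb * (2 * (x ^ 2 + y ^ 2))
      ≤ (x + y) ^ 2 * F a m (x + y) + (x - y) ^ 2 * F a m (x - y) := by
    have := mul_le_mul_of_nonneg_right hc (by positivity : (0:ℝ) ≤ 2 * (x ^ 2 + y ^ 2))
    calc F a m mb * (2 * (x ^ 2 + y ^ 2))
        ≤ ((x + y) ^ 2 / (2 * (x ^ 2 + y ^ 2)) * F a m (x + y)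
          + (x - y) ^ 2 / (2 * (x ^ 2 + y ^ 2)) * F a m (x - y)) * (2 * (x ^ 2 + y ^ 2)) := this
      _ = (x + y) ^ 2 * F a m (x + y) + (x - y) ^ 2 * F a m (x - y) := by
          field_simp
  have h2 : F a m x * mb ≤ F a m mb * x := F_slope ham ha.le hx hmbx
  have h3 : F a m y * x ≤ F a m x * y := F_slope ham ha.le hy' hxy
  have hmbX : mb * (x ^ 2 + y ^ 2) = x * (x ^ 2 + 3 * y ^ 2) := by
    rw [hmb]; field_simp
  have hk : k a m x y * (x * y) = (x + y) ^ 2 * F a m (x + y) + (x - y) ^ 2 * F a m (x - y)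
      - 2 * (x ^ 2 + y ^ 2) * F a m x - 4 * (x * y) * F a m y := by
    unfold k G
    rw [if_neg hx0, if_neg hy0]
    field_simp
    ring
  have h2' : F a m x * (x * (x ^ 2 + 3 * y ^ 2)) ≤ F a m mb * x * (x ^ 2 + y ^ 2) := by
    calc F a m x * (x * (x ^ 2 + 3 * y ^ 2)) = F a m x * mb * (x ^ 2 + y ^ 2) := by
          rw [← hmbX]; ring
      _ ≤ F a m mb * x * (x ^ 2 + y ^ 2) := mul_le_mul_of_nonneg_right h2 hX.le
  have h1x := mul_le_mul_of_nonneg_right h1 hx.le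
  have h3x := mul_le_mul_of_nonneg_left h3 (by positivity : (0:ℝ) ≤ 4 * (x * y))
  have hxT : 0 ≤ x * (k a m x y * (x * y)) := by
    rw [hk]
    nlinarith [h1x, h2', h3x]
  have hT : 0 ≤ k a m x y * (x * y) := (mul_nonneg_iff_of_pos_left hx).mp hxT
  have := le_of_mul_le_mul_right (by linarith : 0 * (x * y) ≤ k a m x y * (x * y))
    (mul_pos hx hy')
  simpa using this

lemma k_zero_small {x y : ℝ} (hx : 0 ≤ x) (hy : 0 ≤ y) (hs : x + y ≤ a) : k a m x y = 0 := by
  have h1 : F a m (x + y) = 0 := F_of_le ham hs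
  have h2 : F a m (x - y) = 0 := F_of_le ham (by linarith)
  have h3 : F a m x = 0 := F_of_le ham (by linarith)
  have h4 : F a m y = 0 := F_of_le ham (by linarith)
  unfold k G
  rw [h1, h2, h3, h4]
  split_ifs <;> simp

lemma c_pos (ha : 0 < a) : 0 < c a m := by
  unfold c; nlinarith

lemma k_near_top (ha : 0 < a) {x y : ℝ} (hy : m ≤ y) (hxy : y ≤ x) :
    |k a m x y - 4 * c a m| ≤ m ^ 2 * c a m / y ^ 2 := by
  have hm : 0 < m := lt_trans ha ham
  have hy' : 0 < y := lt_of_lt_of_le hm hy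
  have hx : 0 < x := lt_of_lt_of_le hy' hxy
  have hcpos := c_pos ham ha
  rcases le_or_gt (m + y) x with hfar | hnear
  · rw [k_eq_far ham ha hy'.le hfar, F_of_ge ham hy]
    have : 4 * (y - (y - c a m)) - 4 * c a m = 0 := by ring
    rw [this, abs_zero]
    positivity
  · -- near-diagonal regime
    have hu : 0 ≤ x - y := by linarith
    have hum : x - y < m := by linarith
    have e1 : F a m (x + y) = x + y - c a m := F_of_ge ham (by linarith)
    have e3 : F a m x = x - c a m := F_of_ge ham (by linarith)
    have e4 : F a m y = y - c a m := F_of_ge ham hy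
    have he1 : x - y - c a m ≤ F a m (x - y) := F_ge_sub ham (x - y)
    have he2 : F a m (x - y) ≤ x - y :=
      le_trans (F_le_max ham (x - y)) (max_le (by linarith) hu)
    have hid : k a m x y - 4 * c a m
        = (x - y) ^ 2 * (c a m + F a m (x - y) - (x - y)) / (x * y) := by
      unfold k G
      rw [if_neg hx.ne', if_neg hy'.ne', e1, e3, e4]
      field_simp
      ring
    have hδ0 : 0 ≤ c a m + F a m (x - y) - (x - y) := by linarith
    have hδc : c a m + F a m (x - y) - (x - y) ≤ c a m := by linarith
    rw [hid, abs_of_nonneg (div_nonneg (mul_nonneg (sq_nonneg _) hδ0)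
      (mul_pos hx hy').le)]
    apply div_le_div₀ (by positivity)
      (mul_le_mul (by nlinarith : (x - y) ^ 2 ≤ m ^ 2) hδc hδ0 (by positivity))
      (by positivity) (by nlinarith)

end kG
section ext

variable (a m : ℝ)

/-- Test function on the compactified half-line. -/
def phi : ℝ≥0∞ → ℝ := fun p => if p = ⊤ then 1 else F a m p.toReal / p.toReal

/-- Extended kernel on the ordered region. -/
def Kt : ℝ≥0∞ → ℝ≥0∞ → ℝ := fun x y =>
  if x = ⊤ then (if y = ⊤ then 4 * c a m else 4 * (y.toReal - F a m y.toReal))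
  else k a m x.toReal y.toReal

/-- Extended kernel `K₁`. -/
def K1 : ℝ≥0∞ → ℝ≥0∞ → ℝ := fun p₁ p₂ => Kt a m (p₁ ⊔ p₂) (p₁ ⊓ p₂)

/-- Extended diagonal kernel `K₂`. -/
def K2 : ℝ≥0∞ → ℝ := fun p =>
  if p = ⊤ then 4 * c a m else 4 * (F a m (2 * p.toReal) - 2 * F a m p.toReal)

variable {a m}
variable (ham : a < m) (ha : 0 < a)
include ham ha

lemma hm_pos : 0 < m := lt_trans ha ham

lemma F_le_self {t : ℝ} (ht : 0 ≤ t) : F a m t ≤ t :=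
  le_trans (F_le_max ham t) (max_le (by linarith) ht)

lemma k_at_y0 (x : ℝ) : k a m x 0 = 0 := by
  unfold k G
  rcases eq_or_ne x 0 with rfl | hx0
  · rw [if_pos rfl]
  · rw [if_neg hx0, if_pos rfl, F_of_le ham ha.le, add_zero, sub_zero]
    ring

lemma F2_ge (ha' : True) {t : ℝ} (ht : 0 ≤ t) : 2 * F a m t ≤ F a m (2 * t) := by
  rcases eq_or_lt_of_le ht with rfl | ht'
  · simp [F_of_le ham ha.le]
  · have := F_slope ham ha.le ht' (by linarith : t ≤ 2 * t)
    nlinarith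

lemma K2_nonneg (p : ℝ≥0∞) : 0 ≤ K2 a m p := by
  unfold K2
  split_ifs
  · have := c_pos ham ha; positivity
  · have := F2_ge ham ha trivial (ENNReal.toReal_nonneg (a := p))
    linarith

lemma Kt_nonneg {x y : ℝ≥0∞} (hxy : y ≤ x) : 0 ≤ Kt a m x y := by
  unfold Kt
  split_ifs with hx hy
  · have := c_pos ham ha; positivity
  · have h1 : F a m y.toReal ≤ y.toReal := F_le_self ham ha ENNReal.toReal_nonneg
    linarith
  · exact k_nonneg ham ha ENNReal.toReal_nonneg (ENNReal.toReal_mono hx hxy)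

lemma K1_nonneg (p₁ p₂ : ℝ≥0∞) : 0 ≤ K1 a m p₁ p₂ :=
  Kt_nonneg ham ha inf_le_sup

/-- The polynomial identity defining `k`. -/
lemma k_mul {x y : ℝ} (hx0 : x ≠ 0) (hy0 : y ≠ 0) :
    k a m x y * (x * y) = (x + y) ^ 2 * F a m (x + y) + (x - y) ^ 2 * F a m (x - y)
      - 2 * (x ^ 2 + y ^ 2) * F a m x - 4 * (x * y) * F a m y := by
  unfold k G
  rw [if_neg hx0, if_neg hy0]
  field_simp
  ring

lemma phi_ofReal {t : ℝ} (ht : 0 ≤ t) : phi a m (ENNReal.ofReal t) = F a m t / t := by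
  unfold phi
  rw [if_neg ENNReal.ofReal_ne_top, ENNReal.toReal_ofReal ht]

lemma H1_match {x y : ℝ} (hy : 0 < y) (hxy : y < x) :
    H1 (restr (phi a m)) x y = k a m x y * (x * y) := by
  have hx : 0 < x := lt_trans hy hxy
  unfold H1 restr
  rw [phi_ofReal ham ha (by linarith : (0:ℝ) ≤ x + y), phi_ofReal ham ha hx.le,
    phi_ofReal ham ha hy.le, phi_ofReal ham ha (by linarith : (0:ℝ) ≤ x - y),
    k_mul ham ha hx.ne' hy.ne']
  have h1 : x + y ≠ 0 := by positivity
  have h2 : x - y ≠ 0 := by intro h; linarith [sub_eq_zero.mp h]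
  field_simp
  ring

lemma K1_match {x y : ℝ} (hy : 0 < y) (hxy : y < x) :
    K1 a m (ENNReal.ofReal x) (ENNReal.ofReal y) = H1 (restr (phi a m)) x y / (x * y) := by
  have hx : 0 < x := lt_trans hy hxy
  have hle : ENNReal.ofReal y ≤ ENNReal.ofReal x := ENNReal.ofReal_le_ofReal hxy.le
  unfold K1
  rw [sup_eq_left.2 hle, inf_eq_right.2 hle]
  unfold Kt
  rw [if_neg ENNReal.ofReal_ne_top, ENNReal.toReal_ofReal hx.le,
    ENNReal.toReal_ofReal hy.le, H1_match ham ha hy hxy,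
    mul_div_assoc, div_self (by positivity : x * y ≠ 0), mul_one]

lemma H2_match {p : ℝ} (hp : 0 < p) :
    H2 (restr (phi a m)) p p = 4 * p ^ 2 * (F a m (2 * p) - 2 * F a m p) := by
  unfold H2 restr
  rw [show p + p = 2 * p from by ring, phi_ofReal ham ha (by linarith : (0:ℝ) ≤ 2 * p),
    phi_ofReal ham ha hp.le]
  field_simp
  ring

lemma K2_match {p : ℝ} (hp : 0 < p) :
    K2 a m (ENNReal.ofReal p) = H2 (restr (phi a m)) p p / (p * p) := by
  unfold K2
  rw [if_neg ENNReal.ofReal_ne_top, ENNReal.toReal_ofReal hp.le, H2_match ham ha hp]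
  field_simp

end ext

section cont
variable {a m : ℝ} (ham : a < m) (ha : 0 < a)
include ham ha

lemma k_contWithin {x y : ℝ} (hx : 0 < x) (hy : 0 ≤ y) :
    ContinuousWithinAt (Function.uncurry (k a m)) {p : ℝ × ℝ | 0 ≤ p.2} (x, y) := by
  have hFc := F_continuous ham
  have c1 : Continuous (fun p : ℝ × ℝ => F a m (p.1 + p.2)) :=
    hFc.comp (continuous_fst.add continuous_snd)
  have c2 : Continuous (fun p : ℝ × ℝ => F a m (p.1 - p.2)) :=
    hFc.comp (continuous_fst.sub continuous_snd)
  have c3 : Continuous (fun p : ℝ × ℝ => F a m p.1) := hFc.comp continuous_fst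
  have c4 : Continuous (fun p : ℝ × ℝ => F a m p.2) := hFc.comp continuous_snd
  rcases hy.eq_or_lt with h0 | hy'
  · -- y = 0
    subst h0
    have hval : Function.uncurry (k a m) (x, 0) = 0 := k_at_y0 ham ha x
    have hopen : {p : ℝ × ℝ | 0 < p.1} ∈ 𝓝[{p : ℝ × ℝ | 0 ≤ p.2}] (x, 0) :=
      mem_nhdsWithin_of_mem_nhds ((isOpen_lt continuous_const continuous_fst).mem_nhds hx)
    have hB : Tendsto (fun p : ℝ × ℝ =>
        2 * (F a m (p.1 + p.2) - F a m (p.1 - p.2)) - 4 * F a m p.2)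
        (𝓝[{p : ℝ × ℝ | 0 ≤ p.2}] (x, 0)) (𝓝 0) := by
      have hc : Continuous (fun p : ℝ × ℝ =>
          2 * (F a m (p.1 + p.2) - F a m (p.1 - p.2)) - 4 * F a m p.2) :=
        (continuous_const.mul (c1.sub c2)).sub (continuous_const.mul c4)
      have := (hc.tendsto (x, 0)).mono_left
        (nhdsWithin_le_nhds (s := {p : ℝ × ℝ | 0 ≤ p.2}))
      simpa [F_of_le ham ha.le] using this
    have hg : Tendsto (fun p : ℝ × ℝ => (p.1 ^ 2 + p.2 ^ 2) / p.1 * (p.2 / (m - a)))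
        (𝓝[{p : ℝ × ℝ | 0 ≤ p.2}] (x, 0)) (𝓝 0) := by
      have hc : ContinuousAt (fun p : ℝ × ℝ => (p.1 ^ 2 + p.2 ^ 2) / p.1 * (p.2 / (m - a)))
          (x, 0) :=
        ((((continuous_fst.pow 2).add (continuous_snd.pow 2)).continuousAt).div
          continuous_fst.continuousAt hx.ne').mul
          ((continuous_snd.div_const _).continuousAt)
      have := hc.tendsto.mono_left (nhdsWithin_le_nhds (s := {p : ℝ × ℝ | 0 ≤ p.2}))
      simpa using this
    have hA : Tendsto (fun p : ℝ × ℝ => (p.1 ^ 2 + p.2 ^ 2) / p.1 * G a m p.1 p.2)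
        (𝓝[{p : ℝ × ℝ | 0 ≤ p.2}] (x, 0)) (𝓝 0) := by
      apply squeeze_zero_norm' _ hg
      filter_upwards [hopen, self_mem_nhdsWithin] with p hp1 hp2
      have hp1' : (0:ℝ) < p.1 := hp1
      have hp2' : (0:ℝ) ≤ p.2 := hp2
      rw [norm_mul, Real.norm_eq_abs, Real.norm_eq_abs,
        abs_of_pos (by positivity : (0:ℝ) < (p.1 ^ 2 + p.2 ^ 2) / p.1)]
      apply mul_le_mul_of_nonneg_left (G_abs ham p.1 hp2') (by positivity)
    have hsum : Tendsto (fun p : ℝ × ℝ => (p.1 ^ 2 + p.2 ^ 2) / p.1 * G a m p.1 p.2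
        + (2 * (F a m (p.1 + p.2) - F a m (p.1 - p.2)) - 4 * F a m p.2))
        (𝓝[{p : ℝ × ℝ | 0 ≤ p.2}] (x, 0)) (𝓝 0) := by
      simpa using hA.add hB
    have hev : (fun p : ℝ × ℝ => (p.1 ^ 2 + p.2 ^ 2) / p.1 * G a m p.1 p.2
        + (2 * (F a m (p.1 + p.2) - F a m (p.1 - p.2)) - 4 * F a m p.2))
        =ᶠ[𝓝[{p : ℝ × ℝ | 0 ≤ p.2}] (x, 0)] Function.uncurry (k a m) := by
      filter_upwards [hopen] with p hp1
      have hp1' : (0:ℝ) < p.1 := hp1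
      show _ = k a m p.1 p.2
      unfold k
      rw [if_neg hp1'.ne']
      ring
    have := hsum.congr' hev
    rw [ContinuousWithinAt, hval]
    exact this
  · -- 0 < y
    apply ContinuousAt.continuousWithinAt
    have hopen : IsOpen {p : ℝ × ℝ | 0 < p.1 ∧ 0 < p.2} :=
      (isOpen_lt continuous_const continuous_fst).inter
        (isOpen_lt continuous_const continuous_snd)
    have hAt : ContinuousAt (fun p : ℝ × ℝ => (p.1 ^ 2 + p.2 ^ 2) / p.1 *
        ((F a m (p.1 + p.2) + F a m (p.1 - p.2) - 2 * F a m p.1) / p.2)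
        + 2 * (F a m (p.1 + p.2) - F a m (p.1 - p.2)) - 4 * F a m p.2) (x, y) := by
      apply ContinuousAt.sub
      apply ContinuousAt.add
      · exact ((((continuous_fst.pow 2).add (continuous_snd.pow 2)).continuousAt).div
          continuous_fst.continuousAt hx.ne').mul
          ((((c1.add c2).sub (continuous_const.mul c3)).continuousAt).div
            continuous_snd.continuousAt hy'.ne')
      · exact (continuous_const.mul (c1.sub c2)).continuousAt
      · exact (continuous_const.mul c4).continuousAt
    apply hAt.congr
    filter_upwards [hopen.mem_nhds ⟨hx, hy'⟩] with p hp
    symm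
    show k a m p.1 p.2 = _
    unfold k G
    rw [if_neg hp.1.ne', if_neg hp.2.ne']

lemma Kt_contOn :
    ContinuousOn (Function.uncurry (Kt a m))  {q : ℝ≥0∞ × ℝ≥0∞ | q.2 ≤ q.1} := by
  set T : Set (ℝ≥0∞ × ℝ≥0∞) := {q | q.2 ≤ q.1} with hT
  have hm : 0 < m := hm_pos ham ha
  have hcpos : 0 < c a m := c_pos ham ha
  rintro ⟨x, y⟩ hq
  simp only [hT, Set.mem_setOf_eq] at hq
  by_cases hx : x = ⊤
  · subst hx
    by_cases hy : y = (⊤ : ℝ≥0∞)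
    · subst hy
      -- the corner (∞,∞)
      have hval : Function.uncurry (Kt a m) ((⊤ : ℝ≥0∞), (⊤ : ℝ≥0∞)) = 4 * c a m := by
        simp [Kt]
      have hB : Tendsto (fun q : ℝ≥0∞ × ℝ≥0∞ => m ^ 2 * c a m * ((q.2)⁻¹).toReal ^ 2)
          (𝓝[T] ((⊤ : ℝ≥0∞), (⊤ : ℝ≥0∞))) (𝓝 0) := by
        have h2 : Tendsto (fun z : ℝ≥0∞ => (z⁻¹).toReal) (𝓝 ⊤) (𝓝 ((⊤:ℝ≥0∞)⁻¹).toReal) :=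
          (ENNReal.tendsto_toReal (by simp)).comp (continuous_inv.tendsto (⊤:ℝ≥0∞))
        have h1 : Tendsto (fun z : ℝ≥0∞ => m ^ 2 * c a m * ((z⁻¹).toReal) ^ 2) (𝓝 (⊤:ℝ≥0∞))
            (𝓝 (m ^ 2 * c a m * (((⊤:ℝ≥0∞)⁻¹).toReal) ^ 2)) :=
          tendsto_const_nhds.mul (h2.pow 2)
        have h4 : Tendsto (fun q : ℝ≥0∞ × ℝ≥0∞ => q.2)
            (𝓝[T] ((⊤:ℝ≥0∞), (⊤:ℝ≥0∞))) (𝓝 (⊤:ℝ≥0∞)) :=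
          (continuous_snd.tendsto ((⊤:ℝ≥0∞), (⊤:ℝ≥0∞))).mono_left nhdsWithin_le_nhds
        have h3 := h1.comp h4
        simpa [Function.comp_def] using h3
      have hbound : ∀ᶠ q in 𝓝[T] ((⊤ : ℝ≥0∞), (⊤ : ℝ≥0∞)),
          ‖Function.uncurry (Kt a m) q - 4 * c a m‖ ≤ m ^ 2 * c a m * ((q.2)⁻¹).toReal ^ 2 := by
        have h1 : {q : ℝ≥0∞ × ℝ≥0∞ | ENNReal.ofReal m < q.2} ∈
            𝓝[T] ((⊤ : ℝ≥0∞), (⊤ : ℝ≥0∞)) :=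
          mem_nhdsWithin_of_mem_nhds ((isOpen_lt continuous_const continuous_snd).mem_nhds
            (by simp [ENNReal.ofReal_lt_top]))
        filter_upwards [h1, self_mem_nhdsWithin] with q hq1 hq2
        by_cases hyt : q.2 = ⊤
        · have hxt : q.1 = ⊤ := top_le_iff.mp (hyt ▸ hq2)
          show ‖Kt a m q.1 q.2 - 4 * c a m‖ ≤ _
          rw [hxt, hyt]
          simp [Kt]
        · have hty : m < (q.2).toReal :=
            (ENNReal.ofReal_lt_iff_lt_toReal hm.le hyt).mp hq1
          have htynn : (0:ℝ) < (q.2).toReal := lt_trans hm hty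
          have hbnd : m ^ 2 * c a m * ((q.2)⁻¹).toReal ^ 2
              = m ^ 2 * c a m / (q.2).toReal ^ 2 := by
            rw [ENNReal.toReal_inv]
            field_simp
          rw [hbnd]
          by_cases hxt : q.1 = ⊤
          · show ‖Kt a m q.1 q.2 - 4 * c a m‖ ≤ _
            rw [hxt]
            unfold Kt
            rw [if_pos rfl, if_neg hyt, F_of_ge ham (by linarith : m ≤ (q.2).toReal)]
            have : 4 * ((q.2).toReal - ((q.2).toReal - c a m)) - 4 * c a m = 0 := by ring
            rw [this, norm_zero]
            positivity
          · show ‖Kt a m q.1 q.2 - 4 * c a m‖ ≤ _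
            unfold Kt
            rw [if_neg hxt]
            exact k_near_top ham ha (by linarith : m ≤ (q.2).toReal)
              (ENNReal.toReal_mono hxt hq2)
      have h0 := squeeze_zero_norm' hbound hB
      have : Tendsto (Function.uncurry (Kt a m)) (𝓝[T] ((⊤ : ℝ≥0∞), (⊤ : ℝ≥0∞)))
          (𝓝 (4 * c a m)) := by
        have := h0.add ((tendsto_const_nhds :
          Tendsto _ (𝓝[T] ((⊤:ℝ≥0∞), (⊤:ℝ≥0∞))) (𝓝 (4 * c a m))))
        simpa using this
      rw [ContinuousWithinAt, hval]
      exact this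
    · -- (∞, y) with y finite
      set y0 := y.toReal with hy0
      have hval : Function.uncurry (Kt a m) ((⊤ : ℝ≥0∞), y) = 4 * (y0 - F a m y0) := by
        show Kt a m ⊤ y = _
        unfold Kt
        rw [if_pos rfl, if_neg hy]
      have hcont : Tendsto (fun q : ℝ≥0∞ × ℝ≥0∞ => 4 * ((q.2).toReal - F a m (q.2).toReal))
          (𝓝[T] ((⊤ : ℝ≥0∞), y)) (𝓝 (4 * (y0 - F a m y0))) := by
        have h2 : Tendsto (fun q : ℝ≥0∞ × ℝ≥0∞ => (q.2).toReal)
            (𝓝[T] ((⊤ : ℝ≥0∞), y)) (𝓝 y0) :=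
          (ENNReal.tendsto_toReal hy).comp
            ((continuous_snd.tendsto _).mono_left nhdsWithin_le_nhds)
        have h3 : Continuous (fun s : ℝ => 4 * (s - F a m s)) :=
          continuous_const.mul (continuous_id.sub (F_continuous ham))
        exact (h3.tendsto y0).comp h2
      have hev : Function.uncurry (Kt a m) =ᶠ[𝓝[T] ((⊤ : ℝ≥0∞), y)]
          (fun q : ℝ≥0∞ × ℝ≥0∞ => 4 * ((q.2).toReal - F a m (q.2).toReal)) := by
        have hmem1 : {q : ℝ≥0∞ × ℝ≥0∞ | ENNReal.ofReal (m + y0 + 1) < q.1} ∈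
            𝓝[T] ((⊤ : ℝ≥0∞), y) :=
          mem_nhdsWithin_of_mem_nhds ((isOpen_lt continuous_const continuous_fst).mem_nhds
            (by simp [ENNReal.ofReal_lt_top]))
        have hmem2 : {q : ℝ≥0∞ × ℝ≥0∞ | q.2 < ENNReal.ofReal (y0 + 1)} ∈
            𝓝[T] ((⊤ : ℝ≥0∞), y) :=
          mem_nhdsWithin_of_mem_nhds ((isOpen_lt continuous_snd continuous_const).mem_nhds
            ((ENNReal.lt_ofReal_iff_toReal_lt hy).mpr (by linarith)))
        filter_upwards [hmem1, hmem2] with q hq1 hq2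
        have hq2t : q.2 ≠ ⊤ := (lt_of_lt_of_le hq2 le_top).ne
        by_cases hxt : q.1 = ⊤
        · show Kt a m q.1 q.2 = _
          rw [hxt]
          unfold Kt
          rw [if_pos rfl, if_neg hq2t]
        · have hx1 : m + y0 + 1 < (q.1).toReal :=
            (ENNReal.ofReal_lt_iff_lt_toReal (by positivity) hxt).mp hq1
          have hy2 : (q.2).toReal < y0 + 1 := ENNReal.toReal_lt_of_lt_ofReal hq2
          show Kt a m q.1 q.2 = _
          unfold Kt
          rw [if_neg hxt]
          exact k_eq_far ham ha ENNReal.toReal_nonneg (by linarith)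
      have := Filter.Tendsto.congr' hev.symm hcont
      rw [ContinuousWithinAt, hval]
      exact this
  · -- x finite
    have hyt : y ≠ ⊤ := fun h => hx (top_le_iff.mp (h ▸ hq))
    by_cases hx0 : x = 0
    · -- the corner (0,0)
      have hy0 : y = 0 := le_zero_iff.mp (hx0 ▸ hq)
      subst hx0; subst hy0
      have hval : Function.uncurry (Kt a m) ((0 : ℝ≥0∞), (0 : ℝ≥0∞)) = 0 := by
        unfold Function.uncurry Kt
        rw [if_neg (by simp : (0:ℝ≥0∞) ≠ ⊤)]
        simpa using k_at_y0 ham ha 0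
      have hev : Function.uncurry (Kt a m) =ᶠ[𝓝[T] ((0 : ℝ≥0∞), (0 : ℝ≥0∞))]
          (fun _ => (0:ℝ)) := by
        have hmem1 : {q : ℝ≥0∞ × ℝ≥0∞ | q.1 < ENNReal.ofReal (a / 2)} ∈
            𝓝[T] ((0 : ℝ≥0∞), (0 : ℝ≥0∞)) :=
          mem_nhdsWithin_of_mem_nhds ((isOpen_lt continuous_fst continuous_const).mem_nhds
            (by simp [ENNReal.ofReal_pos.mpr (by linarith : (0:ℝ) < a / 2)]))
        have hmem2 : {q : ℝ≥0∞ × ℝ≥0∞ | q.2 < ENNReal.ofReal (a / 2)} ∈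
            𝓝[T] ((0 : ℝ≥0∞), (0 : ℝ≥0∞)) :=
          mem_nhdsWithin_of_mem_nhds ((isOpen_lt continuous_snd continuous_const).mem_nhds
            (by simp [ENNReal.ofReal_pos.mpr (by linarith : (0:ℝ) < a / 2)]))
        filter_upwards [hmem1, hmem2] with q hq1 hq2
        have hq1t : q.1 ≠ ⊤ := (lt_of_lt_of_le hq1 le_top).ne
        have h1 : (q.1).toReal < a / 2 := ENNReal.toReal_lt_of_lt_ofReal hq1
        have h2 : (q.2).toReal < a / 2 := ENNReal.toReal_lt_of_lt_ofReal hq2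
        show Kt a m q.1 q.2 = 0
        unfold Kt
        rw [if_neg hq1t]
        exact k_zero_small ham ENNReal.toReal_nonneg ENNReal.toReal_nonneg (by linarith)
      have := Filter.Tendsto.congr' hev.symm ((tendsto_const_nhds :
        Tendsto _ (𝓝[T] ((0:ℝ≥0∞), (0:ℝ≥0∞))) (𝓝 (0:ℝ))))
      rw [ContinuousWithinAt, hval]
      exact this
    · -- interior-type point : x finite nonzero
      have hx0' : 0 < x.toReal := ENNReal.toReal_pos hx0 hx
      have h1 : ContinuousWithinAt (Function.uncurry (k a m)) {p : ℝ × ℝ | 0 ≤ p.2}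
          (x.toReal, y.toReal) := k_contWithin ham ha hx0' ENNReal.toReal_nonneg
      have htr : ContinuousWithinAt
          (fun q : ℝ≥0∞ × ℝ≥0∞ => ((q.1).toReal, (q.2).toReal)) T (x, y) :=
        ContinuousAt.continuousWithinAt (ContinuousAt.prodMk
          ((ENNReal.tendsto_toReal hx).comp (continuous_fst.tendsto (x, y)))
          ((ENNReal.tendsto_toReal hyt).comp (continuous_snd.tendsto (x, y))))
      have hcomp := ContinuousWithinAt.comp (g := Function.uncurry (k a m))
        (f := fun q : ℝ≥0∞ × ℝ≥0∞ => ((q.1).toReal, (q.2).toReal))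
        (t := {p : ℝ × ℝ | 0 ≤ p.2}) (s := T) (x := (x, y)) h1 htr
        (fun q _ => by exact ENNReal.toReal_nonneg)
      have hev : (Function.uncurry (k a m) ∘
          fun q : ℝ≥0∞ × ℝ≥0∞ => ((q.1).toReal, (q.2).toReal)) =ᶠ[𝓝[T] (x, y)]
          Function.uncurry (Kt a m)  := by
        have hop : IsOpen {q : ℝ≥0∞ × ℝ≥0∞ | ¬ q.1 = ⊤} :=
          (isClosed_singleton.preimage continuous_fst).isOpen_compl
        filter_upwards [mem_nhdsWithin_of_mem_nhds (hop.mem_nhds hx)] with q hq1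
        show k a m (q.1).toReal (q.2).toReal = Kt a m q.1 q.2
        unfold Kt
        rw [if_neg hq1]
      exact hcomp.congr_of_eventuallyEq hev.symm (by show Kt a m x y = _; unfold Kt; rw [if_neg hx]; rfl)

lemma K1_continuous : Continuous (Function.uncurry (K1 a m)) := by
  have h : Function.uncurry (K1 a m) = (Function.uncurry (Kt a m)) ∘
      (fun q : ℝ≥0∞ × ℝ≥0∞ => (q.1 ⊔ q.2, q.1 ⊓ q.2)) := rfl
  rw [h]
  exact (Kt_contOn ham ha).comp_continuous
    ((continuous_fst.max continuous_snd).prodMk (continuous_fst.min continuous_snd))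
    (fun q => by simp only [Set.mem_setOf_eq]; exact inf_le_sup)

lemma K2_continuous : Continuous (K2 a m) := by
  rw [continuous_iff_continuousAt]
  intro p
  by_cases hp : p = ⊤
  · subst hp
    have hev : (fun _ : ℝ≥0∞ => 4 * c a m) =ᶠ[𝓝 (⊤:ℝ≥0∞)] K2 a m := by
      filter_upwards [(isOpen_lt continuous_const continuous_id).mem_nhds
        (by simp [ENNReal.ofReal_lt_top] :
          (⊤:ℝ≥0∞) ∈ {z : ℝ≥0∞ | ENNReal.ofReal m < z})] with z hz
      by_cases hzt : z = ⊤
      · subst hzt; unfold K2; rw [if_pos rfl]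
      · have hmz : m < z.toReal :=
          (ENNReal.ofReal_lt_iff_lt_toReal (hm_pos ham ha).le hzt).mp hz
        unfold K2
        rw [if_neg hzt, F_of_ge ham (by linarith : m ≤ z.toReal),
          F_of_ge ham (by linarith : m ≤ 2 * z.toReal)]
        ring
    exact continuousAt_const.congr hev
  · have hc : ContinuousAt (fun z : ℝ≥0∞ =>
        4 * (F a m (2 * z.toReal) - 2 * F a m z.toReal)) p := by
      have hFc := F_continuous ham
      have h2 : Continuous (fun t : ℝ => 4 * (F a m (2 * t) - 2 * F a m t)) :=
        continuous_const.mul ((hFc.comp (continuous_const.mul continuous_id)).sub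
          (continuous_const.mul hFc))
      exact (h2.tendsto p.toReal).comp (ENNReal.tendsto_toReal hp)
    apply hc.congr
    filter_upwards [(isClosed_singleton (x := (⊤:ℝ≥0∞))).isOpen_compl.mem_nhds hp] with z hz
    unfold K2
    rw [if_neg (by simpa using hz)]

lemma phi_continuous : Continuous (phi a m) := by
  rw [continuous_iff_continuousAt]
  intro p
  by_cases hp : p = ⊤
  · subst hp
    have hg : ContinuousAt (fun z : ℝ≥0∞ => 1 - c a m * (z⁻¹).toReal) ⊤ := by
      have h2 : Tendsto (fun z : ℝ≥0∞ => (z⁻¹).toReal) (𝓝 ⊤) (𝓝 ((⊤:ℝ≥0∞)⁻¹).toReal) :=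
        (ENNReal.tendsto_toReal (by simp)).comp (continuous_inv.tendsto (⊤:ℝ≥0∞))
      exact tendsto_const_nhds.sub (tendsto_const_nhds.mul h2)
    have hev : (fun z : ℝ≥0∞ => 1 - c a m * (z⁻¹).toReal) =ᶠ[𝓝 (⊤:ℝ≥0∞)] phi a m := by
      filter_upwards [(isOpen_lt continuous_const continuous_id).mem_nhds
        (by simp [ENNReal.ofReal_lt_top] :
          (⊤:ℝ≥0∞) ∈ {z : ℝ≥0∞ | ENNReal.ofReal m < z})] with z hz
      by_cases hzt : z = ⊤
      · subst hzt; unfold phi; rw [if_pos rfl]; simp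
      · have hmz : m < z.toReal :=
          (ENNReal.ofReal_lt_iff_lt_toReal (hm_pos ham ha).le hzt).mp hz
        have hz0 : (0:ℝ) < z.toReal := lt_trans (hm_pos ham ha) hmz
        unfold phi
        rw [if_neg hzt, F_of_ge ham (by linarith : m ≤ z.toReal), ENNReal.toReal_inv]
        field_simp
    exact hg.congr hev
  · by_cases hp0 : p = 0
    · subst hp0
      have hev : (fun _ : ℝ≥0∞ => (0:ℝ)) =ᶠ[𝓝 (0:ℝ≥0∞)] phi a m := by
        filter_upwards [(isOpen_lt continuous_id continuous_const).mem_nhds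
          (by simpa using ENNReal.ofReal_pos.mpr ha :
            (0:ℝ≥0∞) ∈ {z : ℝ≥0∞ | z < ENNReal.ofReal a})] with z hz
        have hzt : z ≠ ⊤ := (lt_of_lt_of_le hz le_top).ne
        have h1 : z.toReal < a := ENNReal.toReal_lt_of_lt_ofReal hz
        unfold phi
        rw [if_neg hzt, F_of_le ham h1.le, zero_div]
      exact continuousAt_const.congr hev
    · have hpt : 0 < p.toReal := ENNReal.toReal_pos hp0 hp
      have hc : ContinuousAt (fun z : ℝ≥0∞ => F a m z.toReal / z.toReal) p :=
        (((F_continuous ham).continuousAt).comp_of_eq (ENNReal.tendsto_toReal hp) rfl |>.div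
          ((ENNReal.tendsto_toReal hp)) hpt.ne')
      apply hc.congr
      filter_upwards [(isClosed_singleton (x := (⊤:ℝ≥0∞))).isOpen_compl.mem_nhds hp] with z hz
      unfold phi
      rw [if_neg (by simpa using hz)]

end cont

section bounds
variable {a m : ℝ} (ham : a < m) (ha : 0 < a)
include ham ha

lemma phi_nonneg (p : ℝ≥0∞) : 0 ≤ phi a m p := by
  unfold phi
  split_ifs
  · norm_num
  · exact div_nonneg (F_nonneg ham _) ENNReal.toReal_nonneg

lemma phi_le_one (p : ℝ≥0∞) : phi a m p ≤ 1 := by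
  unfold phi
  split_ifs
  · exact le_refl 1
  · rcases eq_or_lt_of_le (ENNReal.toReal_nonneg (a := p)) with h0 | h0
    · rw [← h0, F_of_le ham ha.le]
      norm_num
    · rw [div_le_one h0]
      exact F_le_self ham ha h0.le

lemma phi_zero_of_lt {p : ℝ≥0∞} (h : p < ENNReal.ofReal a) : phi a m p = 0 := by
  have hpt : p ≠ ⊤ := (lt_of_lt_of_le h le_top).ne
  have h1 : p.toReal < a := ENNReal.toReal_lt_of_lt_ofReal h
  unfold phi
  rw [if_neg hpt, F_of_le ham h1.le, zero_div]

end bounds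

/-- Monotonicity of the `phi`-integral along a weak solution. -/
lemma phi_integral_mono {a m : ℝ} (ham : a < m) (ha : 0 < a)
    {ν₀ : Measure ℝ≥0∞} {ν : ℝ → Measure ℝ≥0∞} (hsol : IsWeakSolution ν ν₀)
    {t : ℝ} (ht : 0 ≤ t) :
    ∫ p, phi a m p ∂(ν 0) ≤ ∫ p, phi a m p ∂(ν t) := by
  set φC : C(ℝ≥0∞, ℝ) := ⟨phi a m, phi_continuous ham ha⟩ with hφC
  have hweak := hsol.eqn (fun _ => φC) (fun _ => (0 : C(ℝ≥0∞, ℝ)))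
    (fun s => hasDerivAt_const s φC) continuous_const
  have himp := hweak t ht (fun _ => K1 a m) (fun _ => K2 a m)
    (fun s _ => ⟨K1_continuous ham ha, fun x y hy hxy => K1_match ham ha hy hxy⟩)
    (fun s _ => ⟨K2_continuous ham ha, fun p hp => K2_match ham ha hp⟩)
  have hRHS : 0 ≤ ∫ s in (0:ℝ)..t,
      ((∫ p, ((0 : C(ℝ≥0∞, ℝ)) : ℝ≥0∞ → ℝ) p ∂(ν s)) + collInt (ν s) (K1 a m) (K2 a m)) := by
    apply intervalIntegral.integral_nonneg ht
    intro u _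
    have h0 : (∫ p, ((0 : C(ℝ≥0∞, ℝ)) : ℝ≥0∞ → ℝ) p ∂(ν u)) = 0 := by
      simp
    rw [h0, zero_add]
    unfold collInt
    have h1 : 0 ≤ ∫ p₁, (∫ p₂, (if p₂ < p₁ then K1 a m p₁ p₂ else 0) ∂(ν u)) ∂(ν u) := by
      apply integral_nonneg
      intro p₁
      apply integral_nonneg
      intro p₂
      dsimp only
      split_ifs with h
      · exact K1_nonneg ham ha _ _
      · exact le_rfl
    have h2 : 0 ≤ ∫ p₁, (∫ p₂, (if p₁ = p₂ then K2 a m p₁ else 0) ∂(ν u)) ∂(ν u) := by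
      apply integral_nonneg
      intro p₁
      apply integral_nonneg
      intro p₂
      dsimp only
      split_ifs with h
      · exact K2_nonneg ham ha _
      · exact le_rfl
    linarith
  have : (∫ p, φC p ∂(ν t)) - (∫ p, φC p ∂(ν 0)) ≥ 0 := by
    rw [himp]; exact hRHS
  have hcoe : ∀ μ : Measure ℝ≥0∞, (∫ p, φC p ∂μ) = ∫ p, phi a m p ∂μ := fun μ => rfl
  rw [hcoe, hcoe] at this
  linarith


end Stmt10

/-- for every weak solution, every `ρ ∈ (0,1)` and `R ∈ (0,∞)`,
`ν(t)([Rρ,∞]) ≥ (1-ρ)·ν₀([R,∞])` for all `t ≥ 0`. -/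
theorem statement10 (ν₀ : Measure ℝ≥0∞) [IsFiniteMeasure ν₀]
    (ν : ℝ → Measure ℝ≥0∞) (hsol : IsWeakSolution ν ν₀)
    (ρ : ℝ) (hρ₀ : 0 < ρ) (hρ₁ : ρ < 1) (R : ℝ) (hR : 0 < R) :
    ∀ t : ℝ, 0 ≤ t →
      ENNReal.ofReal (1 - ρ) * ν₀ (Set.Ici (ENNReal.ofReal R))
        ≤ ν t (Set.Ici (ENNReal.ofReal (R * ρ))) := by
  intro t ht
  haveI := hsol.finite t
  haveI := hsol.finite 0
  have key : ∀ ρ'' : ℝ, ρ < ρ'' → ρ'' < 1 →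
      ENNReal.ofReal (1 - ρ'') * ν₀ (Set.Ici (ENNReal.ofReal R))
        ≤ ν t (Set.Ici (ENNReal.ofReal (R * ρ))) := by
    intro ρ'' hρ'' hρ''1
    set a := R * ρ with hadef
    set m := R * ρ'' with hmdef
    have ham : a < m := by rw [hadef, hmdef]; nlinarith
    have ha : 0 < a := by rw [hadef]; positivity
    -- integrability of `phi`
    have hφt : Integrable (fun p => Stmt10.phi a m p) (ν t) :=
      (BoundedContinuousFunction.mkOfCompact
        (⟨Stmt10.phi a m, Stmt10.phi_continuous ham ha⟩ : C(ℝ≥0∞, ℝ))).integrable (ν t)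
    have hφ0 : Integrable (fun p => Stmt10.phi a m p) (ν 0) :=
      (BoundedContinuousFunction.mkOfCompact
        (⟨Stmt10.phi a m, Stmt10.phi_continuous ham ha⟩ : C(ℝ≥0∞, ℝ))).integrable (ν 0)
    -- upper bound at time t
    have hup : ∫ p, Stmt10.phi a m p ∂(ν t) ≤ (ν t (Set.Ici (ENNReal.ofReal a))).toReal := by
      have hintind : Integrable
          (Set.indicator (Set.Ici (ENNReal.ofReal a)) (fun _ => (1:ℝ))) (ν t) :=
        (integrable_indicator_iff measurableSet_Ici).mpr
          (integrableOn_const (measure_ne_top _ _))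
      have hptw : ∀ p, Stmt10.phi a m p ≤
          Set.indicator (Set.Ici (ENNReal.ofReal a)) (fun _ => (1:ℝ)) p := by
        intro p
        by_cases hp : p ∈ Set.Ici (ENNReal.ofReal a)
        · rw [Set.indicator_of_mem hp]
          exact Stmt10.phi_le_one ham ha p
        · rw [Set.indicator_of_notMem hp,
            Stmt10.phi_zero_of_lt ham ha (Set.notMem_Ici.mp hp)]
      calc ∫ p, Stmt10.phi a m p ∂(ν t)
          ≤ ∫ p, Set.indicator (Set.Ici (ENNReal.ofReal a)) (fun _ => (1:ℝ)) p ∂(ν t) :=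
            integral_mono hφt hintind hptw
        _ = (ν t (Set.Ici (ENNReal.ofReal a))).toReal := by
            rw [integral_indicator_const _ measurableSet_Ici, smul_eq_mul, mul_one, measureReal_def]
    -- lower bound at time 0
    have hlow : (1 - ρ'') * (ν 0 (Set.Ici (ENNReal.ofReal R))).toReal
        ≤ ∫ p, Stmt10.phi a m p ∂(ν 0) := by
      have hintind : Integrable
          (Set.indicator (Set.Ici (ENNReal.ofReal R)) (fun _ => (1 - ρ''))) (ν 0) :=
        (integrable_indicator_iff measurableSet_Ici).mpr
          (integrableOn_const (measure_ne_top _ _))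
      have hptw : ∀ p, Set.indicator (Set.Ici (ENNReal.ofReal R)) (fun _ => (1 - ρ'')) p
          ≤ Stmt10.phi a m p := by
        intro p
        by_cases hp : p ∈ Set.Ici (ENNReal.ofReal R)
        · rw [Set.indicator_of_mem hp]
          by_cases hpt : p = ⊤
          · have h1 : Stmt10.phi a m p = 1 := by
              subst hpt; unfold Stmt10.phi; rw [if_pos rfl]
            rw [h1]; linarith
          · have hRp : R ≤ p.toReal := by
              have := hp
              rw [Set.mem_Ici] at this
              exact (ENNReal.ofReal_le_iff_le_toReal hpt).mp this
            have hmR : m ≤ R := by rw [hmdef]; nlinarith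
            have hpt0 : 0 < p.toReal := lt_of_lt_of_le hR hRp
            have h1 : Stmt10.phi a m p = (p.toReal - Stmt10.c a m) / p.toReal := by
              unfold Stmt10.phi
              rw [if_neg hpt, Stmt10.F_of_ge ham (le_trans hmR hRp)]
            rw [h1, le_div_iff₀ hpt0]
            have hc : Stmt10.c a m = (a + m) / 2 := rfl
            rw [hc, hadef, hmdef]
            nlinarith
        · rw [Set.indicator_of_notMem hp]
          exact Stmt10.phi_nonneg ham ha p
      calc (1 - ρ'') * (ν 0 (Set.Ici (ENNReal.ofReal R))).toReal
          = ∫ p, Set.indicator (Set.Ici (ENNReal.ofReal R)) (fun _ => (1 - ρ'')) p ∂(ν 0) := by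
            rw [integral_indicator_const _ measurableSet_Ici, smul_eq_mul, measureReal_def]
            ring
        _ ≤ ∫ p, Stmt10.phi a m p ∂(ν 0) := integral_mono hintind hφ0 hptw
    have hfin : (1 - ρ'') * (ν 0 (Set.Ici (ENNReal.ofReal R))).toReal
        ≤ (ν t (Set.Ici (ENNReal.ofReal a))).toReal :=
      le_trans hlow (le_trans (Stmt10.phi_integral_mono ham ha hsol ht) hup)
    have h1 := ENNReal.ofReal_le_ofReal hfin
    rw [ENNReal.ofReal_mul (by linarith : (0:ℝ) ≤ 1 - ρ''),
      ENNReal.ofReal_toReal (measure_ne_top _ _), ENNReal.ofReal_toReal (measure_ne_top _ _),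
      hsol.init] at h1
    exact h1
  -- pass to the limit ρ'' → ρ
  have htend : Tendsto (fun e : ℝ => ENNReal.ofReal (1 - ρ - e) *
      ν₀ (Set.Ici (ENNReal.ofReal R))) (𝓝[>] (0:ℝ))
      (𝓝 (ENNReal.ofReal (1 - ρ) * ν₀ (Set.Ici (ENNReal.ofReal R)))) := by
    have h1 : Tendsto (fun e : ℝ => (1 : ℝ) - ρ - e) (𝓝[>] (0:ℝ)) (𝓝 (1 - ρ)) := by
      have hcont : Continuous (fun e : ℝ => (1 : ℝ) - ρ - e) := by continuity
      have := (hcont.tendsto (0:ℝ)).mono_left (nhdsWithin_le_nhds (s := Set.Ioi (0:ℝ)))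
      simpa using this
    have h2 : Tendsto (fun e : ℝ => ENNReal.ofReal (1 - ρ - e)) (𝓝[>] (0:ℝ))
        (𝓝 (ENNReal.ofReal (1 - ρ))) :=
      (ENNReal.continuous_ofReal.tendsto _).comp h1
    exact ENNReal.Tendsto.mul_const h2 (Or.inr (measure_ne_top _ _))
  apply le_of_tendsto htend
  filter_upwards [Ioo_mem_nhdsGT_of_mem
    (Set.left_mem_Ico.mpr (by linarith : (0:ℝ) < 1 - ρ))] with e he
  have := key (ρ + e) (by linarith [he.1]) (by linarith [he.2])
  have hee : 1 - (ρ + e) = 1 - ρ - e := by ring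
  rw [hee] at this
  exact this
end
end

section
/- Let t ↦ ν(t) be a weak solution of the isotropic 3-wave kinetic equation for acoustic waves with initial datum ν₀ satisfying ν₀({0}) = 0. Then ν(t)({0}) = 0 for all t ∈ [0,∞); that is, no energy ever concentrates at the origin. -/
open MeasureTheory Filter Topology Real
open scoped ENNReal NNReal

noncomputable section

namespace S11

def phiR (ε x : ℝ) : ℝ := Real.exp (-(x/ε))
def gf (ε q : ℝ) : ℝ := q^3 * phiR ε q
def g1 (ε q : ℝ) : ℝ := (3*q^2 - q^3/ε) * phiR ε q
def g2 (ε q : ℝ) : ℝ := (6*q - 6*q^2/ε + q^3/ε^2) * phiR ε q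

variable {ε : ℝ}

lemma phiR_pos (x : ℝ) : 0 < phiR ε x := Real.exp_pos _
lemma phiR_le_one (hε : 0 < ε) {x : ℝ} (hx : 0 ≤ x) : phiR ε x ≤ 1 := by
  rw [phiR, Real.exp_le_one_iff]
  have : 0 ≤ x / ε := div_nonneg hx hε.le
  linarith
lemma phiR_anti (hε : 0 < ε) {x y : ℝ} (hxy : x ≤ y) : phiR ε y ≤ phiR ε x := by
  apply Real.exp_le_exp.2
  have : x/ε ≤ y/ε := by gcongr
  linarith

@[fun_prop] lemma phiR_cont : Continuous (phiR ε) := by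
  unfold phiR; fun_prop

/-- `x * exp(-(x/c)) ≤ c` -/
lemma mul_exp_le (hc : 0 < ε) {x : ℝ} (hx : 0 ≤ x) : x * phiR ε x ≤ ε := by
  have h1 : x / ε ≤ Real.exp (x/ε) := by linarith [Real.add_one_le_exp (x/ε)]
  have h2 : 0 < Real.exp (x/ε) := Real.exp_pos _
  have h3 : phiR ε x * Real.exp (x/ε) = 1 := by
    rw [phiR, ← Real.exp_add]; simp
  have hp := (phiR_pos (ε := ε) x).le
  have h4 : (x/ε) * phiR ε x ≤ 1 := by
    calc (x/ε) * phiR ε x ≤ Real.exp (x/ε) * phiR ε x := mul_le_mul_of_nonneg_right h1 hp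
    _ = 1 := by rw [mul_comm]; exact h3
  calc x * phiR ε x = ε * ((x/ε) * phiR ε x) := by field_simp
  _ ≤ ε * 1 := by gcongr
  _ = ε := mul_one _

/-- `x^2 * exp(-(x/c)) ≤ 4c^2` -/
lemma sq_exp_le (hc : 0 < ε) {x : ℝ} (hx : 0 ≤ x) : x^2 * phiR ε x ≤ 4*ε^2 := by
  have h := mul_exp_le (ε := 2*ε) (by linarith) hx
  have hsq : phiR ε x = phiR (2*ε) x * phiR (2*ε) x := by
    rw [phiR, phiR, ← Real.exp_add]; congr 1; field_simp; ring
  have h2 := (phiR_pos (ε := 2*ε) x).le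
  have heq : x^2 * phiR ε x = (x * phiR (2*ε) x)^2 := by rw [hsq]; ring
  rw [heq]
  calc (x * phiR (2*ε) x)^2 ≤ (2*ε)^2 := by
        apply pow_le_pow_left₀ (by positivity) h
  _ = 4*ε^2 := by ring

/-- `x^3 * exp(-(x/c)) ≤ 27c^3` -/
lemma cube_exp_le (hc : 0 < ε) {x : ℝ} (hx : 0 ≤ x) : x^3 * phiR ε x ≤ 27*ε^3 := by
  have h := mul_exp_le (ε := 3*ε) (by linarith) hx
  have hsq : phiR ε x = phiR (3*ε) x * phiR (3*ε) x * phiR (3*ε) x := by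
    rw [phiR, phiR, ← Real.exp_add, ← Real.exp_add]; congr 1; field_simp; ring
  have h2 := (phiR_pos (ε := 3*ε) x).le
  have heq : x^3 * phiR ε x = (x * phiR (3*ε) x)^3 := by rw [hsq]; ring
  rw [heq]
  calc (x * phiR (3*ε) x)^3 ≤ (3*ε)^3 := by
        apply pow_le_pow_left₀ (by positivity) h
  _ = 27*ε^3 := by ring

/-- splitting half the exponential -/
lemma phiR_eq_half (hc : 0 < ε) (x : ℝ) : phiR ε x = phiR (2*ε) x * phiR (2*ε) x := by
  rw [phiR, phiR, ← Real.exp_add]; congr 1; field_simp; ring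

lemma abs_g2_le (hc : 0 < ε) {q : ℝ} (hq : 0 ≤ q) : |g2 ε q| ≤ 57 * ε := by
  have h1 := mul_exp_le hc hq
  have h2 := sq_exp_le hc hq
  have h3 := cube_exp_le hc hq
  have hp := (phiR_pos (ε := ε) q).le
  have : |g2 ε q| ≤ (6*q + 6*q^2/ε + q^3/ε^2) * phiR ε q := by
    rw [g2, abs_mul, abs_of_nonneg hp]
    apply mul_le_mul_of_nonneg_right _ hp
    have h6 : 0 ≤ 6*q^2/ε := by positivity
    have h7 : 0 ≤ q^3/ε^2 := by positivity
    have h8 : 0 ≤ 6*q := by linarith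
    rw [abs_le]; constructor <;> nlinarith [abs_nonneg (6*q - 6*q^2/ε + q^3/ε^2)]
  calc |g2 ε q| ≤ (6*q + 6*q^2/ε + q^3/ε^2) * phiR ε q := this
  _ = 6*(q*phiR ε q) + 6*(q^2*phiR ε q)/ε + (q^3*phiR ε q)/ε^2 := by ring
  _ ≤ 6*ε + 6*(4*ε^2)/ε + (27*ε^3)/ε^2 := by
      gcongr <;> positivity
  _ = 57 * ε := by field_simp; ring

/-- local bound near 0 -/
lemma abs_g2_le_local (hc : 0 < ε) {q u : ℝ} (hq : 0 ≤ q) (hqu : q ≤ u) :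
    |g2 ε q| ≤ u * (6 + 6*u/ε + u^2/ε^2) := by
  have hp := (phiR_pos (ε := ε) q).le
  have hp1 := phiR_le_one hc hq
  have hu : 0 ≤ u := le_trans hq hqu
  have : |g2 ε q| ≤ (6*q + 6*q^2/ε + q^3/ε^2) * phiR ε q := by
    rw [g2, abs_mul, abs_of_nonneg hp]
    apply mul_le_mul_of_nonneg_right _ hp
    have h6 : 0 ≤ 6*q^2/ε := by positivity
    have h7 : 0 ≤ q^3/ε^2 := by positivity
    have h8 : 0 ≤ 6*q := by linarith
    rw [abs_le]; constructor <;> nlinarith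
  calc |g2 ε q| ≤ (6*q + 6*q^2/ε + q^3/ε^2) * phiR ε q := this
  _ ≤ (6*q + 6*q^2/ε + q^3/ε^2) * 1 := by
      apply mul_le_mul_of_nonneg_left hp1 (by positivity)
  _ = 6*q + 6*q^2/ε + q^3/ε^2 := mul_one _
  _ ≤ 6*u + 6*u^2/ε + u^3/ε^2 := by gcongr
  _ = u * (6 + 6*u/ε + u^2/ε^2) := by field_simp

/-- tail bound -/
lemma abs_g2_le_tail (hc : 0 < ε) {q : ℝ} (hq : 0 ≤ q) :
    |g2 ε q| ≤ 324 * ε * phiR (2*ε) q := by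
  have h2c : (0:ℝ) < 2*ε := by linarith
  have h1 := mul_exp_le h2c hq
  have h2 := sq_exp_le h2c hq
  have h3 := cube_exp_le h2c hq
  have hps := (phiR_pos (ε := 2*ε) q).le
  have hsplit := phiR_eq_half hc q
  have hb : |g2 ε q| ≤ (6*q + 6*q^2/ε + q^3/ε^2) * phiR ε q := by
    have hp := (phiR_pos (ε := ε) q).le
    rw [g2, abs_mul, abs_of_nonneg hp]
    apply mul_le_mul_of_nonneg_right _ hp
    have h6 : 0 ≤ 6*q^2/ε := by positivity
    have h7 : 0 ≤ q^3/ε^2 := by positivity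
    have h8 : 0 ≤ 6*q := by linarith
    rw [abs_le]; constructor <;> nlinarith
  calc |g2 ε q| ≤ (6*q + 6*q^2/ε + q^3/ε^2) * phiR ε q := hb
  _ = (6*(q * phiR (2*ε) q) + 6*(q^2 * phiR (2*ε) q)/ε + (q^3 * phiR (2*ε) q)/ε^2) * phiR (2*ε) q := by
      rw [hsplit]; ring
  _ ≤ (6*(2*ε) + 6*(4*(2*ε)^2)/ε + (27*(2*ε)^3)/ε^2) * phiR (2*ε) q := by
      gcongr
  _ = 324 * ε * phiR (2*ε) q := by field_simp; ring

/-- derivative facts -/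
lemma hasDeriv_phiR (hc : 0 < ε) (x : ℝ) :
    HasDerivAt (phiR ε) (-(1/ε) * phiR ε x) x := by
  have h : HasDerivAt (fun x : ℝ => -(x/ε)) (-(1/ε)) x := by
    simpa [Pi.neg_def] using ((hasDerivAt_id x).div_const ε).neg
  exact h.exp.congr_deriv (by rw [phiR]; ring)

lemma hasDeriv_gf (hc : 0 < ε) (q : ℝ) : HasDerivAt (gf ε) (g1 ε q) q := by
  have h1 : HasDerivAt (fun q : ℝ => q^3) (3*q^2) q := by
    simpa using hasDerivAt_pow 3 q
  have := h1.mul (hasDeriv_phiR hc q)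
  refine this.congr_deriv ?_
  rw [g1]; ring

lemma hasDeriv_g1 (hc : 0 < ε) (q : ℝ) : HasDerivAt (g1 ε) (g2 ε q) q := by
  have h1 : HasDerivAt (fun q : ℝ => 3*q^2 - q^3/ε) (6*q - 3*q^2/ε) q := by
    have ha : HasDerivAt (fun q : ℝ => 3*q^2) (3*(2*q)) q := by
      simpa using (hasDerivAt_pow 2 q).const_mul 3
    have hb : HasDerivAt (fun q : ℝ => q^3/ε) (3*q^2/ε) q := by
      simpa using (hasDerivAt_pow 3 q).div_const ε
    refine (ha.sub hb).congr_deriv ?_; ring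
  have := h1.mul (hasDeriv_phiR hc q)
  refine this.congr_deriv ?_
  rw [g2]; field_simp; ring

def Df (ε x y : ℝ) : ℝ := gf ε (x+y) + gf ε (x-y) - 2 * gf ε x

lemma Df_bound (hc : 0 < ε) (M : ℝ) {x y : ℝ} (hy : 0 ≤ y) (hyx : y ≤ x)
    (hM : ∀ q ∈ Set.Icc (x-y) (x+y), |g2 ε q| ≤ M) :
    |Df ε x y| ≤ 2*M*y^2 := by
  have hM0 : 0 ≤ M := le_trans (abs_nonneg _) (hM x ⟨by linarith, by linarith⟩)
  -- step 1
  have step1 : ∀ t ∈ Set.Icc (0:ℝ) y, |g1 ε (x+t) - g1 ε (x-t)| ≤ 2*M*y := by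
    intro t ht
    obtain ⟨ht0, hty⟩ := ht
    have key := Convex.norm_image_sub_le_of_norm_hasDerivWithin_le
      (f := g1 ε) (f' := g2 ε) (s := Set.Icc (x-y) (x+y)) (C := M)
      (fun q _ => (hasDeriv_g1 hc q).hasDerivWithinAt)
      (fun q hq => hM q hq) (convex_Icc _ _)
      (x := x - t) (y := x + t) ⟨by linarith, by linarith⟩ ⟨by linarith, by linarith⟩
    rw [Real.norm_eq_abs, Real.norm_eq_abs] at key
    have : |x + t - (x - t)| = 2*t := by rw [abs_of_nonneg (by linarith)]; ring
    rw [this] at key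
    calc |g1 ε (x+t) - g1 ε (x-t)| ≤ M * (2*t) := key
    _ ≤ 2*M*y := by nlinarith
  -- step 2
  have hD : ∀ t ∈ Set.Icc (0:ℝ) y, HasDerivWithinAt (fun t => Df ε x t)
      (g1 ε (x+t) - g1 ε (x-t)) (Set.Icc (0:ℝ) y) t := by
    intro t _
    have h1 : HasDerivAt (fun t : ℝ => gf ε (x+t)) (g1 ε (x+t)) t := by
      have := (hasDeriv_gf hc (x+t)).comp t ((hasDerivAt_id t).const_add x)
      simpa [Function.comp_def] using this
    have h2 : HasDerivAt (fun t : ℝ => gf ε (x-t)) (-(g1 ε (x-t))) t := by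
      have := (hasDeriv_gf hc (x-t)).comp t ((hasDerivAt_const t x).sub (hasDerivAt_id t))
      simpa [Function.comp_def] using this
    have h3 : HasDerivAt (fun t : ℝ => gf ε (x+t) + gf ε (x-t) - 2 * gf ε x)
        (g1 ε (x+t) - g1 ε (x-t)) t := by
      have := (h1.add h2).sub (hasDerivAt_const t (2 * gf ε x))
      refine this.congr_deriv ?_; ring
    exact h3.hasDerivWithinAt
  have key2 := Convex.norm_image_sub_le_of_norm_hasDerivWithin_le
    (f := fun t => Df ε x t) (f' := fun t => g1 ε (x+t) - g1 ε (x-t))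
    (s := Set.Icc (0:ℝ) y) (C := 2*M*y) hD
    (fun t ht => by rw [Real.norm_eq_abs]; exact step1 t ht)
    (convex_Icc _ _) (x := (0:ℝ)) (y := y) ⟨le_refl _, hy⟩ ⟨hy, le_refl _⟩
  rw [Real.norm_eq_abs, Real.norm_eq_abs] at key2
  have h0 : Df ε x 0 = 0 := by rw [Df]; simp; ring
  simp only [h0, sub_zero, abs_of_nonneg hy] at key2
  calc |Df ε x y| ≤ 2*M*y*y := key2
  _ = 2*M*y^2 := by ring

def qt (ε x y : ℝ) : ℝ := if x = 0 ∨ y = 0 then 0 else Df ε x y / (x*y)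
def rt (ε x y : ℝ) : ℝ := qt ε x y - 2*y*phiR ε x

lemma qt_glob (hc : 0 < ε) {x y : ℝ} (hy : 0 ≤ y) (hyx : y ≤ x) :
    |qt ε x y| ≤ 114*ε := by
  rcases eq_or_lt_of_le hy with h | hy0
  · rw [qt, if_pos (Or.inr h.symm)]; simp; positivity
  have hx0 : 0 < x := lt_of_lt_of_le hy0 hyx
  rw [qt, if_neg (by push_neg; exact ⟨ne_of_gt hx0, ne_of_gt hy0⟩)]
  have hD := Df_bound hc (57*ε) hy hyx
    (fun q hq => abs_g2_le hc (by cases hq; linarith))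
  rw [abs_div, abs_of_pos (by positivity : (0:ℝ) < x*y)]
  rw [div_le_iff₀ (by positivity)]
  have h5 : y^2 ≤ x*y := by nlinarith
  calc |Df ε x y| ≤ 2*(57*ε)*y^2 := hD
  _ ≤ 114*ε*(x*y) := by nlinarith [mul_le_mul_of_nonneg_left h5 (by positivity : (0:ℝ) ≤ 114*ε)]

lemma qt_loc (hc : 0 < ε) {x y : ℝ} (hy : 0 ≤ y) (hyx : y ≤ x) :
    |qt ε x y| ≤ 4*y*(6 + 12*x/ε + 4*x^2/ε^2) := by
  rcases eq_or_lt_of_le hy with h | hy0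
  · rw [qt, if_pos (Or.inr h.symm)]; simp [← h]
  have hx0 : 0 < x := lt_of_lt_of_le hy0 hyx
  rw [qt, if_neg (by push_neg; exact ⟨ne_of_gt hx0, ne_of_gt hy0⟩)]
  have hM : ∀ q ∈ Set.Icc (x-y) (x+y), |g2 ε q| ≤ (x+y) * (6 + 6*(x+y)/ε + (x+y)^2/ε^2) := by
    intro q hq
    exact abs_g2_le_local hc (by cases hq; linarith) (by cases hq; linarith)
  have hD := Df_bound hc _ hy hyx hM
  rw [abs_div, abs_of_pos (by positivity : (0:ℝ) < x*y)]
  rw [div_le_iff₀ (by positivity)]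
  have h1 : x + y ≤ 2*x := by linarith
  have h2 : (0:ℝ) ≤ x + y := by linarith
  have hmono : (x+y) * (6 + 6*(x+y)/ε + (x+y)^2/ε^2) ≤ (2*x) * (6 + 12*x/ε + 4*x^2/ε^2) := by
    calc (x+y) * (6 + 6*(x+y)/ε + (x+y)^2/ε^2)
        = 6*(x+y) + 6*(x+y)^2/ε + (x+y)^3/ε^2 := by field_simp
    _ ≤ 6*(2*x) + 6*(2*x)^2/ε + (2*x)^3/ε^2 := by gcongr <;> nlinarith
    _ = (2*x) * (6 + 12*x/ε + 4*x^2/ε^2) := by field_simp; ring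
  have hMnn : (0:ℝ) ≤ (x+y) * (6 + 6*(x+y)/ε + (x+y)^2/ε^2) := by positivity
  calc |Df ε x y| ≤ 2*((x+y) * (6 + 6*(x+y)/ε + (x+y)^2/ε^2))*y^2 := hD
  _ ≤ 2*((2*x) * (6 + 12*x/ε + 4*x^2/ε^2))*y^2 := by nlinarith [sq_nonneg y]
  _ ≤ 4*y*(6 + 12*x/ε + 4*x^2/ε^2)*(x*y) := le_of_eq (by ring)

lemma qt_tail (hc : 0 < ε) {x y : ℝ} (hx0 : 0 < x) (hy : 0 ≤ y) (hyx : y ≤ x) :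
    |qt ε x y| ≤ 648*ε*phiR (4*ε) x + 216*ε^3/x^2 := by
  have hphinn : (0:ℝ) ≤ 648*ε*phiR (4*ε) x := mul_nonneg (by positivity) (phiR_pos _).le
  rcases eq_or_lt_of_le hy with h | hy0
  · rw [qt, if_pos (Or.inr h.symm)]; simp
    have : (0:ℝ) ≤ 216*ε^3/x^2 := by positivity
    linarith
  rw [qt, if_neg (by push_neg; exact ⟨ne_of_gt hx0, ne_of_gt hy0⟩)]
  rw [abs_div, abs_of_pos (by positivity : (0:ℝ) < x*y)]
  rcases le_or_gt y (x/2) with hhalf | hhalf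
  · -- tail small y
    have hM : ∀ q ∈ Set.Icc (x-y) (x+y), |g2 ε q| ≤ 324*ε*phiR (4*ε) x := by
      intro q hq
      obtain ⟨hq1, hq2⟩ := hq
      have hq0 : 0 ≤ q := by linarith
      calc |g2 ε q| ≤ 324*ε*phiR (2*ε) q := abs_g2_le_tail hc hq0
      _ ≤ 324*ε*phiR (2*ε) (x/2) := by
          apply mul_le_mul_of_nonneg_left (phiR_anti (by linarith) (by linarith)) (by positivity)
      _ = 324*ε*phiR (4*ε) x := by
          rw [phiR, phiR]; congr 2; ring
    have hD := Df_bound hc _ hy hyx hM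
    have key : |Df ε x y| / (x*y) ≤ 648*ε*phiR (4*ε) x := by
      rw [div_le_iff₀ (by positivity)]
      have h5 : y^2 ≤ x*y := by nlinarith
      calc |Df ε x y| ≤ 2*(324*ε*phiR (4*ε) x)*y^2 := hD
      _ = 648*ε*phiR (4*ε) x*y^2 := by ring
      _ ≤ 648*ε*phiR (4*ε) x*(x*y) := by
          apply mul_le_mul_of_nonneg_left h5 hphinn
    have hpos : (0:ℝ) ≤ 216*ε^3/x^2 := by positivity
    linarith
  · -- y > x/2
    have hgf : ∀ q : ℝ, 0 ≤ q → |gf ε q| ≤ 27*ε^3 := by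
      intro q hq
      rw [gf, abs_mul, abs_of_nonneg (pow_nonneg hq 3), abs_of_pos (phiR_pos q)]
      exact cube_exp_le hc hq
    have hD : |Df ε x y| ≤ 108*ε^3 := by
      rw [Df]
      have h1 := hgf (x+y) (by linarith)
      have h2 := hgf (x-y) (by linarith)
      have h3 := hgf x (by linarith)
      calc |gf ε (x+y) + gf ε (x-y) - 2*gf ε x| ≤ |gf ε (x+y)| + |gf ε (x-y)| + 2*|gf ε x| := by
            have := abs_add_le (gf ε (x+y)) (gf ε (x-y))
            have h4 := abs_sub (gf ε (x+y) + gf ε (x-y)) (2*gf ε x)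
            rw [abs_mul] at h4
            simp at h4
            calc |gf ε (x+y) + gf ε (x-y) - 2*gf ε x| ≤ |gf ε (x+y) + gf ε (x-y)| + |2*gf ε x| := abs_sub _ _
            _ ≤ |gf ε (x+y)| + |gf ε (x-y)| + |2*gf ε x| := by linarith
            _ = |gf ε (x+y)| + |gf ε (x-y)| + 2*|gf ε x| := by rw [abs_mul]; simp
      _ ≤ 108*ε^3 := by linarith
    have key : |Df ε x y| / (x*y) ≤ 216*ε^3/x^2 := by
      rw [div_le_div_iff₀ (by positivity) (by positivity)]
      nlinarith [mul_le_mul_of_nonneg_right hD (sq_nonneg x),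
        mul_le_mul_of_nonneg_left (show x ≤ 2*y by linarith)
          (le_of_lt (mul_pos (pow_pos hc 3) hx0))]
    linarith

/-! ### Tail function and limits -/

def Wb (ε x : ℝ) : ℝ := 648*ε*phiR (4*ε) x + 216*ε^3/x^2 + 2*x*phiR ε x

lemma rt_tail (hc : 0 < ε) {x y : ℝ} (hx0 : 0 < x) (hy : 0 ≤ y) (hyx : y ≤ x) :
    |rt ε x y| ≤ Wb ε x := by
  have h1 := qt_tail hc hx0 hy hyx
  have h2 : |2*y*phiR ε x| ≤ 2*x*phiR ε x := by
    rw [abs_mul, abs_of_pos (phiR_pos x), abs_of_nonneg (by linarith : (0:ℝ) ≤ 2*y)]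
    apply mul_le_mul_of_nonneg_right (by linarith) (phiR_pos x).le
  calc |rt ε x y| ≤ |qt ε x y| + |2*y*phiR ε x| := abs_sub _ _
  _ ≤ Wb ε x := by rw [Wb]; linarith

lemma phiR_tendsto (hc : 0 < ε) : Tendsto (phiR ε) atTop (𝓝 0) := by
  apply Real.tendsto_exp_atBot.comp
  apply Filter.tendsto_neg_atTop_atBot.comp
  exact Filter.tendsto_id.atTop_div_const hc

lemma mul_phiR_tendsto (hc : 0 < ε) :
    Tendsto (fun x => x * phiR ε x) atTop (𝓝 0) := by
  apply squeeze_zero_norm' (a := fun x => 2*ε * phiR (2*ε) x)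
  · filter_upwards [eventually_ge_atTop (0:ℝ)] with x hx
    rw [Real.norm_eq_abs, abs_mul, abs_of_nonneg hx, abs_of_pos (phiR_pos x)]
    calc x * phiR ε x = (x * phiR (2*ε) x) * phiR (2*ε) x := by rw [phiR_eq_half hc]; ring
    _ ≤ 2*ε * phiR (2*ε) x := by
        apply mul_le_mul_of_nonneg_right (mul_exp_le (by linarith) hx) (phiR_pos x).le
  · have := (phiR_tendsto (ε := 2*ε) (by linarith)).const_mul (2*ε)
    simpa using this

lemma Wb_tendsto (hc : 0 < ε) : Tendsto (Wb ε) atTop (𝓝 0) := by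
  have h1 : Tendsto (fun x => 648*ε*phiR (4*ε) x) atTop (𝓝 0) := by
    have := (phiR_tendsto (ε := 4*ε) (by linarith)).const_mul (648*ε)
    simpa using this
  have h2 : Tendsto (fun x : ℝ => 216*ε^3/x^2) atTop (𝓝 0) := by
    have hinv : Tendsto (fun x : ℝ => (x^2)⁻¹) atTop (𝓝 0) :=
      (tendsto_pow_atTop (n := 2) (by norm_num)).inv_tendsto_atTop
    have := hinv.const_mul (216*ε^3)
    simpa [div_eq_mul_inv] using this
  have h3 : Tendsto (fun x => 2*x*phiR ε x) atTop (𝓝 0) := by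
    have := (mul_phiR_tendsto hc).const_mul 2
    simpa [mul_assoc] using this
  have := (h1.add h2).add h3
  simp at this; exact this

/-! ### Continuity of `rt` on the region -/

def Treg : Set (ℝ × ℝ) := {p | 0 ≤ p.2 ∧ p.2 ≤ p.1}

lemma rt_contOn (hc : 0 < ε) : ContinuousOn (fun p : ℝ × ℝ => rt ε p.1 p.2) Treg := by
  intro p hp
  obtain ⟨hy0, hyx⟩ := hp
  have hcontphi : Continuous fun p : ℝ × ℝ => 2*p.2*phiR ε p.1 :=
    (continuous_const.mul continuous_snd).mul (phiR_cont.comp continuous_fst)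
  rcases eq_or_lt_of_le hy0 with h | h
  · -- p.2 = 0
    have hval : rt ε p.1 p.2 = 0 := by
      rw [rt, qt, if_pos (Or.inr h.symm), ← h]; simp
    rw [ContinuousWithinAt, hval]
    have hqt : Tendsto (fun q : ℝ × ℝ => qt ε q.1 q.2) (𝓝[Treg] p) (𝓝 0) := by
      apply squeeze_zero_norm' (a := fun q : ℝ × ℝ => 4*q.2*(6 + 12*q.1/ε + 4*q.1^2/ε^2))
      · filter_upwards [self_mem_nhdsWithin] with q hq
        exact qt_loc hc hq.1 hq.2
      · have hcb : Continuous fun q : ℝ × ℝ => 4*q.2*(6 + 12*q.1/ε + 4*q.1^2/ε^2) := by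
          fun_prop
        have := (hcb.continuousWithinAt (s := Treg) (x := p)).tendsto
        rw [← h] at this
        simpa using this
    have h2 : Tendsto (fun q : ℝ × ℝ => 2*q.2*phiR ε q.1) (𝓝[Treg] p) (𝓝 0) := by
      have := (hcontphi.continuousWithinAt (s := Treg) (x := p)).tendsto
      rw [← h] at this
      simpa using this
    have := hqt.sub h2
    simpa [rt] using this
  · -- 0 < p.2
    apply ContinuousAt.continuousWithinAt
    have hx : 0 < p.1 := lt_of_lt_of_le h hyx
    have hev : ∀ᶠ q : ℝ × ℝ in 𝓝 p, qt ε q.1 q.2 = Df ε q.1 q.2 / (q.1*q.2) := by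
      have hU : IsOpen {q : ℝ × ℝ | 0 < q.1 ∧ 0 < q.2} :=
        (isOpen_lt continuous_const continuous_fst).inter (isOpen_lt continuous_const continuous_snd)
      filter_upwards [hU.mem_nhds ⟨hx, h⟩] with q hq
      rw [qt, if_neg (by push_neg; exact ⟨ne_of_gt hq.1, ne_of_gt hq.2⟩)]
    have hDf : Continuous fun q : ℝ × ℝ => Df ε q.1 q.2 := by
      unfold Df gf phiR
      fun_prop
    have hqt : ContinuousAt (fun q : ℝ × ℝ => qt ε q.1 q.2) p := by
      apply ContinuousAt.congr _ (by filter_upwards [hev] with q hq using hq.symm)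
      exact hDf.continuousAt.div (by fun_prop) (by positivity)
    exact hqt.sub hcontphi.continuousAt

/-! ### One-dimensional extension to `ℝ≥0∞` -/

def ext1 (h : ℝ → ℝ) (a : ℝ≥0∞) : ℝ := if a = ⊤ then 0 else h a.toReal

lemma ext1_ofReal (h : ℝ → ℝ) {p : ℝ} (hp : 0 ≤ p) :
    ext1 h (ENNReal.ofReal p) = h p := by
  rw [ext1, if_neg ENNReal.ofReal_ne_top, ENNReal.toReal_ofReal hp]

lemma ext1_cont {h : ℝ → ℝ} (hcont : Continuous h) (hlim : Tendsto h atTop (𝓝 0)) :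
    Continuous (ext1 h) := by
  rw [continuous_iff_continuousAt]
  intro a
  by_cases ha : a = ⊤
  · subst ha
    rw [ContinuousAt]
    have hval : ext1 h ⊤ = 0 := by rw [ext1, if_pos rfl]
    rw [hval, Metric.tendsto_nhds]
    intro δ hδ
    rw [Metric.tendsto_nhds] at hlim
    obtain ⟨N, hN⟩ := (hlim δ hδ).exists_forall_of_atTop
    have hmem : Set.Ioi (ENNReal.ofReal (max N 0)) ∈ 𝓝 (⊤ : ℝ≥0∞) :=
      IsOpen.mem_nhds isOpen_Ioi (by simp [ENNReal.ofReal_lt_top])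
    filter_upwards [hmem] with b hb
    by_cases hbt : b = ⊤
    · subst hbt; rw [ext1, if_pos rfl]; simpa using hδ
    · rw [ext1, if_neg hbt]
      have : max N 0 < b.toReal :=
        (ENNReal.ofReal_lt_iff_lt_toReal (le_max_right _ _) hbt).1 hb
      have := hN b.toReal (le_of_lt (lt_of_le_of_lt (le_max_left _ _) this))
      simpa using this
  · -- finite point
    have hmem : Set.Iio (⊤ : ℝ≥0∞) ∈ 𝓝 a := IsOpen.mem_nhds isOpen_Iio (lt_top_iff_ne_top.2 ha)
    apply ContinuousAt.congr ((hcont.continuousAt).comp (ENNReal.tendsto_toReal ha))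
    filter_upwards [hmem] with b hb
    rw [ext1, if_neg (ne_of_lt hb)]
    rfl

/-! ### The kernels on `ℝ≥0∞` -/

def phiE (ε : ℝ) : ℝ≥0∞ → ℝ := ext1 (phiR ε)

def R2 (ε : ℝ) (a b : ℝ≥0∞) : ℝ := if a = ⊤ then 0 else rt ε a.toReal b.toReal

def PsiH (ε x : ℝ) : ℝ := x * phiR ε x

def K1e (ε : ℝ) (a b : ℝ≥0∞) : ℝ := R2 ε a (min a b) - 4 * ext1 (PsiH ε) (min a b)

def K2e (ε : ℝ) : ℝ≥0∞ → ℝ := ext1 (fun x => 8*(x*(phiR ε (2*x) - phiR ε x)))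

def Sreg : Set (ℝ≥0∞ × ℝ≥0∞) := {q | q.2 ≤ q.1}

lemma R2_contOn (hc : 0 < ε) : ContinuousOn (fun q : ℝ≥0∞ × ℝ≥0∞ => R2 ε q.1 q.2) Sreg := by
  intro p hp
  by_cases ha : p.1 = ⊤
  · -- at infinity
    have hval : R2 ε p.1 p.2 = 0 := by rw [R2, if_pos ha]
    rw [ContinuousWithinAt, hval, Metric.tendsto_nhds]
    intro δ hδ
    obtain ⟨N, hN⟩ := ((Wb_tendsto hc).eventually (Metric.ball_mem_nhds (0:ℝ) hδ)).exists_forall_of_atTop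
    set N' : ℝ := max N 1 with hN'
    have hmem : {q : ℝ≥0∞ × ℝ≥0∞ | ENNReal.ofReal N' < q.1} ∈ 𝓝[Sreg] p := by
      apply nhdsWithin_le_nhds
      have : Set.Ioi (ENNReal.ofReal N') ∈ 𝓝 (p.1) := by
        apply IsOpen.mem_nhds isOpen_Ioi
        rw [ha]; exact ENNReal.ofReal_lt_top
      exact continuous_fst.continuousAt.preimage_mem_nhds this
    filter_upwards [hmem, self_mem_nhdsWithin] with q hq hqS
    by_cases hq1 : q.1 = ⊤
    · rw [R2, if_pos hq1]; simpa using hδ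
    · rw [R2, if_neg hq1]
      have hx : N' < q.1.toReal :=
        (ENNReal.ofReal_lt_iff_lt_toReal (le_trans zero_le_one (le_max_right _ _)) hq1).1 hq
      have hx0 : (0:ℝ) < q.1.toReal := lt_trans (lt_of_lt_of_le zero_lt_one (le_max_right _ _)) hx
      have hy0 : (0:ℝ) ≤ q.2.toReal := ENNReal.toReal_nonneg
      have hyx : q.2.toReal ≤ q.1.toReal := ENNReal.toReal_mono hq1 hqS
      have hb := rt_tail hc hx0 hy0 hyx
      have hW := hN q.1.toReal (le_of_lt (lt_of_le_of_lt (le_max_left _ _) hx))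
      have : |Wb ε q.1.toReal| < δ := by simpa [Real.dist_eq] using hW
      calc dist (rt ε q.1.toReal q.2.toReal) 0 = |rt ε q.1.toReal q.2.toReal| := by
            simp [Real.dist_eq]
      _ ≤ Wb ε q.1.toReal := hb
      _ ≤ |Wb ε q.1.toReal| := le_abs_self _
      _ < δ := this
  · -- finite point
    have hb : p.2 ≠ ⊤ := by
      intro hbt
      exact ha (top_le_iff.1 (hbt ▸ hp))
    have htr : Tendsto (fun q : ℝ≥0∞ × ℝ≥0∞ => (q.1.toReal, q.2.toReal))
        (𝓝[Sreg] p) (𝓝[Treg] (p.1.toReal, p.2.toReal)) := by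
      rw [tendsto_nhdsWithin_iff]
      constructor
      · apply Tendsto.prodMk_nhds
        · exact (ENNReal.tendsto_toReal ha).comp (continuous_fst.continuousAt.mono_left nhdsWithin_le_nhds)
        · exact (ENNReal.tendsto_toReal hb).comp (continuous_snd.continuousAt.mono_left nhdsWithin_le_nhds)
      · have hmem : {q : ℝ≥0∞ × ℝ≥0∞ | q.1 < ⊤} ∈ 𝓝[Sreg] p := by
          apply nhdsWithin_le_nhds
          exact continuous_fst.continuousAt.preimage_mem_nhds
            (IsOpen.mem_nhds isOpen_Iio (lt_top_iff_ne_top.2 ha))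
        filter_upwards [hmem, self_mem_nhdsWithin] with q hq hqS
        exact ⟨ENNReal.toReal_nonneg, ENNReal.toReal_mono (ne_of_lt hq) hqS⟩
    have hT : (p.1.toReal, p.2.toReal) ∈ Treg := by
      exact ⟨ENNReal.toReal_nonneg, ENNReal.toReal_mono ha hp⟩
    have hcomp := (rt_contOn hc (p.1.toReal, p.2.toReal) hT).tendsto.comp htr
    have hval : R2 ε p.1 p.2 = rt ε p.1.toReal p.2.toReal := by rw [R2, if_neg ha]
    rw [ContinuousWithinAt, hval]
    apply hcomp.congr'
    have hmem : {q : ℝ≥0∞ × ℝ≥0∞ | q.1 < ⊤} ∈ 𝓝[Sreg] p := by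
      apply nhdsWithin_le_nhds
      exact continuous_fst.continuousAt.preimage_mem_nhds
        (IsOpen.mem_nhds isOpen_Iio (lt_top_iff_ne_top.2 ha))
    filter_upwards [hmem] with q hq
    rw [Function.comp_apply, R2, if_neg (ne_of_lt hq)]

lemma PsiH_tendsto (hc : 0 < ε) : Tendsto (PsiH ε) atTop (𝓝 0) := mul_phiR_tendsto hc

lemma PsiH_cont : Continuous (PsiH ε) := continuous_id.mul phiR_cont

lemma ext1_PsiH_nonneg (hc : 0 < ε) (a : ℝ≥0∞) : 0 ≤ ext1 (PsiH ε) a := by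
  rw [ext1]
  split
  · exact le_refl 0
  · exact mul_nonneg ENNReal.toReal_nonneg (phiR_pos _).le

lemma K1e_cont (hc : 0 < ε) : Continuous (Function.uncurry (K1e ε)) := by
  have hmin : Continuous fun q : ℝ≥0∞ × ℝ≥0∞ => (q.1, min q.1 q.2) :=
    continuous_fst.prodMk (continuous_fst.min continuous_snd)
  have hmaps : ∀ q : ℝ≥0∞ × ℝ≥0∞, (q.1, min q.1 q.2) ∈ Sreg := fun q => show min q.1 q.2 ≤ q.1 from min_le_left _ _
  have h1 : Continuous fun q : ℝ≥0∞ × ℝ≥0∞ => R2 ε q.1 (min q.1 q.2) :=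
    (R2_contOn hc).comp_continuous hmin hmaps
  have h2 : Continuous fun q : ℝ≥0∞ × ℝ≥0∞ => ext1 (PsiH ε) (min q.1 q.2) :=
    (ext1_cont PsiH_cont (PsiH_tendsto hc)).comp (continuous_fst.min continuous_snd)
  exact h1.sub (continuous_const.mul h2)

lemma K1e_le (hc : 0 < ε) {a b : ℝ≥0∞} (hba : b < a) : K1e ε a b ≤ 114*ε := by
  have hmin : min a b = b := min_eq_right (le_of_lt hba)
  rw [K1e, hmin]
  have hpsi := ext1_PsiH_nonneg hc (ε := ε) b
  by_cases ha : a = ⊤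
  · rw [R2, if_pos ha]
    nlinarith
  · rw [R2, if_neg ha]
    have hb : b ≠ ⊤ := ne_top_of_lt hba
    have hyx : b.toReal ≤ a.toReal := ENNReal.toReal_mono ha (le_of_lt hba)
    have hq := qt_glob hc (ENNReal.toReal_nonneg (a := b)) hyx
    have hphi := (phiR_pos (ε := ε) a.toReal).le
    have : rt ε a.toReal b.toReal ≤ 114*ε := by
      rw [rt]
      have h2 : 0 ≤ 2*b.toReal*phiR ε a.toReal :=
        mul_nonneg (by positivity) hphi
      have := le_abs_self (qt ε a.toReal b.toReal)
      linarith
    linarith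

lemma toReal_ofReal_eq {p : ℝ} (hp : 0 ≤ p) : (ENNReal.ofReal p).toReal = p :=
  ENNReal.toReal_ofReal hp

lemma restr_phiE (hc : 0 < ε) {p : ℝ} (hp : 0 ≤ p) : restr (phiE ε) p = phiR ε p := by
  rw [restr, phiE, ext1_ofReal _ hp]

lemma K1e_eq (hc : 0 < ε) {p₁ p₂ : ℝ} (h2 : 0 < p₂) (h21 : p₂ < p₁) :
    K1e ε (ENNReal.ofReal p₁) (ENNReal.ofReal p₂)
      = H1 (restr (phiE ε)) p₁ p₂ / (p₁ * p₂) := by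
  have h1 : 0 < p₁ := lt_trans h2 h21
  have hmin : min (ENNReal.ofReal p₁) (ENNReal.ofReal p₂) = ENNReal.ofReal p₂ :=
    min_eq_right (ENNReal.ofReal_le_ofReal (le_of_lt h21))
  rw [K1e, hmin, R2, if_neg ENNReal.ofReal_ne_top, toReal_ofReal_eq h1.le,
    toReal_ofReal_eq h2.le, ext1_ofReal _ h2.le]
  have hr1 : restr (phiE ε) (p₁ + p₂) = phiR ε (p₁ + p₂) := restr_phiE hc (by linarith)
  have hr2 : restr (phiE ε) p₁ = phiR ε p₁ := restr_phiE hc h1.le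
  have hr3 : restr (phiE ε) p₂ = phiR ε p₂ := restr_phiE hc h2.le
  have hr4 : restr (phiE ε) (p₁ - p₂) = phiR ε (p₁ - p₂) := restr_phiE hc (by linarith)
  rw [H1, hr1, hr2, hr3, hr4, rt, qt, if_neg (by push_neg; exact ⟨ne_of_gt h1, ne_of_gt h2⟩),
    Df, gf, gf, gf, PsiH]
  field_simp
  ring

lemma K2e_cont (hc : 0 < ε) : Continuous (K2e ε) := by
  apply ext1_cont
  · have : Continuous fun x : ℝ => phiR ε (2*x) := phiR_cont.comp (continuous_const.mul continuous_id)
    exact continuous_const.mul (continuous_id.mul (this.sub phiR_cont))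
  · have hhalf : ∀ x : ℝ, phiR ε (2*x) = phiR (ε/2) x := by
      intro x; rw [phiR, phiR]; congr 1; rw [div_div_eq_mul_div]; ring
    have h1 : Tendsto (fun x : ℝ => x * phiR ε (2*x)) atTop (𝓝 0) := by
      simp only [hhalf]
      exact mul_phiR_tendsto (by linarith)
    have h2 := mul_phiR_tendsto hc
    have := (h1.sub h2).const_mul (8:ℝ)
    simp only [mul_sub] at this ⊢
    simpa [mul_sub] using this

lemma K2e_nonpos (hc : 0 < ε) (a : ℝ≥0∞) : K2e ε a ≤ 0 := by
  rw [K2e, ext1]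
  split
  · exact le_refl 0
  · have hx : (0:ℝ) ≤ a.toReal := ENNReal.toReal_nonneg
    have := phiR_anti (ε := ε) hc (show a.toReal ≤ 2*a.toReal by linarith)
    nlinarith

lemma K2e_eq (hc : 0 < ε) {p : ℝ} (hp : 0 < p) :
    K2e ε (ENNReal.ofReal p) = H2 (restr (phiE ε)) p p / (p * p) := by
  rw [K2e, ext1_ofReal _ hp.le, H2]
  have hr1 : restr (phiE ε) (p + p) = phiR ε (p + p) := restr_phiE hc (by linarith)
  have hr2 : restr (phiE ε) p = phiR ε p := restr_phiE hc hp.le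
  rw [hr1, hr2]
  have : phiR ε (2*p) = phiR ε (p + p) := by rw [phiR, phiR]; congr 1; ring
  rw [this]
  field_simp
  ring

lemma phiE_cont (hc : 0 < ε) : Continuous (phiE ε) := ext1_cont phiR_cont (phiR_tendsto hc)

lemma phiE_nonneg (a : ℝ≥0∞) : 0 ≤ phiE ε a := by
  rw [phiE, ext1]; split
  · exact le_refl 0
  · exact (phiR_pos _).le

lemma phiE_le_one (hc : 0 < ε) (a : ℝ≥0∞) : phiE ε a ≤ 1 := by
  rw [phiE, ext1]; split
  · exact zero_le_one
  · exact phiR_le_one hc ENNReal.toReal_nonneg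

lemma phiE_zero (hc : 0 < ε) : phiE ε 0 = 1 := by
  rw [phiE, ext1, if_neg (by simp), ENNReal.toReal_zero, phiR]
  simp

/-! ### Extension properties -/

lemma isH1Ext_phiE (hc : 0 < ε) : IsH1Ext (phiE ε) (K1e ε) :=
  ⟨K1e_cont hc, fun _ _ h2 h21 => K1e_eq hc h2 h21⟩

lemma isH2Ext_phiE (hc : 0 < ε) : IsH2Ext (phiE ε) (K2e ε) :=
  ⟨K2e_cont hc, fun _ hp => K2e_eq hc hp⟩

lemma isH1Ext_one : IsH1Ext (fun _ => (1:ℝ)) (fun _ _ => 0) := by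
  refine ⟨continuous_const, fun p₁ p₂ h2 h21 => ?_⟩
  have : H1 (restr fun _ => (1:ℝ)) p₁ p₂ = 0 := by
    simp only [H1, restr]; ring
  rw [this, zero_div]

lemma isH2Ext_one : IsH2Ext (fun _ => (1:ℝ)) (fun _ => 0) := by
  refine ⟨continuous_const, fun p hp => ?_⟩
  have : H2 (restr fun _ => (1:ℝ)) p p = 0 := by
    simp only [H2, restr]; ring
  rw [this, zero_div]

/-! ### Collision integral bounds -/

lemma collInt_zero (μ : Measure ℝ≥0∞) :
    collInt μ (fun _ _ => 0) (fun _ => 0) = 0 := by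
  rw [collInt]
  simp

lemma collInt_le (hc : 0 < ε) (μ : Measure ℝ≥0∞) [IsFiniteMeasure μ] :
    collInt μ (K1e ε) (K2e ε) ≤ 228*ε*(μ Set.univ).toReal^2 := by
  set m := (μ Set.univ).toReal with hm
  have hm0 : 0 ≤ m := ENNReal.toReal_nonneg
  have hinner : ∀ p₁ : ℝ≥0∞, (∫ p₂, (if p₂ < p₁ then K1e ε p₁ p₂ else 0) ∂μ) ≤ 114*ε*m := by
    intro p₁
    by_cases hI : Integrable (fun p₂ => if p₂ < p₁ then K1e ε p₁ p₂ else 0) μ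
    · have hpt : (fun p₂ => if p₂ < p₁ then K1e ε p₁ p₂ else 0) ≤ fun _ => 114*ε := by
        intro p₂
        dsimp only
        split
        · exact K1e_le hc (by assumption)
        · positivity
      calc (∫ p₂, (if p₂ < p₁ then K1e ε p₁ p₂ else 0) ∂μ)
          ≤ ∫ _, (114*ε : ℝ) ∂μ := integral_mono hI (integrable_const _) hpt
      _ = m * (114*ε) := by rw [integral_const, smul_eq_mul, measureReal_def]
      _ ≤ 114*ε*m := le_of_eq (by ring)
    · rw [integral_undef hI]; positivity
  have houter : (∫ p₁, (∫ p₂, (if p₂ < p₁ then K1e ε p₁ p₂ else 0) ∂μ) ∂μ) ≤ 114*ε*m^2 := by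
    by_cases hI : Integrable (fun p₁ => ∫ p₂, (if p₂ < p₁ then K1e ε p₁ p₂ else 0) ∂μ) μ
    · calc (∫ p₁, (∫ p₂, (if p₂ < p₁ then K1e ε p₁ p₂ else 0) ∂μ) ∂μ)
          ≤ ∫ _, (114*ε*m : ℝ) ∂μ := integral_mono hI (integrable_const _) (fun p₁ => hinner p₁)
      _ = m * (114*ε*m) := by rw [integral_const, smul_eq_mul, measureReal_def]
      _ ≤ 114*ε*m^2 := le_of_eq (by ring)
    · rw [integral_undef hI]; positivity
  have hdiag : (∫ p₁, (∫ p₂, (if p₁ = p₂ then K2e ε p₁ else 0) ∂μ) ∂μ) ≤ 0 := by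
    apply integral_nonpos
    intro p₁
    apply integral_nonpos
    intro p₂
    dsimp only
    split
    · exact K2e_nonpos hc p₁
    · exact le_refl 0
  rw [collInt]
  nlinarith

end S11

/-- for every weak solution with `ν₀({0}) = 0`, no energy ever concentrates
at the origin: `ν(t)({0}) = 0` for all `t ≥ 0`. -/
theorem statement11 (ν₀ : Measure ℝ≥0∞) [IsFiniteMeasure ν₀]
    (ν : ℝ → Measure ℝ≥0∞) (hsol : IsWeakSolution ν ν₀)
    (h0 : ν₀ {0} = 0) :
    ∀ t : ℝ, 0 ≤ t → ν t {0} = 0 := by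
  have hfin := hsol.finite
  have hinit := hsol.init
  -- conservation of total mass
  have hone : ∀ t : ℝ, 0 ≤ t → (ν t Set.univ).toReal = (ν₀ Set.univ).toReal := by
    intro t ht
    have hwk := hsol.eqn (fun _ => ContinuousMap.const ℝ≥0∞ (1:ℝ)) (fun _ => 0)
      (fun s => hasDerivAt_const s _) continuous_const
    have hid := hwk t ht (fun _ => fun _ _ => 0) (fun _ => fun _ => 0)
      (fun s _ => S11.isH1Ext_one) (fun s _ => S11.isH2Ext_one)
    simp only [ContinuousMap.const_apply, ContinuousMap.zero_apply, S11.collInt_zero,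
      integral_zero, zero_add, intervalIntegral.integral_zero] at hid
    haveI := hfin t; haveI := hfin 0
    rw [integral_const, integral_const, smul_eq_mul, smul_eq_mul, mul_one, mul_one, hinit, measureReal_def, measureReal_def] at hid
    linarith
  set m := (ν₀ Set.univ).toReal with hm
  have hm0 : 0 ≤ m := ENNReal.toReal_nonneg
  -- the key Gronwall-free estimate
  have key : ∀ ε : ℝ, 0 < ε → ∀ t : ℝ, 0 ≤ t →
      (∫ p, S11.phiE ε p ∂ν t) ≤ (∫ p, S11.phiE ε p ∂ν₀) + 228*ε*m^2*t := by
    intro ε hc t ht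
    have hwk := hsol.eqn (fun _ => ⟨S11.phiE ε, S11.phiE_cont hc⟩) (fun _ => 0)
      (fun s => hasDerivAt_const s _) continuous_const
    have hid := hwk t ht (fun _ => S11.K1e ε) (fun _ => S11.K2e ε)
      (fun s _ => S11.isH1Ext_phiE hc) (fun s _ => S11.isH2Ext_phiE hc)
    simp only [ContinuousMap.coe_mk, ContinuousMap.zero_apply, integral_zero, zero_add] at hid
    have hbound : (∫ s in (0:ℝ)..t, collInt (ν s) (S11.K1e ε) (S11.K2e ε)) ≤ 228*ε*m^2*t := by
      by_cases hI : IntervalIntegrable (fun s => collInt (ν s) (S11.K1e ε) (S11.K2e ε))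
        MeasureTheory.volume 0 t
      · calc (∫ s in (0:ℝ)..t, collInt (ν s) (S11.K1e ε) (S11.K2e ε))
            ≤ ∫ _ in (0:ℝ)..t, (228*ε*m^2 : ℝ) := by
              apply intervalIntegral.integral_mono_on ht hI (intervalIntegrable_const)
              intro s hs
              haveI := hfin s
              have hcoll := S11.collInt_le hc (ν s)
              rwa [hone s hs.1] at hcoll
        _ = 228*ε*m^2*t := by rw [intervalIntegral.integral_const, smul_eq_mul]; ring
      · rw [intervalIntegral.integral_undef hI]; positivity
    rw [hinit] at hid
    linarith
  intro t ht
  haveI := hfin t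
  -- the measure of {0} is below the integral of the test function
  have hind : ∀ ε : ℝ, 0 < ε → (ν t {0}).toReal ≤ ∫ p, S11.phiE ε p ∂ν t := by
    intro ε hc
    have hint : Integrable (S11.phiE ε) (ν t) := by
      apply Integrable.mono' (integrable_const (1:ℝ)) ((S11.phiE_cont hc).aestronglyMeasurable)
      filter_upwards with p
      rw [Real.norm_eq_abs, abs_of_nonneg (S11.phiE_nonneg p)]
      exact S11.phiE_le_one hc p
    have h1 : (∫ p, Set.indicator {0} (fun _ => (1:ℝ)) p ∂ν t) = (ν t {0}).toReal := by
      rw [integral_indicator_const (1:ℝ) (measurableSet_singleton 0), smul_eq_mul, mul_one, measureReal_def]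
    rw [← h1]
    apply integral_mono ((integrable_const (1:ℝ)).indicator (measurableSet_singleton 0)) hint
    intro p
    by_cases hp : p = 0
    · subst hp
      rw [Set.indicator_of_mem (Set.mem_singleton 0), S11.phiE_zero hc]
    · rw [Set.indicator_of_notMem (by simpa using hp)]
      exact S11.phiE_nonneg p
  -- pass to the limit ε = 1/(n+1) → 0
  have hpos : ∀ n : ℕ, (0:ℝ) < 1/((n:ℝ)+1) := fun n => by positivity
  have hDCT : Tendsto (fun n : ℕ => ∫ p, S11.phiE (1/((n:ℝ)+1)) p ∂ν₀) atTop
      (𝓝 (∫ p, Set.indicator {0} (fun _ => (1:ℝ)) p ∂ν₀)) := by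
    apply tendsto_integral_of_dominated_convergence (fun _ => (1:ℝ))
    · intro n; exact (S11.phiE_cont (hpos n)).aestronglyMeasurable
    · exact integrable_const 1
    · intro n; filter_upwards with p
      rw [Real.norm_eq_abs, abs_of_nonneg (S11.phiE_nonneg p)]
      exact S11.phiE_le_one (hpos n) p
    · filter_upwards with p
      rcases eq_or_ne p 0 with hp | hp
      · subst hp
        have heq : (fun n : ℕ => S11.phiE (1/((n:ℝ)+1)) 0) = fun _ => (1:ℝ) :=
          funext fun n => S11.phiE_zero (hpos n)
        rw [Set.indicator_of_mem (Set.mem_singleton 0), heq]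
        exact tendsto_const_nhds
      · rw [Set.indicator_of_notMem (by simpa using hp)]
        by_cases htop : p = ⊤
        · subst htop
          have heq : (fun n : ℕ => S11.phiE (1/((n:ℝ)+1)) ⊤) = fun _ => (0:ℝ) :=
            funext fun n => by rw [S11.phiE, S11.ext1, if_pos rfl]
          rw [heq]
          exact tendsto_const_nhds
        · have hx : 0 < p.toReal := ENNReal.toReal_pos hp htop
          have heq : (fun n : ℕ => S11.phiE (1/((n:ℝ)+1)) p)
              = fun n : ℕ => Real.exp (-(p.toReal*((n:ℝ)+1))) := by
            funext n
            rw [S11.phiE, S11.ext1, if_neg htop, S11.phiR]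
            congr 1
            rw [one_div]
            field_simp
          rw [heq]
          have h1 : Tendsto (fun n : ℕ => p.toReal*((n:ℝ)+1)) atTop atTop := by
            apply Tendsto.const_mul_atTop hx
            exact tendsto_atTop_add_const_right _ 1 tendsto_natCast_atTop_atTop
          exact Real.tendsto_exp_atBot.comp (tendsto_neg_atTop_atBot.comp h1)
  have h2 : (∫ p, Set.indicator {0} (fun _ => (1:ℝ)) p ∂ν₀) = 0 := by
    rw [integral_indicator_const (1:ℝ) (measurableSet_singleton 0), measureReal_def, h0]
    simp
  rw [h2] at hDCT
  have hconst : Tendsto (fun n : ℕ => 228*(1/((n:ℝ)+1))*m^2*t) atTop (𝓝 0) := by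
    have heqf : (fun n : ℕ => 228*(1/((n:ℝ)+1))*m^2*t)
        = fun n : ℕ => (228*m^2*t) * (1/((n:ℝ)+1)) := by
      funext n; ring
    rw [heqf]
    have h3 := tendsto_one_div_add_atTop_nhds_zero_nat.const_mul (228*m^2*t)
    simpa using h3
  have hseq : Tendsto (fun n : ℕ =>
      (∫ p, S11.phiE (1/((n:ℝ)+1)) p ∂ν₀) + 228*(1/((n:ℝ)+1))*m^2*t) atTop (𝓝 0) := by
    have := hDCT.add hconst
    simpa using this
  have hfinal : (ν t {0}).toReal ≤ 0 := by
    apply ge_of_tendsto' hseq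
    intro n
    calc (ν t {0}).toReal ≤ ∫ p, S11.phiE (1/((n:ℝ)+1)) p ∂ν t := hind _ (hpos n)
    _ ≤ (∫ p, S11.phiE (1/((n:ℝ)+1)) p ∂ν₀) + 228*(1/((n:ℝ)+1))*m^2*t := key _ (hpos n) t ht
  have hzero : (ν t {0}).toReal = 0 := le_antisymm hfinal ENNReal.toReal_nonneg
  rcases (ENNReal.toReal_eq_zero_iff _).1 hzero with h | h
  · exact h
  · exact absurd h (measure_ne_top _ _)
end
end
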